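/- arXiv:2602.17983 — 10 statements merged into one kernel-verified Lean document; each statement's English description precedes it below -/
import Mathlib

section
/- Let P be an r-saturated weakly graded poset whose rank map r takes values between 1 and n. Assume: (1) for each p ∈ P with r(p) = n, the subposet P_{<p} = {q ∈ P : q < p} is bowtie free; and (2) every quasi-bowtie x₁y₁x₂y₂ in P with r(x₁) = r(x₂) < r(y₁) = r(y₂) = n has a center. Then P is bowtie free. -/
/-- A poset is *bowtie free* if every quasi-bowtie `x₁ y₁ x₂ y₂` (i.e. `xᵢ < y_j` for all
`i, j ∈ {1,2}`) has a *center*, i.e. an element `z` with `xᵢ ≤ z ≤ y_j` for all `i, j`. -/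
def BowtieFree (P : Type*) [PartialOrder P] : Prop :=
  ∀ x₁ y₁ x₂ y₂ : P, x₁ < y₁ → x₁ < y₂ → x₂ < y₁ → x₂ < y₂ →
    ∃ z : P, x₁ ≤ z ∧ x₂ ≤ z ∧ z ≤ y₁ ∧ z ≤ y₂

/-- A weakly graded poset `P` with rank map `r` taking values between `1` and `n` is
*r-saturated* if for every `p ∈ P` and all integers `m₁, m₂` with `n ≥ m₁ > r p > m₂ ≥ 1`,
there exist `p₁ ≥ p ≥ p₂` with `r p₁ = m₁` and `r p₂ = m₂`. -/
def RSaturated {P : Type*} [PartialOrder P] (r : P → ℤ) (n : ℤ) : Prop :=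
  ∀ (p : P) (m₁ m₂ : ℤ), m₁ ≤ n → r p < m₁ → m₂ < r p → 1 ≤ m₂ →
    ∃ p₁ p₂ : P, p ≤ p₁ ∧ p₂ ≤ p ∧ r p₁ = m₁ ∧ r p₂ = m₂

/-- Let `P` be an `r`-saturated weakly graded poset whose rank map `r`
takes values between `1` and `n`.  Assume (1) for each `p` of rank `n`, the subposet
`P_{<p}` is bowtie free; and (2) every quasi-bowtie `x₁ y₁ x₂ y₂` with
`r x₁ = r x₂ < r y₁ = r y₂ = n` has a center.  Then `P` is bowtie free. -/
theorem bowtieFree_of_saturated {P : Type*} [PartialOrder P] (n : ℤ) (r : P → ℤ)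
    (hmono : StrictMono r) (hlo : ∀ p : P, 1 ≤ r p) (hhi : ∀ p : P, r p ≤ n)
    (hsat : RSaturated r n)
    (h1 : ∀ p : P, r p = n → BowtieFree {q : P // q < p})
    (h2 : ∀ x₁ y₁ x₂ y₂ : P, x₁ < y₁ → x₁ < y₂ → x₂ < y₁ → x₂ < y₂ →
      r x₁ = r x₂ → r x₁ < r y₁ → r y₁ = r y₂ → r y₂ = n →
      ∃ z : P, x₁ ≤ z ∧ x₂ ≤ z ∧ z ≤ y₁ ∧ z ≤ y₂) :
    BowtieFree P := by
  -- Phase A: bowties whose two tops have rank `n` have a center.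
  have keyA : ∀ k : ℕ, ∀ x₁ x₂ y₁ y₂ : P,
      (2 * n - r x₁ - r x₂).toNat ≤ k →
      x₁ < y₁ → x₁ < y₂ → x₂ < y₁ → x₂ < y₂ → r y₁ = n → r y₂ = n →
      ∃ z : P, x₁ ≤ z ∧ x₂ ≤ z ∧ z ≤ y₁ ∧ z ≤ y₂ := by
    intro k
    induction k with
    | zero =>
      intro x₁ x₂ y₁ y₂ hk h11 h12 h21 h22 hy1 hy2
      exfalso
      have e1 : r x₁ < r y₁ := hmono h11
      have e2 : r x₂ < r y₁ := hmono h21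
      omega
    | succ k ih =>
      intro x₁ x₂ y₁ y₂ hk h11 h12 h21 h22 hy1 hy2
      by_cases hle12 : x₁ ≤ x₂
      · exact ⟨x₂, hle12, le_refl _, h21.le, h22.le⟩
      by_cases hle21 : x₂ ≤ x₁
      · exact ⟨x₁, le_refl _, hle21, h11.le, h12.le⟩
      have hsum : r x₁ + r x₂ = r x₁ + r x₂ := rfl
      -- the asymmetric step: `r a < r b`
      have main : ∀ a b : P, ¬ a ≤ b → (2 * n - r a - r b).toNat ≤ k + 1 →
          r a < r b → a < y₁ → a < y₂ → b < y₁ → b < y₂ →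
          ∃ z : P, a ≤ z ∧ b ≤ z ∧ z ≤ y₁ ∧ z ≤ y₂ := by
        intro a b hab hk' hr ha1 ha2 hb1 hb2
        have hbn : r b < n := by have := hmono hb1; omega
        obtain ⟨p₁, b', -, hb'le, -, hb'r⟩ :=
          hsat b n (r a) le_rfl hbn hr (hlo a)
        obtain ⟨w, hwa, hwb', hwy1, hwy2⟩ :=
          h2 a y₁ b' y₂ ha1 ha2 (lt_of_le_of_lt hb'le hb1) (lt_of_le_of_lt hb'le hb2)
            hb'r.symm (hmono ha1) (hy1.trans hy2.symm) hy2
        by_cases hwe1 : w = y₁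
        · exact ⟨y₁, ha1.le, hb1.le, le_refl _, hwe1 ▸ hwy2⟩
        by_cases hwe2 : w = y₂
        · exact ⟨y₂, ha2.le, hb2.le, hwe2 ▸ hwy1, le_refl _⟩
        have hwy1' : w < y₁ := lt_of_le_of_ne hwy1 hwe1
        have hwy2' : w < y₂ := lt_of_le_of_ne hwy2 hwe2
        have hraw : r a ≤ r w := by
          have := hb'r ▸ (hmono.monotone hwb'); exact this
        rcases eq_or_lt_of_le hraw with heq | hlt
        · -- then b' = w and a = b', so a ≤ b, contradiction
          exfalso
          have hb'w : b' = w := by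
            rcases eq_or_lt_of_le hwb' with h | h
            · exact h
            · exact absurd (hmono h) (by omega)
          have haw : a = w := by
            rcases eq_or_lt_of_le hwa with h | h
            · exact h
            · exact absurd (hmono h) (by omega)
          exact hab (haw.trans hb'w.symm ▸ hb'le)
        · obtain ⟨z, hz1, hz2, hz3, hz4⟩ :=
            ih b w y₁ y₂ (by omega) hb1 hb2 hwy1' hwy2' hy1 hy2
          exact ⟨z, hwa.trans hz2, hz1, hz3, hz4⟩
      rcases lt_trichotomy (r x₁) (r x₂) with hr | hr | hr
      · exact main x₁ x₂ hle12 (by omega) hr h11 h12 h21 h22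
      · exact h2 x₁ y₁ x₂ y₂ h11 h12 h21 h22 hr (hmono h11)
          (hy1.trans hy2.symm) hy2
      · obtain ⟨z, hz1, hz2, hz3, hz4⟩ :=
          main x₂ x₁ hle21 (by omega) hr h21 h22 h11 h12
        exact ⟨z, hz2, hz1, hz3, hz4⟩
  -- lifting to rank n
  have lift : ∀ y : P, (∃ x : P, x < y) → ∃ yh : P, y ≤ yh ∧ r yh = n := by
    intro y ⟨x, hx⟩
    by_cases h : r y = n
    · exact ⟨y, le_refl _, h⟩
    · obtain ⟨p₁, p₂, hp₁, -, hr₁, -⟩ :=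
        hsat y n (r x) le_rfl (lt_of_le_of_ne (hhi y) h) (hmono hx) (hlo x)
      exact ⟨p₁, hp₁, hr₁⟩
  -- Phase B
  intro x₁ y₁ x₂ y₂ h11 h12 h21 h22
  obtain ⟨Y₁, hY₁le, hY₁r⟩ := lift y₁ ⟨x₁, h11⟩
  obtain ⟨Y₂, hY₂le, hY₂r⟩ := lift y₂ ⟨x₁, h12⟩
  obtain ⟨w, hw1, hw2, hwY1, hwY2⟩ :=
    keyA (2 * n - r x₁ - r x₂).toNat x₁ x₂ Y₁ Y₂ le_rfl
      (lt_of_lt_of_le h11 hY₁le) (lt_of_lt_of_le h12 hY₂le)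
      (lt_of_lt_of_le h21 hY₁le) (lt_of_lt_of_le h22 hY₂le) hY₁r hY₂r
  -- trivial cases: w equals one of the bottoms
  by_cases hwx1 : x₁ = w
  · exact ⟨x₁, le_refl _, hwx1 ▸ hw2, h11.le, h12.le⟩
  by_cases hwx2 : x₂ = w
  · exact ⟨x₂, hwx2 ▸ hw1, le_refl _, h21.le, h22.le⟩
  have hx1w : x₁ < w := lt_of_le_of_ne hw1 hwx1
  have hx2w : x₂ < w := lt_of_le_of_ne hw2 hwx2
  -- a helper: if some rank-n element lies strictly above both y₁ and y₂, we are done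
  have finish : ∀ p : P, r p = n → y₁ < p → y₂ < p →
      ∃ z : P, x₁ ≤ z ∧ x₂ ≤ z ∧ z ≤ y₁ ∧ z ≤ y₂ := by
    intro p hp hy1p hy2p
    obtain ⟨z, hz1, hz2, hz3, hz4⟩ :=
      h1 p hp ⟨x₁, h11.trans hy1p⟩ ⟨y₁, hy1p⟩ ⟨x₂, h21.trans hy1p⟩ ⟨y₂, hy2p⟩
        (Subtype.mk_lt_mk.mpr h11) (Subtype.mk_lt_mk.mpr h12)
        (Subtype.mk_lt_mk.mpr h21) (Subtype.mk_lt_mk.mpr h22)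
    exact ⟨z.val, hz1, hz2, hz3, hz4⟩
  -- Step 1: produce u with x₁ ≤ u, x₂ ≤ u, u ≤ y₁, u ≤ Y₂
  have step1 : (∃ u : P, x₁ ≤ u ∧ x₂ ≤ u ∧ u ≤ y₁ ∧ u ≤ Y₂) ∨
      (∃ z : P, x₁ ≤ z ∧ x₂ ≤ z ∧ z ≤ y₁ ∧ z ≤ y₂) := by
    by_cases hwy1 : w ≤ y₁
    · exact Or.inl ⟨w, hw1, hw2, hwy1, hwY2⟩
    have hy1Y1 : y₁ < Y₁ := by
      rcases eq_or_lt_of_le hY₁le with h | h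
      · exact absurd (h ▸ hwY1) hwy1
      · exact h
    by_cases hwY1e : w = Y₁
    · -- then Y₁ ≤ Y₂; everything is below Y₂ (or y₂ = Y₂ forces y₁ ≤ y₂)
      have hY1Y2 : Y₁ ≤ Y₂ := hwY1e ▸ hwY2
      by_cases hy2e : y₂ = Y₂
      · -- y₁ < Y₁ ≤ Y₂ = y₂
        have : y₁ ≤ y₂ := le_of_lt (lt_of_lt_of_le hy1Y1 (hY1Y2.trans hy2e.symm.le))
        exact Or.inr ⟨y₁, h11.le, h21.le, le_refl _, this⟩
      · have hy2Y2 : y₂ < Y₂ := lt_of_le_of_ne hY₂le hy2e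
        exact Or.inr (finish Y₂ hY₂r (lt_of_lt_of_le hy1Y1 hY1Y2) hy2Y2)
    · have hwY1' : w < Y₁ := lt_of_le_of_ne hwY1 hwY1e
      obtain ⟨u, hu1, hu2, hu3, hu4⟩ :=
        h1 Y₁ hY₁r ⟨x₁, h11.trans hy1Y1⟩ ⟨y₁, hy1Y1⟩ ⟨x₂, h21.trans hy1Y1⟩ ⟨w, hwY1'⟩
          (Subtype.mk_lt_mk.mpr h11) (Subtype.mk_lt_mk.mpr hx1w)
          (Subtype.mk_lt_mk.mpr h21) (Subtype.mk_lt_mk.mpr hx2w)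
      exact Or.inl ⟨u.val, hu1, hu2, hu3, le_trans hu4 hwY2⟩
  rcases step1 with ⟨u, hu1, hu2, huy1, huY2⟩ | done
  · -- Step 2: pull u below y₂
    by_cases huy2 : u ≤ y₂
    · exact ⟨u, hu1, hu2, huy1, huy2⟩
    have hy2Y2 : y₂ < Y₂ := by
      rcases eq_or_lt_of_le hY₂le with h | h
      · exact absurd (h ▸ huY2) huy2
      · exact h
    by_cases huY2e : u = Y₂
    · -- y₂ < Y₂ = u ≤ y₁
      have : y₂ ≤ y₁ := le_trans (huY2e ▸ hy2Y2.le) huy1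
      exact ⟨y₂, h12.le, h22.le, this, le_refl _⟩
    have huY2' : u < Y₂ := lt_of_le_of_ne huY2 huY2e
    by_cases hux1 : x₁ = u
    · exact ⟨x₁, le_refl _, hux1 ▸ hu2, h11.le, h12.le⟩
    by_cases hux2 : x₂ = u
    · exact ⟨x₂, hux2 ▸ hu1, le_refl _, h21.le, h22.le⟩
    have hx1u : x₁ < u := lt_of_le_of_ne hu1 hux1
    have hx2u : x₂ < u := lt_of_le_of_ne hu2 hux2
    obtain ⟨z, hz1, hz2, hz3, hz4⟩ :=
      h1 Y₂ hY₂r ⟨x₁, h12.trans hy2Y2⟩ ⟨y₂, hy2Y2⟩ ⟨x₂, h22.trans hy2Y2⟩ ⟨u, huY2'⟩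
        (Subtype.mk_lt_mk.mpr h12) (Subtype.mk_lt_mk.mpr hx1u)
        (Subtype.mk_lt_mk.mpr h22) (Subtype.mk_lt_mk.mpr hx2u)
    exact ⟨z.val, hz1, hz2, le_trans hz4 huy1, hz3⟩
  · exact done
end

section
/- Let P be an r-saturated weakly graded poset whose rank map r takes values between 1 and n, and assume: (1) for each p ∈ P with r(p) = n, the subposet P_{<p} = {q ∈ P : q < p} is bowtie free; and (2) every quasi-bowtie x₁y₁x₂y₂ in P with r(x₁) = r(x₂) < r(y₁) = r(y₂) = n has a center. Then every quasi-bowtie x₁y₁x₂y₂ in P with r(x₁) = r(x₂) has a center (with no constraint on the ranks of y₁ and y₂). -/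
/-- Inductive step: if the first top has rank `< n`, lift it to rank `n` via saturation,
use the inductive hypothesis, and fix up the resulting center using bowtie-freeness of
the poset below a rank-`n` element. -/
lemma quasiBowtie_center_step {P : Type*} [PartialOrder P] (n : ℤ) (r : P → ℤ)
    (hmono : StrictMono r) (hlo : ∀ p : P, 1 ≤ r p) (hhi : ∀ p : P, r p ≤ n)
    (hsat : RSaturated r n)
    (h1 : ∀ p : P, r p = n → BowtieFree {q : P // q < p})
    (k : ℕ)
    (ih : ∀ a₁ b₁ a₂ b₂ : P, a₁ < b₁ → a₁ < b₂ → a₂ < b₁ → a₂ < b₂ → r a₁ = r a₂ →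
      (n - r b₁).toNat + (n - r b₂).toNat ≤ k →
      ∃ z : P, a₁ ≤ z ∧ a₂ ≤ z ∧ z ≤ b₁ ∧ z ≤ b₂)
    (x₁ y₁ x₂ y₂ : P) (h11 : x₁ < y₁) (h12 : x₁ < y₂) (h21 : x₂ < y₁) (h22 : x₂ < y₂)
    (hx : r x₁ = r x₂) (hy1 : r y₁ < n)
    (hk : (n - r y₁).toNat + (n - r y₂).toNat ≤ k + 1) :
    ∃ z : P, x₁ ≤ z ∧ x₂ ≤ z ∧ z ≤ y₁ ∧ z ≤ y₂ := by
  -- lift y₁ to rank n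
  obtain ⟨y₁', -, hle, -, hr1', -⟩ :=
    hsat y₁ n (r x₁) le_rfl hy1 (hmono h11) (hlo x₁)
  have hy1le : y₁ ≤ y₁' := hle
  have hy1lt : y₁ < y₁' := lt_of_le_of_ne hy1le (by rintro rfl; exact absurd hr1' hy1.ne)
  -- measure decreases
  have hm1 : 1 ≤ (n - r y₁).toNat := by omega
  have hm' : (n - r y₁').toNat + (n - r y₂).toNat ≤ k := by
    have : (n - r y₁').toNat = 0 := by omega
    omega
  obtain ⟨z, hz1, hz2, hzy1', hzy2⟩ :=
    ih x₁ y₁' x₂ y₂ (h11.trans_le hy1le) h12 (h21.trans_le hy1le) h22 hx hm'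
  by_cases hzy1 : z ≤ y₁
  · exact ⟨z, hz1, hz2, hzy1, hzy2⟩
  rcases eq_or_lt_of_le hz1 with rfl | hz1'
  · exact absurd h11.le hzy1
  rcases eq_or_lt_of_le hz2 with rfl | hz2'
  · exact absurd h21.le hzy1
  rcases eq_or_lt_of_le hzy1' with rfl | hzlt
  · -- z = y₁' has rank n, and z ≤ y₂ forces z = y₂
    rcases eq_or_lt_of_le hzy2 with rfl | hlt2
    · -- z = y₂, and y₁ < z; use bowtie-freeness below z
      obtain ⟨w, hw1, hw2, hwy, -⟩ :=
        h1 z hr1' ⟨x₁, h12⟩ ⟨y₁, hy1lt⟩ ⟨x₂, h22⟩ ⟨y₁, hy1lt⟩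
          (Subtype.mk_lt_mk.mpr h11) (Subtype.mk_lt_mk.mpr h11)
          (Subtype.mk_lt_mk.mpr h21) (Subtype.mk_lt_mk.mpr h21)
      exact ⟨w.1, hw1, hw2, hwy, le_trans (show (w:P) ≤ y₁ from hwy) hy1lt.le⟩
    · exact absurd (hmono hlt2) (by have := hhi y₂; omega)
  · -- z < y₁' : bowtie x₁, x₂ < y₁, z inside {q < y₁'}
    obtain ⟨w, hw1, hw2, hwy, hwz⟩ :=
      h1 y₁' hr1' ⟨x₁, h11.trans hy1lt⟩ ⟨y₁, hy1lt⟩ ⟨x₂, h21.trans hy1lt⟩ ⟨z, hzlt⟩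
        (Subtype.mk_lt_mk.mpr h11) (Subtype.mk_lt_mk.mpr hz1')
        (Subtype.mk_lt_mk.mpr h21) (Subtype.mk_lt_mk.mpr hz2')
    exact ⟨w.1, hw1, hw2, hwy, le_trans hwz hzy2⟩

/-- Under the hypotheses of the bowtie-free criterion, every quasi-bowtie
`x₁ y₁ x₂ y₂` with `r x₁ = r x₂` has a center (with no constraint on the ranks of
`y₁` and `y₂`). -/
theorem quasiBowtie_center_of_bottom_rank_eq {P : Type*} [PartialOrder P] (n : ℤ) (r : P → ℤ)
    (hmono : StrictMono r) (hlo : ∀ p : P, 1 ≤ r p) (hhi : ∀ p : P, r p ≤ n)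
    (hsat : RSaturated r n)
    (h1 : ∀ p : P, r p = n → BowtieFree {q : P // q < p})
    (h2 : ∀ x₁ y₁ x₂ y₂ : P, x₁ < y₁ → x₁ < y₂ → x₂ < y₁ → x₂ < y₂ →
      r x₁ = r x₂ → r x₁ < r y₁ → r y₁ = r y₂ → r y₂ = n →
      ∃ z : P, x₁ ≤ z ∧ x₂ ≤ z ∧ z ≤ y₁ ∧ z ≤ y₂) :
    ∀ x₁ y₁ x₂ y₂ : P, x₁ < y₁ → x₁ < y₂ → x₂ < y₁ → x₂ < y₂ → r x₁ = r x₂ →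
      ∃ z : P, x₁ ≤ z ∧ x₂ ≤ z ∧ z ≤ y₁ ∧ z ≤ y₂ := by
  suffices H : ∀ k : ℕ, ∀ x₁ y₁ x₂ y₂ : P, x₁ < y₁ → x₁ < y₂ → x₂ < y₁ → x₂ < y₂ →
      r x₁ = r x₂ → (n - r y₁).toNat + (n - r y₂).toNat ≤ k →
      ∃ z : P, x₁ ≤ z ∧ x₂ ≤ z ∧ z ≤ y₁ ∧ z ≤ y₂ by
    intro x₁ y₁ x₂ y₂ h11 h12 h21 h22 hx
    exact H _ x₁ y₁ x₂ y₂ h11 h12 h21 h22 hx le_rfl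
  intro k
  induction k with
  | zero =>
    intro x₁ y₁ x₂ y₂ h11 h12 h21 h22 hx hk
    have hn1 : r y₁ = n := by have := hhi y₁; omega
    have hn2 : r y₂ = n := by have := hhi y₂; omega
    exact h2 x₁ y₁ x₂ y₂ h11 h12 h21 h22 hx (hmono h11) (hn1.trans hn2.symm) hn2
  | succ k ih =>
    intro x₁ y₁ x₂ y₂ h11 h12 h21 h22 hx hk
    by_cases hy1 : r y₁ < n
    · exact quasiBowtie_center_step n r hmono hlo hhi hsat h1 k ih
        x₁ y₁ x₂ y₂ h11 h12 h21 h22 hx hy1 hk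
    by_cases hy2 : r y₂ < n
    · obtain ⟨z, hz1, hz2, hza, hzb⟩ := quasiBowtie_center_step n r hmono hlo hhi hsat h1 k
        (fun a₁ b₁ a₂ b₂ p q s t u v => ih a₁ b₁ a₂ b₂ p q s t u v)
        x₁ y₂ x₂ y₁ h12 h11 h22 h21 hx hy2 (by omega)
      exact ⟨z, hz1, hz2, hzb, hza⟩
    · have hn1 : r y₁ = n := le_antisymm (hhi y₁) (not_lt.mp hy1)
      have hn2 : r y₂ = n := le_antisymm (hhi y₂) (not_lt.mp hy2)
      exact h2 x₁ y₁ x₂ y₂ h11 h12 h21 h22 hx (hmono h11) (hn1.trans hn2.symm) hn2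
end

section
/- Let P be an r-saturated weakly graded poset whose rank map r takes values between 1 and n. Suppose every quasi-bowtie x₁y₁x₂y₂ in P with r(x₁) = r(x₂) < r(y₁) = r(y₂) has a center. Then P is bowtie free. -/
/-- Let `P` be an `r`-saturated weakly graded poset whose rank map `r`
takes values between `1` and `n`.  Suppose every quasi-bowtie `x₁ y₁ x₂ y₂` in `P` with
`r x₁ = r x₂ < r y₁ = r y₂` has a center.  Then `P` is bowtie free. -/
theorem bowtieFree_of_levelled_bowties {P : Type*} [PartialOrder P] (n : ℤ) (r : P → ℤ)
    (hmono : StrictMono r) (hlo : ∀ p : P, 1 ≤ r p) (hhi : ∀ p : P, r p ≤ n)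
    (hsat : RSaturated r n)
    (h : ∀ x₁ y₁ x₂ y₂ : P, x₁ < y₁ → x₁ < y₂ → x₂ < y₁ → x₂ < y₂ →
      r x₁ = r x₂ → r x₁ < r y₁ → r y₁ = r y₂ →
      ∃ z : P, x₁ ≤ z ∧ x₂ ≤ z ∧ z ≤ y₁ ∧ z ≤ y₂) :
    BowtieFree P := by
  -- Lemma A: bowties with equal-rank tops have centers.
  have lemA : ∀ N : ℕ, ∀ a b c d : P, a < c → a < d → b < c → b < d →
      r c = r d → (2 * r c - r a - r b).toNat ≤ N →
      ∃ z : P, a ≤ z ∧ b ≤ z ∧ z ≤ c ∧ z ≤ d := by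
    intro N
    induction N with
    | zero =>
      intro a b c d hac had hbc hbd hcd hm
      have h1 := hmono hac
      have h2 := hmono hbc
      omega
    | succ N IH =>
      have core : ∀ a b c d : P, a < c → a < d → b < c → b < d →
          r c = r d → (2 * r c - r a - r b).toNat ≤ N + 1 → r a ≤ r b →
          ∃ z : P, a ≤ z ∧ b ≤ z ∧ z ≤ c ∧ z ≤ d := by
        intro a b c d hac had hbc hbd hcd hm hab
        rcases eq_or_lt_of_le hab with heq | hlt
        · exact h a c b d hac had hbc hbd heq (hmono hac) hcd
        · -- lower b to rank r a
          obtain ⟨b₁, b', -, hb'b, -, hrb'⟩ :=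
            hsat b (r b + 1) (r a) (by have := hmono hbc; have := hhi c; omega)
              (by omega) hlt (hlo a)
          obtain ⟨z, haz, hb'z, hzc, hzd⟩ :=
            h a c b' d hac had (lt_of_le_of_lt hb'b hbc) (lt_of_le_of_lt hb'b hbd)
              hrb'.symm (hmono hac) hcd
          rcases eq_or_lt_of_le hzc with rfl | hzc'
          · exact ⟨z, le_of_lt hac, le_of_lt hbc, le_refl z, hzd⟩
          rcases eq_or_lt_of_le hzd with rfl | hzd'
          · exact ⟨z, le_of_lt had, le_of_lt hbd, hzc, le_refl z⟩
          -- now z < c and z < d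
          have hraz : r a ≤ r z := hrb' ▸ (hb'z.lt_or_eq.elim (fun h' => le_of_lt (hmono h'))
            (fun h' => le_of_eq (by rw [h'])))
          rcases eq_or_lt_of_le hraz with heqz | hltz
          · -- r z = r a forces z = b', giving a ≤ b
            have hzb' : z = b' := by
              rcases hb'z.lt_or_eq with h' | h'
              · exact absurd (hmono h') (by omega)
              · exact h'.symm
            have hab' : a ≤ b := le_trans (hzb' ▸ haz) hb'b
            obtain ⟨w, hbw, -, hwc, hwd⟩ :=
              h b c b d hbc hbd hbc hbd rfl (hmono hbc) hcd
            exact ⟨w, le_trans hab' hbw, hbw, hwc, hwd⟩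
          · -- recurse on (b, z; c, d)
            have hmz : (2 * r c - r b - r z).toNat ≤ N := by
              have h1 : r z < r c := hmono hzc'
              have h2 : r b < r c := hmono hbc
              omega
            obtain ⟨w, hbw, hzw, hwc, hwd⟩ := IH b z c d hbc hbd hzc' hzd' hcd hmz
            exact ⟨w, le_trans haz hzw, hbw, hwc, hwd⟩
      intro a b c d hac had hbc hbd hcd hm
      rcases le_total (r a) (r b) with hab | hba
      · exact core a b c d hac had hbc hbd hcd hm hab
      · obtain ⟨z, hbz, haz, hzc, hzd⟩ :=
          core b a c d hbc hbd hac had hcd (by omega) hba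
        exact ⟨z, haz, hbz, hzc, hzd⟩
  -- Lemma B: general bowties, by induction on r c + r d.
  have lemB : ∀ N : ℕ, ∀ a b c d : P, a < c → a < d → b < c → b < d →
      (r c + r d).toNat ≤ N → ∃ z : P, a ≤ z ∧ b ≤ z ∧ z ≤ c ∧ z ≤ d := by
    intro N
    induction N with
    | zero =>
      intro a b c d hac had hbc hbd hm
      have h1 := hlo c
      have h2 := hlo d
      omega
    | succ N IH =>
      have core : ∀ a b c d : P, a < c → a < d → b < c → b < d →
          (r c + r d).toNat ≤ N + 1 → r c ≤ r d →
          ∃ z : P, a ≤ z ∧ b ≤ z ∧ z ≤ c ∧ z ≤ d := by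
        intro a b c d hac had hbc hbd hm hcd
        rcases eq_or_lt_of_le hcd with heq | hlt
        · exact lemA (2 * r c - r a - r b).toNat a b c d hac had hbc hbd heq le_rfl
        · -- raise c to rank r d
          obtain ⟨c₁, c₂, hcc₁, -, hrc₁, -⟩ :=
            hsat c (r d) (r c - 1) (hhi d) hlt (by omega)
              (by have := hmono hac; have := hlo a; omega)
          obtain ⟨z, haz, hbz, hzc₁, hzd⟩ :=
            lemA (2 * r c₁ - r a - r b).toNat a b c₁ d
              (lt_of_lt_of_le hac hcc₁) had (lt_of_lt_of_le hbc hcc₁) hbd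
              (hrc₁) le_rfl
          rcases eq_or_lt_of_le haz with rfl | haz'
          · exact ⟨a, le_refl a, hbz, le_of_lt hac, le_of_lt had⟩
          rcases eq_or_lt_of_le hbz with rfl | hbz'
          · exact ⟨b, le_of_lt haz', le_refl b, le_of_lt hbc, le_of_lt hbd⟩
          have hrzd : r z ≤ r d := hrc₁ ▸ (hzc₁.lt_or_eq.elim (fun h' => le_of_lt (hmono h'))
            (fun h' => le_of_eq (by rw [h'])))
          rcases eq_or_lt_of_le hrzd with heqz | hltz
          · -- z = c₁, hence c ≤ d
            have hzc₁' : z = c₁ := by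
              rcases hzc₁.lt_or_eq with h' | h'
              · exact absurd (hmono h') (by omega)
              · exact h'
            have hcd' : c ≤ d := le_trans hcc₁ (hzc₁' ▸ hzd)
            obtain ⟨w, haw, hbw, hwc, -⟩ :=
              lemA (2 * r c - r a - r b).toNat a b c c hac hac hbc hbc rfl le_rfl
            exact ⟨w, haw, hbw, hwc, le_trans hwc hcd'⟩
          · -- recurse on (a, b; c, z)
            have hmz : (r c + r z).toNat ≤ N := by
              have h1 := hlo c
              have h2 := hlo z
              omega
            obtain ⟨w, haw, hbw, hwc, hwz⟩ := IH a b c z hac haz' hbc hbz' hmz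
            exact ⟨w, haw, hbw, hwc, le_trans hwz hzd⟩
      intro a b c d hac had hbc hbd hm
      rcases le_total (r c) (r d) with hcd | hdc
      · exact core a b c d hac had hbc hbd hm hcd
      · obtain ⟨z, haz, hbz, hzd, hzc⟩ :=
          core a b d c had hac hbd hbc (by omega) hdc
        exact ⟨z, haz, hbz, hzc, hzd⟩
  intro x₁ y₁ x₂ y₂ h11 h12 h21 h22
  exact lemB (r y₁ + r y₂).toNat x₁ x₂ y₁ y₂ h11 h12 h21 h22 le_rfl
end

section
/- Let P be an r-saturated weakly graded poset whose rank map r takes values between 1 and n. Suppose: (1) P is bowtie free; (2) for each p ∈ P with r(p) = 1, the subposet P_{>p} = {q ∈ P : q > p} is upward flag; and (3) any three pairwise upper-bounded elements of P of rank 1 have a common upper bound. Then P is upward flag. -/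
/-- A poset is *upward flag* if any three pairwise upper-bounded elements have a common
upper bound. -/
def UpwardFlag (P : Type*) [PartialOrder P] : Prop :=
  ∀ p₁ p₂ p₃ : P, (∃ q, p₁ ≤ q ∧ p₂ ≤ q) → (∃ q, p₂ ≤ q ∧ p₃ ≤ q) →
    (∃ q, p₁ ≤ q ∧ p₃ ≤ q) → ∃ q, p₁ ≤ q ∧ p₂ ≤ q ∧ p₃ ≤ q

/-- weak bowtie: centers exist even with non-strict inequalities -/
lemma weakBowtie {P : Type*} [PartialOrder P] (h1 : BowtieFree P) {x₁ x₂ y₁ y₂ : P}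
    (h11 : x₁ ≤ y₁) (h12 : x₁ ≤ y₂) (h21 : x₂ ≤ y₁) (h22 : x₂ ≤ y₂) :
    ∃ z, x₁ ≤ z ∧ x₂ ≤ z ∧ z ≤ y₁ ∧ z ≤ y₂ := by
  rcases h11.lt_or_eq with l11 | rfl
  · rcases h12.lt_or_eq with l12 | rfl
    · rcases h21.lt_or_eq with l21 | rfl
      · rcases h22.lt_or_eq with l22 | rfl
        · exact h1 x₁ y₁ x₂ y₂ l11 l12 l21 l22
        · exact ⟨x₂, h12, le_rfl, h21, le_rfl⟩
      · exact ⟨x₂, h11, le_rfl, le_rfl, h22⟩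
    · exact ⟨x₁, le_rfl, h22, h11, le_rfl⟩
  · exact ⟨x₁, le_rfl, h21, le_rfl, h12⟩

/-- common bound for triples above a rank-1 element -/
lemma linkFlag {P : Type*} [PartialOrder P] {n : ℤ} {r : P → ℤ}
    (h2 : ∀ p : P, r p = 1 → UpwardFlag {q : P // p < q})
    {p x y z : P} (hp : r p = 1) (hx : p ≤ x) (hy : p ≤ y) (hz : p ≤ z)
    (hxy : ∃ q, x ≤ q ∧ y ≤ q) (hyz : ∃ q, y ≤ q ∧ z ≤ q) (hxz : ∃ q, x ≤ q ∧ z ≤ q) :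
    ∃ q, x ≤ q ∧ y ≤ q ∧ z ≤ q := by
  rcases hx.lt_or_eq with hx | rfl
  · rcases hy.lt_or_eq with hy | rfl
    · rcases hz.lt_or_eq with hz | rfl
      · obtain ⟨qxy, h₁, h₂'⟩ := hxy
        obtain ⟨qyz, h₃, h₄⟩ := hyz
        obtain ⟨qxz, h₅, h₆⟩ := hxz
        obtain ⟨Q, hQ₁, hQ₂, hQ₃⟩ := h2 p hp ⟨x, hx⟩ ⟨y, hy⟩ ⟨z, hz⟩
          ⟨⟨qxy, lt_of_lt_of_le hx h₁⟩, h₁, h₂'⟩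
          ⟨⟨qyz, lt_of_lt_of_le hy h₃⟩, h₃, h₄⟩
          ⟨⟨qxz, lt_of_lt_of_le hx h₅⟩, h₅, h₆⟩
        exact ⟨Q.1, hQ₁, hQ₂, hQ₃⟩
      · obtain ⟨q, h₁, h₂'⟩ := hxy
        exact ⟨q, h₁, h₂', le_trans hy.le h₂'⟩
    · obtain ⟨q, h₁, h₂'⟩ := hxz
      exact ⟨q, h₁, le_trans hx.le h₁, h₂'⟩
  · obtain ⟨q, h₁, h₂'⟩ := hyz
    exact ⟨q, le_trans hy h₁, h₁, h₂'⟩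

/-- triples with a common lower bound and pairwise upper bounds are bounded -/
lemma descendFlag {P : Type*} [PartialOrder P] {n : ℤ} {r : P → ℤ}
    (hmono : StrictMono r) (hlo : ∀ p : P, 1 ≤ r p) (hhi : ∀ p : P, r p ≤ n)
    (hsat : RSaturated r n)
    (h2 : ∀ p : P, r p = 1 → UpwardFlag {q : P // p < q}) :
    ∀ t : ℕ, ∀ p x y z : P, r p ≤ t → p ≤ x → p ≤ y → p ≤ z →
    (∃ q, x ≤ q ∧ y ≤ q) → (∃ q, y ≤ q ∧ z ≤ q) → (∃ q, x ≤ q ∧ z ≤ q) →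
    ∃ q, x ≤ q ∧ y ≤ q ∧ z ≤ q := by
  intro t
  induction t with
  | zero => intro p x y z ht; have := hlo p; omega
  | succ t ih =>
    intro p x y z ht hx hy hz hxy hyz hxz
    by_cases hp1 : r p = 1
    · exact linkFlag (n := n) h2 hp1 hx hy hz hxy hyz hxz
    · by_cases hpn : r p = n
      · -- then x = y = z = p
        have hxp : p = x := by
          rcases hx.lt_or_eq with h | h
          · have := hmono h; have := hhi x; omega
          · exact h
        subst hxp
        obtain ⟨q, h₁, h₂'⟩ := hyz
        exact ⟨q, le_trans hy h₁, h₁, h₂'⟩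
      · have h1p : 1 ≤ r p := hlo p
        obtain ⟨p₁, p₀, -, hp₀, -, hp₀r⟩ :=
          hsat p n (r p - 1) le_rfl (lt_of_le_of_ne (hhi p) hpn) (by omega) (by omega)
        exact ih p₀ x y z (by omega) (hp₀.trans hx) (hp₀.trans hy) (hp₀.trans hz) hxy hyz hxz

/-- Let `P` be an `r`-saturated weakly graded poset whose rank map `r`
takes values between `1` and `n`.  Suppose (1) `P` is bowtie free; (2) for each `p` of
rank `1`, the subposet `P_{>p}` is upward flag; and (3) any three pairwise upper-bounded
elements of rank `1` have a common upper bound.  Then `P` is upward flag. -/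
theorem upwardFlag_of_rank_one_conditions {P : Type*} [PartialOrder P] (n : ℤ) (r : P → ℤ)
    (hmono : StrictMono r) (hlo : ∀ p : P, 1 ≤ r p) (hhi : ∀ p : P, r p ≤ n)
    (hsat : RSaturated r n)
    (h1 : BowtieFree P)
    (h2 : ∀ p : P, r p = 1 → UpwardFlag {q : P // p < q})
    (h3 : ∀ p₁ p₂ p₃ : P, r p₁ = 1 → r p₂ = 1 → r p₃ = 1 →
      (∃ q, p₁ ≤ q ∧ p₂ ≤ q) → (∃ q, p₂ ≤ q ∧ p₃ ≤ q) → (∃ q, p₁ ≤ q ∧ p₃ ≤ q) →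
      ∃ q, p₁ ≤ q ∧ p₂ ≤ q ∧ p₃ ≤ q) :
    UpwardFlag P := by
  have key : ∀ s : ℕ, ∀ a b c : P, r a + r b + r c ≤ s →
      (∃ q, a ≤ q ∧ b ≤ q) → (∃ q, b ≤ q ∧ c ≤ q) → (∃ q, a ≤ q ∧ c ≤ q) →
      ∃ q, a ≤ q ∧ b ≤ q ∧ c ≤ q := by
    intro s
    induction s with
    | zero =>
      intro a b c hsum
      have := hlo a; have := hlo b; have := hlo c
      omega
    | succ s ih =>
      -- a step lemma handling the case where the first element has rank ≥ 2
      have step : ∀ a b c : P, r a + r b + r c ≤ (s + 1 : ℕ) → 2 ≤ r a →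
          (∃ q, a ≤ q ∧ b ≤ q) → (∃ q, b ≤ q ∧ c ≤ q) → (∃ q, a ≤ q ∧ c ≤ q) →
          ∃ q, a ≤ q ∧ b ≤ q ∧ c ≤ q := by
        intro a b c hsum ha2 hab hbc hac
        obtain ⟨u₁, hau₁, hbu₁⟩ := hab
        obtain ⟨u₂, hbu₂, hcu₂⟩ := hbc
        obtain ⟨u₃, hau₃, hcu₃⟩ := hac
        by_cases han : r a = n
        · -- a is already the bound
          have h₁ : a = u₁ := by
            rcases hau₁.lt_or_eq with h | h
            · have := hmono h; have := hhi u₁; omega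
            · exact h
          have h₃ : a = u₃ := by
            rcases hau₃.lt_or_eq with h | h
            · have := hmono h; have := hhi u₃; omega
            · exact h
          exact ⟨a, le_rfl, h₁ ▸ hbu₁, h₃ ▸ hcu₃⟩
        · obtain ⟨a₁, a₀, -, ha₀a, -, ha₀r⟩ :=
            hsat a n (r a - 1) le_rfl (lt_of_le_of_ne (hhi a) han) (by omega) (by omega)
          obtain ⟨v, ha₀v, hbv, hcv⟩ := ih a₀ b c (by push_cast at hsum ⊢; omega)
            ⟨u₁, ha₀a.trans hau₁, hbu₁⟩ ⟨u₂, hbu₂, hcu₂⟩ ⟨u₃, ha₀a.trans hau₃, hcu₃⟩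
          obtain ⟨z₁, ha₀z₁, hbz₁, hz₁u₁, hz₁v⟩ :=
            weakBowtie h1 (ha₀a.trans hau₁) ha₀v hbu₁ hbv
          obtain ⟨z₂, ha₀z₂, hcz₂, hz₂u₃, hz₂v⟩ :=
            weakBowtie h1 (ha₀a.trans hau₃) ha₀v hcu₃ hcv
          obtain ⟨q, haq, hz₁q, hz₂q⟩ :=
            descendFlag hmono hlo hhi hsat h2 (r a₀).toNat a₀ a z₁ z₂
              (Int.self_le_toNat _) ha₀a ha₀z₁ ha₀z₂
              ⟨u₁, hau₁, hz₁u₁⟩ ⟨v, hz₁v, hz₂v⟩ ⟨u₃, hau₃, hz₂u₃⟩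
          exact ⟨q, haq, hbz₁.trans hz₁q, hcz₂.trans hz₂q⟩
      intro a b c hsum hab hbc hac
      by_cases ha1 : r a = 1
      · by_cases hb1 : r b = 1
        · by_cases hc1 : r c = 1
          · exact h3 a b c ha1 hb1 hc1 hab hbc hac
          · have := hlo c
            obtain ⟨q, hc, ha, hb⟩ := step c a b (by omega) (by omega)
              ⟨(hac.choose), hac.choose_spec.2, hac.choose_spec.1⟩
              hab
              ⟨(hbc.choose), hbc.choose_spec.2, hbc.choose_spec.1⟩
            exact ⟨q, ha, hb, hc⟩
        · have := hlo b
          obtain ⟨q, hb, ha, hc⟩ := step b a c (by omega) (by omega)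
            ⟨(hab.choose), hab.choose_spec.2, hab.choose_spec.1⟩
            hac hbc
          exact ⟨q, ha, hb, hc⟩
      · have := hlo a
        exact step a b c hsum (by omega) hab hbc hac
  intro a b c hab hbc hac
  exact key (r a + r b + r c).toNat a b c (Int.self_le_toNat _) hab hbc hac
end

section
/- Let P be an r-saturated weakly graded poset whose rank map r takes values between 1 and n. Suppose: (1) P is bowtie free; and (2) for every integer k with 1 ≤ k ≤ n−1, any three pairwise upper-bounded elements of P of rank k have a common upper bound. Then P is upward flag. -/
section Aux

variable {P : Type*} [PartialOrder P] {n : ℤ} {r : P → ℤ}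

private lemma rle_aux (hmono : StrictMono r) {p q : P} (h : p ≤ q) : r p ≤ r q := by
  rcases h.lt_or_eq with h' | h'
  · exact (hmono h').le
  · rw [h']

/-- Two rank-`k` elements with one above-min element: the key lemma, assuming the
induction hypothesis for triples of min rank `> k`. -/
private lemma lemB (hmono : StrictMono r) (hlo : ∀ p : P, 1 ≤ r p) (hhi : ∀ p : P, r p ≤ n)
    (hsat : RSaturated r n) (h1 : BowtieFree P)
    (h2 : ∀ k : ℤ, 1 ≤ k → k ≤ n - 1 →
      ∀ p₁ p₂ p₃ : P, r p₁ = k → r p₂ = k → r p₃ = k →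
        (∃ q, p₁ ≤ q ∧ p₂ ≤ q) → (∃ q, p₂ ≤ q ∧ p₃ ≤ q) → (∃ q, p₁ ≤ q ∧ p₃ ≤ q) →
        ∃ q, p₁ ≤ q ∧ p₂ ≤ q ∧ p₃ ≤ q)
    (k : ℤ)
    (IH : ∀ a b c : P, k < r a → k < r b → k < r c →
      (∃ q, a ≤ q ∧ b ≤ q) → (∃ q, b ≤ q ∧ c ≤ q) → (∃ q, a ≤ q ∧ c ≤ q) →
      ∃ q, a ≤ q ∧ b ≤ q ∧ c ≤ q)
    (p₁ p₂ p₃ : P) (h₁ : r p₁ = k) (h₂ : r p₂ = k) (h₃ : k ≤ r p₃)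
    (u₁₂ : ∃ q, p₁ ≤ q ∧ p₂ ≤ q) (u₂₃ : ∃ q, p₂ ≤ q ∧ p₃ ≤ q)
    (u₁₃ : ∃ q, p₁ ≤ q ∧ p₃ ≤ q) :
    ∃ q, p₁ ≤ q ∧ p₂ ≤ q ∧ p₃ ≤ q := by
  obtain ⟨q₁₂, hq₁₂₁, hq₁₂₂⟩ := u₁₂
  obtain ⟨q₂₃, hq₂₃₂, hq₂₃₃⟩ := u₂₃
  obtain ⟨q₁₃, hq₁₃₁, hq₁₃₃⟩ := u₁₃
  by_cases e12 : p₁ ≤ p₂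
  · exact ⟨q₂₃, e12.trans hq₂₃₂, hq₂₃₂, hq₂₃₃⟩
  by_cases e21 : p₂ ≤ p₁
  · exact ⟨q₁₃, hq₁₃₁, e21.trans hq₁₃₁, hq₁₃₃⟩
  by_cases e13 : p₁ ≤ p₃
  · exact ⟨q₂₃, e13.trans hq₂₃₃, hq₂₃₂, hq₂₃₃⟩
  by_cases e23 : p₂ ≤ p₃
  · exact ⟨q₁₃, hq₁₃₁, e23.trans hq₁₃₃, hq₁₃₃⟩
  have hk1 : 1 ≤ k := h₁ ▸ hlo p₁
  rcases eq_or_lt_of_le h₃ with hk3 | hk3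
  · -- r p₃ = k : all three have rank k
    by_cases hkn : k ≤ n - 1
    · exact h2 k hk1 hkn p₁ p₂ p₃ h₁ h₂ hk3.symm ⟨q₁₂, hq₁₂₁, hq₁₂₂⟩
        ⟨q₂₃, hq₂₃₂, hq₂₃₃⟩ ⟨q₁₃, hq₁₃₁, hq₁₃₃⟩
    · -- k = n, so p₁ has rank n and q₁₂ = p₁
      exfalso
      have hkn' : k = n := by have := h₁ ▸ hhi p₁; omega
      have : q₁₂ = p₁ := by
        rcases hq₁₂₁.lt_or_eq with h' | h'
        · have := hmono h'
          have := hhi q₁₂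
          omega
        · exact h'.symm
      exact e21 (this ▸ hq₁₂₂)
  · -- k < r p₃
    rcases lt_or_eq_of_le (hhi p₃) with h3n | h3n
    · -- r p₃ < n : saturate p₃ down to rank k
      obtain ⟨pp, a, -, ha, -, hra⟩ :=
        hsat p₃ (r p₃ + 1) k (by omega) (by omega) hk3 hk1
      obtain ⟨W, hW₁, hW₂, hWa⟩ := h2 k hk1 (by omega) p₁ p₂ a h₁ h₂ hra
        ⟨q₁₂, hq₁₂₁, hq₁₂₂⟩ ⟨q₂₃, hq₂₃₂, ha.trans hq₂₃₃⟩ ⟨q₁₃, hq₁₃₁, ha.trans hq₁₃₃⟩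
      -- four strict inequalities for the first bowtie
      have hp1W : p₁ < W := lt_of_le_of_ne hW₁ (fun h => e21 (by rw [h]; exact hW₂))
      have hp1q : p₁ < q₁₃ := lt_of_le_of_ne hq₁₃₁
        (fun h => by have := rle_aux hmono (hq₁₃₃.trans h.symm.le); omega)
      have haW : a < W := lt_of_le_of_ne hWa
        (fun h => e13 (le_trans (by rw [h]; exact hW₁) ha))
      have haq : a < q₁₃ := lt_of_le_of_ne (ha.trans hq₁₃₃)
        (fun h => by have := rle_aux hmono (hq₁₃₃.trans h.symm.le); omega)
      obtain ⟨z₁, hz₁p, hz₁a, hz₁W, hz₁q⟩ := h1 p₁ W a q₁₃ hp1W hp1q haW haq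
      -- second bowtie
      have hp2W : p₂ < W := lt_of_le_of_ne hW₂ (fun h => e12 (by rw [h]; exact hW₁))
      have hp2q : p₂ < q₂₃ := lt_of_le_of_ne hq₂₃₂
        (fun h => by have := rle_aux hmono (hq₂₃₃.trans h.symm.le); omega)
      have haq2 : a < q₂₃ := lt_of_le_of_ne (ha.trans hq₂₃₃)
        (fun h => by have := rle_aux hmono (hq₂₃₃.trans h.symm.le); omega)
      obtain ⟨z₂, hz₂p, hz₂a, hz₂W, hz₂q⟩ := h1 p₂ W a q₂₃ hp2W hp2q haW haq2
      -- ranks of the centers exceed k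
      have hz₁k : k < r z₁ := by
        rcases hz₁p.lt_or_eq with h' | h'
        · have := hmono h'; omega
        · exfalso
          rcases hz₁a.lt_or_eq with h'' | h''
          · have h3 := hmono h''
            have h4 := congrArg r h'
            omega
          · exact e13 ((h'.trans h''.symm).le.trans ha)
      have hz₂k : k < r z₂ := by
        rcases hz₂p.lt_or_eq with h' | h'
        · have := hmono h'; omega
        · exfalso
          rcases hz₂a.lt_or_eq with h'' | h''
          · have h3 := hmono h''
            have h4 := congrArg r h'
            omega
          · exact e23 ((h'.trans h''.symm).le.trans ha)
      obtain ⟨V, hV₁, hV₂, hV₃⟩ := IH z₁ z₂ p₃ hz₁k hz₂k hk3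
        ⟨W, hz₁W, hz₂W⟩ ⟨q₂₃, hz₂q, hq₂₃₃⟩ ⟨q₁₃, hz₁q, hq₁₃₃⟩
      exact ⟨V, hz₁p.trans hV₁, hz₂p.trans hV₂, hV₃⟩
    · -- r p₃ = n so q₁₃ = p₃, contradicting ¬ p₁ ≤ p₃
      exfalso
      have : q₁₃ = p₃ := by
        rcases hq₁₃₃.lt_or_eq with h' | h'
        · have := hmono h'; have := hhi q₁₃; omega
        · exact h'.symm
      exact e13 (this ▸ hq₁₃₁)

/-- The sorted step: `r p₁` is the minimum rank. -/
private lemma stepL (hmono : StrictMono r) (hlo : ∀ p : P, 1 ≤ r p) (hhi : ∀ p : P, r p ≤ n)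
    (hsat : RSaturated r n) (h1 : BowtieFree P)
    (h2 : ∀ k : ℤ, 1 ≤ k → k ≤ n - 1 →
      ∀ p₁ p₂ p₃ : P, r p₁ = k → r p₂ = k → r p₃ = k →
        (∃ q, p₁ ≤ q ∧ p₂ ≤ q) → (∃ q, p₂ ≤ q ∧ p₃ ≤ q) → (∃ q, p₁ ≤ q ∧ p₃ ≤ q) →
        ∃ q, p₁ ≤ q ∧ p₂ ≤ q ∧ p₃ ≤ q)
    (k : ℤ)
    (IH : ∀ a b c : P, k < r a → k < r b → k < r c →
      (∃ q, a ≤ q ∧ b ≤ q) → (∃ q, b ≤ q ∧ c ≤ q) → (∃ q, a ≤ q ∧ c ≤ q) →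
      ∃ q, a ≤ q ∧ b ≤ q ∧ c ≤ q)
    (p₁ p₂ p₃ : P) (hk : r p₁ = k) (h12 : k ≤ r p₂) (h23 : r p₂ ≤ r p₃)
    (u₁₂ : ∃ q, p₁ ≤ q ∧ p₂ ≤ q) (u₂₃ : ∃ q, p₂ ≤ q ∧ p₃ ≤ q)
    (u₁₃ : ∃ q, p₁ ≤ q ∧ p₃ ≤ q) :
    ∃ q, p₁ ≤ q ∧ p₂ ≤ q ∧ p₃ ≤ q := by
  rcases eq_or_lt_of_le h12 with h2k | h2k
  · exact lemB hmono hlo hhi hsat h1 h2 k IH p₁ p₂ p₃ hk h2k.symm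
      (le_trans h12 h23) u₁₂ u₂₃ u₁₃
  · -- k < r p₂ ≤ r p₃
    obtain ⟨q₁₂, hq₁₂₁, hq₁₂₂⟩ := u₁₂
    obtain ⟨q₂₃, hq₂₃₂, hq₂₃₃⟩ := u₂₃
    obtain ⟨q₁₃, hq₁₃₁, hq₁₃₃⟩ := u₁₃
    by_cases e12 : p₁ ≤ p₂
    · exact ⟨q₂₃, e12.trans hq₂₃₂, hq₂₃₂, hq₂₃₃⟩
    by_cases e13 : p₁ ≤ p₃
    · exact ⟨q₂₃, e13.trans hq₂₃₃, hq₂₃₂, hq₂₃₃⟩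
    by_cases e23 : p₂ ≤ p₃
    · exact ⟨q₁₃, hq₁₃₁, e23.trans hq₁₃₃, hq₁₃₃⟩
    by_cases e32 : p₃ ≤ p₂
    · exact ⟨q₁₂, hq₁₂₁, hq₁₂₂, e32.trans hq₁₂₂⟩
    have hk1 : 1 ≤ k := hk ▸ hlo p₁
    have hk3 : k < r p₃ := lt_of_lt_of_le h2k h23
    rcases lt_or_eq_of_le (hhi p₃) with h3n | h3n
    · -- saturate p₃ down to rank k
      obtain ⟨pp, a, -, ha, -, hra⟩ :=
        hsat p₃ (r p₃ + 1) k (by omega) (by omega) hk3 hk1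
      obtain ⟨W, hW₁, hWa, hW₂⟩ := lemB hmono hlo hhi hsat h1 h2 k IH p₁ a p₂ hk hra h2k.le
        ⟨q₁₃, hq₁₃₁, ha.trans hq₁₃₃⟩ ⟨q₂₃, ha.trans hq₂₃₃, hq₂₃₂⟩ ⟨q₁₂, hq₁₂₁, hq₁₂₂⟩
      have hp1W : p₁ < W := lt_of_le_of_ne hW₁
        (fun h => by have := rle_aux hmono (hW₂.trans h.symm.le); omega)
      have hp1q : p₁ < q₁₃ := lt_of_le_of_ne hq₁₃₁
        (fun h => by have := rle_aux hmono (hq₁₃₃.trans h.symm.le); omega)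
      have haW : a < W := lt_of_le_of_ne hWa
        (fun h => e13 (le_trans (by rw [h]; exact hW₁) ha))
      have haq : a < q₁₃ := lt_of_le_of_ne (ha.trans hq₁₃₃)
        (fun h => by have := rle_aux hmono (hq₁₃₃.trans h.symm.le); omega)
      obtain ⟨z₁, hz₁p, hz₁a, hz₁W, hz₁q⟩ := h1 p₁ W a q₁₃ hp1W hp1q haW haq
      have hp2W : p₂ < W := lt_of_le_of_ne hW₂ (fun h => e12 (by rw [h]; exact hW₁))
      have hp2q : p₂ < q₂₃ := lt_of_le_of_ne hq₂₃₂ (fun h => e32 (by rw [h]; exact hq₂₃₃))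
      have haq2 : a < q₂₃ := lt_of_le_of_ne (ha.trans hq₂₃₃)
        (fun h => by have := rle_aux hmono (hq₂₃₃.trans h.symm.le); omega)
      obtain ⟨z₂, hz₂p, hz₂a, hz₂W, hz₂q⟩ := h1 p₂ W a q₂₃ hp2W hp2q haW haq2
      have hz₁k : k < r z₁ := by
        rcases hz₁p.lt_or_eq with h' | h'
        · have := hmono h'; omega
        · exfalso
          rcases hz₁a.lt_or_eq with h'' | h''
          · have h3 := hmono h''
            have h4 := congrArg r h'
            omega
          · exact e13 ((h'.trans h''.symm).le.trans ha)
      have hz₂k : k < r z₂ := lt_of_lt_of_le h2k (rle_aux hmono hz₂p)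
      obtain ⟨V, hV₁, hV₂, hV₃⟩ := IH z₁ z₂ p₃ hz₁k hz₂k hk3
        ⟨W, hz₁W, hz₂W⟩ ⟨q₂₃, hz₂q, hq₂₃₃⟩ ⟨q₁₃, hz₁q, hq₁₃₃⟩
      exact ⟨V, hz₁p.trans hV₁, hz₂p.trans hV₂, hV₃⟩
    · -- r p₃ = n so q₂₃ = p₃
      exfalso
      have : q₂₃ = p₃ := by
        rcases hq₂₃₃.lt_or_eq with h' | h'
        · have := hmono h'; have := hhi q₂₃; omega
        · exact h'.symm
      exact e23 (this ▸ hq₂₃₂)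

private lemma keyL (hmono : StrictMono r) (hlo : ∀ p : P, 1 ≤ r p) (hhi : ∀ p : P, r p ≤ n)
    (hsat : RSaturated r n) (h1 : BowtieFree P)
    (h2 : ∀ k : ℤ, 1 ≤ k → k ≤ n - 1 →
      ∀ p₁ p₂ p₃ : P, r p₁ = k → r p₂ = k → r p₃ = k →
        (∃ q, p₁ ≤ q ∧ p₂ ≤ q) → (∃ q, p₂ ≤ q ∧ p₃ ≤ q) → (∃ q, p₁ ≤ q ∧ p₃ ≤ q) →
        ∃ q, p₁ ≤ q ∧ p₂ ≤ q ∧ p₃ ≤ q) :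
    ∀ d : ℕ, ∀ p₁ p₂ p₃ : P, n ≤ r p₁ + d → n ≤ r p₂ + d → n ≤ r p₃ + d →
      (∃ q, p₁ ≤ q ∧ p₂ ≤ q) → (∃ q, p₂ ≤ q ∧ p₃ ≤ q) → (∃ q, p₁ ≤ q ∧ p₃ ≤ q) →
      ∃ q, p₁ ≤ q ∧ p₂ ≤ q ∧ p₃ ≤ q := by
  intro d
  induction d with
  | zero =>
    intro p₁ p₂ p₃ hd₁ hd₂ hd₃ u₁₂ u₂₃ u₁₃
    -- all ranks equal n; upper bounds collapse
    obtain ⟨q₁₂, hq₁₂₁, hq₁₂₂⟩ := u₁₂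
    obtain ⟨q₂₃, hq₂₃₂, hq₂₃₃⟩ := u₂₃
    have h12 : q₁₂ = p₁ := by
      rcases hq₁₂₁.lt_or_eq with h' | h'
      · have := hmono h'; have := hhi q₁₂; omega
      · exact h'.symm
    have h23 : q₂₃ = p₂ := by
      rcases hq₂₃₂.lt_or_eq with h' | h'
      · have := hmono h'; have := hhi q₂₃; omega
      · exact h'.symm
    exact ⟨p₁, le_rfl, h12 ▸ hq₁₂₂, (h23 ▸ hq₂₃₃).trans (h12 ▸ hq₁₂₂)⟩
  | succ d IHd =>
    intro p₁ p₂ p₃ hd₁ hd₂ hd₃ u₁₂ u₂₃ u₁₃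
    have pcomm : ∀ a b : P, (∃ q, a ≤ q ∧ b ≤ q) → ∃ q, b ≤ q ∧ a ≤ q :=
      fun a b ⟨q, h, h'⟩ => ⟨q, h', h⟩
    have IHk : ∀ k : ℤ, n ≤ k + (d + 1) → ∀ a b c : P, k < r a → k < r b → k < r c →
        (∃ q, a ≤ q ∧ b ≤ q) → (∃ q, b ≤ q ∧ c ≤ q) → (∃ q, a ≤ q ∧ c ≤ q) →
        ∃ q, a ≤ q ∧ b ≤ q ∧ c ≤ q := by
      intro k hkd a b c hka hkb hkc
      exact IHd a b c (by omega) (by omega) (by omega)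
    rcases le_total (r p₁) (r p₂) with h12 | h12
    · rcases le_total (r p₂) (r p₃) with h23 | h23
      · exact stepL hmono hlo hhi hsat h1 h2 (r p₁)
          (IHk (r p₁) (by push_cast at hd₁ ⊢; omega)) p₁ p₂ p₃ rfl h12 h23 u₁₂ u₂₃ u₁₃
      · rcases le_total (r p₁) (r p₃) with h13 | h13
        · obtain ⟨q, hq₁, hq₃, hq₂⟩ := stepL hmono hlo hhi hsat h1 h2 (r p₁)
            (IHk (r p₁) (by push_cast at hd₁ ⊢; omega)) p₁ p₃ p₂ rfl h13 h23
            u₁₃ (pcomm _ _ u₂₃) u₁₂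
          exact ⟨q, hq₁, hq₂, hq₃⟩
        · obtain ⟨q, hq₃, hq₁, hq₂⟩ := stepL hmono hlo hhi hsat h1 h2 (r p₃)
            (IHk (r p₃) (by push_cast at hd₃ ⊢; omega)) p₃ p₁ p₂ rfl h13 h12
            (pcomm _ _ u₁₃) u₁₂ (pcomm _ _ u₂₃)
          exact ⟨q, hq₁, hq₂, hq₃⟩
    · rcases le_total (r p₁) (r p₃) with h13 | h13
      · obtain ⟨q, hq₂, hq₁, hq₃⟩ := stepL hmono hlo hhi hsat h1 h2 (r p₂)
          (IHk (r p₂) (by push_cast at hd₂ ⊢; omega)) p₂ p₁ p₃ rfl h12 h13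
          (pcomm _ _ u₁₂) u₁₃ u₂₃
        exact ⟨q, hq₁, hq₂, hq₃⟩
      · rcases le_total (r p₂) (r p₃) with h23 | h23
        · obtain ⟨q, hq₂, hq₃, hq₁⟩ := stepL hmono hlo hhi hsat h1 h2 (r p₂)
            (IHk (r p₂) (by push_cast at hd₂ ⊢; omega)) p₂ p₃ p₁ rfl h23 h13
            u₂₃ (pcomm _ _ u₁₃) (pcomm _ _ u₁₂)
          exact ⟨q, hq₁, hq₂, hq₃⟩
        · obtain ⟨q, hq₃, hq₂, hq₁⟩ := stepL hmono hlo hhi hsat h1 h2 (r p₃)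
            (IHk (r p₃) (by push_cast at hd₃ ⊢; omega)) p₃ p₂ p₁ rfl h23 h12
            (pcomm _ _ u₂₃) (pcomm _ _ u₁₂) (pcomm _ _ u₁₃)
          exact ⟨q, hq₁, hq₂, hq₃⟩

end Aux

/-- Let `P` be an `r`-saturated weakly graded poset whose rank map `r`
takes values between `1` and `n`.  Suppose (1) `P` is bowtie free; and (2) for every
integer `k` with `1 ≤ k ≤ n − 1`, any three pairwise upper-bounded elements of rank `k`
have a common upper bound.  Then `P` is upward flag. -/
theorem upwardFlag_of_levelled_triples {P : Type*} [PartialOrder P] (n : ℤ) (r : P → ℤ)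
    (hmono : StrictMono r) (hlo : ∀ p : P, 1 ≤ r p) (hhi : ∀ p : P, r p ≤ n)
    (hsat : RSaturated r n)
    (h1 : BowtieFree P)
    (h2 : ∀ k : ℤ, 1 ≤ k → k ≤ n - 1 →
      ∀ p₁ p₂ p₃ : P, r p₁ = k → r p₂ = k → r p₃ = k →
        (∃ q, p₁ ≤ q ∧ p₂ ≤ q) → (∃ q, p₂ ≤ q ∧ p₃ ≤ q) → (∃ q, p₁ ≤ q ∧ p₃ ≤ q) →
        ∃ q, p₁ ≤ q ∧ p₂ ≤ q ∧ p₃ ≤ q) :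
    UpwardFlag P := by
  intro p₁ p₂ p₃ u₁₂ u₂₃ u₁₃
  have hto : (n - 1 : ℤ) ≤ ((n - 1).toNat : ℤ) := Int.self_le_toNat _
  exact keyL hmono hlo hhi hsat h1 h2 (n - 1).toNat p₁ p₂ p₃
    (by have := hlo p₁; omega) (by have := hlo p₂; omega) (by have := hlo p₃; omega)
    u₁₂ u₂₃ u₁₃
end

section
/- Let Λ be a Coxeter diagram with vertex set S and let s, t, r ∈ S be pairwise distinct vertices such that t and r lie in the same connected component of the induced diagram Λ∖{s}. Then for all g, h ∈ A_S with g·A_{S∖{s}} ∩ h·A_{S∖{t}} ≠ ∅, there exists k ∈ A_S such that k·A_{S∖{r}} ∩ g·A_{S∖{s}} ≠ ∅ and k·A_{S∖{r}} ∩ h·A_{S∖{t}} = ∅. Equivalently: for every edge xy of the Artin complex Δ_Λ with x of type ŝ and y of type t̂, there exists a vertex z of type r̂ with z adjacent to x and z not adjacent to y. -/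
open scoped Pointwise

/-- A *Coxeter diagram* on a vertex set `S`: a symmetric labeling `M` with `M s s = 1`,
and for `s ≠ t` the label `M s t` lies in `{2, 3, 4, …} ∪ {∞}`, where `0` encodes the
label `∞` and label `2` means that `s` and `t` are not joined by an edge. -/
structure CoxDiagram (S : Type*) where
  M : S → S → ℕ
  symm : ∀ s t, M s t = M t s
  diag : ∀ s, M s s = 1
  offDiag : ∀ s t, s ≠ t → M s t ≠ 1

namespace CoxDiagram

variable {S : Type*}

/-- The underlying graph of a Coxeter diagram: `s` and `t` are joined exactly when
`M s t ≠ 2`. -/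
def graph (Λ : CoxDiagram S) : SimpleGraph S where
  Adj s t := s ≠ t ∧ Λ.M s t ≠ 2
  symm := by
    constructor
    intro s t h
    exact ⟨h.1.symm, by rw [Λ.symm t s]; exact h.2⟩
  loopless := by
    constructor
    intro s h
    exact h.1 rfl

/-- The alternating word `s t s t ⋯` of length `n` in the free group on `S`. -/
def altWord (s t : S) : ℕ → FreeGroup S
  | 0 => 1
  | n + 1 => FreeGroup.of s * altWord t s n

/-- The braid relations of the Artin group of `Λ` : for each pair `s, t` with
`M s t ≠ ∞`, the relation `sts⋯ = tst⋯` (both sides alternating of length `M s t`). -/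
def artinRels (Λ : CoxDiagram S) : Set (FreeGroup S) :=
  {w | ∃ s t : S, Λ.M s t ≠ 0 ∧
    w = altWord s t (Λ.M s t) * (altWord t s (Λ.M s t))⁻¹}

/-- The Artin group of the Coxeter diagram `Λ`. -/
def ArtinGroup (Λ : CoxDiagram S) : Type _ := PresentedGroup (artinRels Λ)

instance (Λ : CoxDiagram S) : Group (ArtinGroup Λ) :=
  inferInstanceAs (Group (PresentedGroup (artinRels Λ)))

/-- The standard generator of the Artin group corresponding to `s ∈ S`. -/
def gen (Λ : CoxDiagram S) (s : S) : ArtinGroup Λ := PresentedGroup.of s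

/-- The standard parabolic subgroup `A_T` of the Artin group, generated by `T ⊆ S`. -/
def parab (Λ : CoxDiagram S) (T : Set S) : Subgroup (ArtinGroup Λ) :=
  Subgroup.closure (Λ.gen '' T)

/-- `a` and `b` are connected by an edge path of `G` all of whose vertices lie in `U`. -/
def ConnIn {V : Type*} (G : SimpleGraph V) (U : Set V) (a b : V) : Prop :=
  Relation.ReflTransGen (fun u v => u ∈ U ∧ v ∈ U ∧ G.Adj u v) a b

/-! ### Auxiliary development -/

section Aux

open Real Finset

/-- indicator basis function -/
noncomputable def ee (u w : S) : ℝ := @ite _ (w = u) (Classical.dec _) 1 0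

lemma ee_self (u : S) : ee u u = 1 := by simp [ee]

lemma ee_of_ne {u w : S} (h : w ≠ u) : ee u w = 0 := by simp [ee, h]

lemma sum_mul_ee [Fintype S] (g : S → ℝ) (u : S) : (∑ v, g v * ee u v) = g u := by
  classical
  rw [Finset.sum_eq_single u]
  · simp [ee_self]
  · intro b _ hb; simp [ee_of_ne hb]
  · intro h; exact absurd (Finset.mem_univ u) h

/-- cosine entries -/
noncomputable def cc (Λ : CoxDiagram S) (u v : S) : ℝ :=
  -2 * Real.cos (Real.pi / (Λ.M u v : ℕ))

lemma cc_symm (Λ : CoxDiagram S) (u v : S) : cc Λ u v = cc Λ v u := by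
  rw [cc, cc, Λ.symm]

lemma cc_self (Λ : CoxDiagram S) (u : S) : cc Λ u u = 2 := by
  rw [cc, Λ.diag]
  norm_num

lemma cc_nonpos (Λ : CoxDiagram S) {u v : S} (h : u ≠ v) : cc Λ u v ≤ 0 := by
  have h1 := Λ.offDiag u v h
  rw [cc]
  rcases Nat.eq_zero_or_pos (Λ.M u v) with h0 | hpos
  · rw [h0]; norm_num
  · have h2 : 2 ≤ Λ.M u v := by omega
    have hcos : 0 ≤ Real.cos (Real.pi / (Λ.M u v : ℕ)) := by
      apply Real.cos_nonneg_of_mem_Icc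
      constructor
      · have : 0 ≤ Real.pi / (Λ.M u v : ℕ) := by positivity
        linarith [Real.pi_pos]
      · rw [div_le_div_iff₀ (by exact_mod_cast hpos) (by norm_num)]
        have : (2:ℝ) ≤ (Λ.M u v : ℕ) := by exact_mod_cast h2
        nlinarith [Real.pi_pos]
    linarith

lemma cc_neg (Λ : CoxDiagram S) {u v : S} (h : u ≠ v) (h2 : Λ.M u v ≠ 2) :
    cc Λ u v < 0 := by
  have h1 := Λ.offDiag u v h
  rw [cc]
  rcases Nat.eq_zero_or_pos (Λ.M u v) with h0 | hpos
  · rw [h0]; norm_num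
  · have h3 : 3 ≤ Λ.M u v := by omega
    have hcos : 0 < Real.cos (Real.pi / (Λ.M u v : ℕ)) := by
      apply Real.cos_pos_of_mem_Ioo
      constructor
      · have : 0 ≤ Real.pi / (Λ.M u v : ℕ) := by positivity
        linarith [Real.pi_pos]
      · rw [div_lt_div_iff₀ (by exact_mod_cast hpos) (by norm_num)]
        have : (3:ℝ) ≤ (Λ.M u v : ℕ) := by exact_mod_cast h3
        nlinarith [Real.pi_pos]
    linarith

lemma cc_sq_lt (Λ : CoxDiagram S) {u v : S} (h : u ≠ v) (h0 : Λ.M u v ≠ 0) :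
    (cc Λ u v) ^ 2 < 4 := by
  have h1 := Λ.offDiag u v h
  have h2 : 2 ≤ Λ.M u v := by omega
  have hx0 : (0:ℝ) < Real.pi / (Λ.M u v : ℕ) := by
    apply div_pos Real.pi_pos
    exact_mod_cast Nat.pos_of_ne_zero h0
  have hcos1 : Real.cos (Real.pi / (Λ.M u v : ℕ)) < 1 := by
    rcases lt_or_eq_of_le (Real.cos_le_one (Real.pi / (Λ.M u v : ℕ))) with h' | h'
    · exact h'
    · exfalso
      have hlt : Real.pi / (Λ.M u v : ℕ) < 2 * Real.pi := by
        have : Real.pi / (Λ.M u v : ℕ) ≤ Real.pi / 2 := by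
          rw [div_le_div_iff₀ (by exact_mod_cast Nat.pos_of_ne_zero h0) (by norm_num)]
          have : (2:ℝ) ≤ (Λ.M u v : ℕ) := by exact_mod_cast h2
          nlinarith [Real.pi_pos]
        linarith [Real.pi_pos]
      have := (Real.cos_eq_one_iff_of_lt_of_lt (by linarith) hlt).mp h'
      linarith
  have hcos0 : 0 ≤ Real.cos (Real.pi / (Λ.M u v : ℕ)) := by
    apply Real.cos_nonneg_of_mem_Icc
    constructor
    · linarith [Real.pi_pos]
    · rw [div_le_div_iff₀ (by exact_mod_cast Nat.pos_of_ne_zero h0) (by norm_num)]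
      have : (2:ℝ) ≤ (Λ.M u v : ℕ) := by exact_mod_cast h2
      nlinarith [Real.pi_pos]
  rw [cc]
  nlinarith

end Aux
section Rep

open Real Finset

variable [Fintype S] (Λ : CoxDiagram S) (r : S)

/-- linear functional of the reflection `u` (with affine trigger at `r`) -/
noncomputable def fv (u : S) (z : (S → ℝ) × ℝ) : ℝ :=
  (∑ v, cc Λ u v * z.1 v) + ee r u * z.2

/-- underlying function of the reflection -/
noncomputable def sigFun (u : S) (z : (S → ℝ) × ℝ) : (S → ℝ) × ℝ :=
  (fun w => z.1 w - fv Λ r u z * ee u w, z.2)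

lemma fv_sigFun (u' u : S) (z : (S → ℝ) × ℝ) :
    fv Λ r u' (sigFun Λ r u z) = fv Λ r u' z - fv Λ r u z * cc Λ u' u := by
  unfold fv sigFun
  simp only
  have : (∑ v, cc Λ u' v * (z.1 v - fv Λ r u z * ee u v)) =
      (∑ v, cc Λ u' v * z.1 v) - fv Λ r u z * (∑ v, cc Λ u' v * ee u v) := by
    rw [Finset.mul_sum, ← Finset.sum_sub_distrib]
    congr 1; funext v; ring
  rw [this, sum_mul_ee (fun v => cc Λ u' v) u]
  unfold fv
  ring

lemma sigFun_fst (u : S) (z : (S → ℝ) × ℝ) (w : S) :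
    (sigFun Λ r u z).1 w = z.1 w - fv Λ r u z * ee u w := rfl

lemma sigFun_snd (u : S) (z : (S → ℝ) × ℝ) : (sigFun Λ r u z).2 = z.2 := rfl

lemma sig_invol (u : S) : Function.Involutive (sigFun Λ r u) := by
  intro z
  have h := fv_sigFun Λ r u u z
  rw [cc_self] at h
  apply Prod.ext
  · funext w
    rw [sigFun_fst, sigFun_fst, h]
    ring
  · rfl

/-- the reflection as a permutation -/
noncomputable def sig (u : S) : Equiv.Perm ((S → ℝ) × ℝ) :=
  (sig_invol Λ r u).toPerm

lemma sig_apply (u : S) (z : (S → ℝ) × ℝ) : sig Λ r u z = sigFun Λ r u z := rfl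

lemma sig_mul_self (u : S) : sig Λ r u * sig Λ r u = 1 := by
  apply Equiv.ext
  intro z
  rw [Equiv.Perm.mul_apply, Equiv.Perm.one_apply, sig_apply, sig_apply]
  exact sig_invol Λ r u z

end Rep
section Braid

open Real Finset

variable [Fintype S] (Λ : CoxDiagram S) (r : S)

/-- embedding of the plane over the base point `z` -/
noncomputable def pl (u v : S) (z : (S → ℝ) × ℝ) (p : ℝ × ℝ) : (S → ℝ) × ℝ :=
  (fun w => z.1 w + p.1 * ee u w + p.2 * ee v w, z.2)

lemma fv_pl (u' u v : S) (z : (S → ℝ) × ℝ) (p : ℝ × ℝ) :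
    fv Λ r u' (pl u v z p) = fv Λ r u' z + p.1 * cc Λ u' u + p.2 * cc Λ u' v := by
  unfold fv pl
  simp only
  have : (∑ w, cc Λ u' w * (z.1 w + p.1 * ee u w + p.2 * ee v w)) =
      (∑ w, cc Λ u' w * z.1 w) + p.1 * (∑ w, cc Λ u' w * ee u w)
        + p.2 * (∑ w, cc Λ u' w * ee v w) := by
    rw [Finset.mul_sum, Finset.mul_sum, ← Finset.sum_add_distrib, ← Finset.sum_add_distrib]
    congr 1; funext w; ring
  rw [this, sum_mul_ee (fun w => cc Λ u' w) u, sum_mul_ee (fun w => cc Λ u' w) v]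
  ring

/-- the 2-dimensional step map -/
noncomputable def step (c : ℝ) (p : ℝ × ℝ) : ℝ × ℝ :=
  ((c ^ 2 - 1) * p.1 + c * p.2, -c * p.1 - p.2)

lemma sig_pl_left {u v : S} (hne : u ≠ v) (z : (S → ℝ) × ℝ) (hz : fv Λ r u z = 0)
    (p : ℝ × ℝ) :
    sig Λ r u (pl u v z p) = pl u v z (-p.1 - cc Λ u v * p.2, p.2) := by
  have hf : fv Λ r u (pl u v z p) = 2 * p.1 + cc Λ u v * p.2 := by
    rw [fv_pl, hz, cc_self]; ring
  rw [sig_apply]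
  apply Prod.ext
  · funext w
    rw [sigFun_fst, hf]
    show (pl u v z p).1 w - _ = (pl u v z _).1 w
    unfold pl
    simp only
    ring
  · rfl

lemma sig_pl_right {u v : S} (hne : u ≠ v) (z : (S → ℝ) × ℝ) (hz : fv Λ r v z = 0)
    (p : ℝ × ℝ) :
    sig Λ r v (pl u v z p) = pl u v z (p.1, -p.2 - cc Λ u v * p.1) := by
  have hf : fv Λ r v (pl u v z p) = cc Λ u v * p.1 + 2 * p.2 := by
    rw [fv_pl, hz, cc_self, cc_symm]; ring
  rw [sig_apply]
  apply Prod.ext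
  · funext w
    rw [sigFun_fst, hf]
    show (pl u v z p).1 w - _ = (pl u v z _).1 w
    unfold pl
    simp only
    ring
  · rfl

lemma sigsig_pl {u v : S} (hne : u ≠ v) (z : (S → ℝ) × ℝ)
    (hu : fv Λ r u z = 0) (hv : fv Λ r v z = 0) (p : ℝ × ℝ) :
    (sig Λ r u * sig Λ r v) (pl u v z p) = pl u v z (step (cc Λ u v) p) := by
  rw [Equiv.Perm.mul_apply, sig_pl_right Λ r hne z hv, sig_pl_left Λ r hne z hu]
  congr 1
  unfold step
  apply Prod.ext <;> (simp only; ring)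

lemma pow_sigsig_pl {u v : S} (hne : u ≠ v) (z : (S → ℝ) × ℝ)
    (hu : fv Λ r u z = 0) (hv : fv Λ r v z = 0) :
    ∀ (j : ℕ) (p : ℝ × ℝ),
      ((sig Λ r u * sig Λ r v) ^ j) (pl u v z p) = pl u v z ((step (cc Λ u v))^[j] p) := by
  intro j
  induction j with
  | zero => intro p; simp
  | succ n ih =>
    intro p
    rw [pow_succ, Equiv.Perm.mul_apply, sigsig_pl Λ r hne z hu hv,
      Function.iterate_succ_apply, ih]

lemma step_lin (c a : ℝ) (p q : ℝ × ℝ) :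
    step c (a • p - q) = a • step c p - step c q := by
  unfold step
  apply Prod.ext <;>
    simp [Prod.smul_fst, Prod.smul_snd, Prod.fst_sub, Prod.snd_sub, smul_eq_mul] <;> ring

lemma step_iterate_lin (c a : ℝ) (j : ℕ) (p q : ℝ × ℝ) :
    (step c)^[j] (a • p - q) = a • (step c)^[j] p - (step c)^[j] q := by
  induction j generalizing p q with
  | zero => simp
  | succ n ih => rw [Function.iterate_succ_apply, Function.iterate_succ_apply,
      Function.iterate_succ_apply, step_lin, ih]

lemma step_sq (c : ℝ) (p : ℝ × ℝ) :
    step c (step c p) = (c ^ 2 - 2) • step c p - p := by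
  unfold step
  apply Prod.ext <;>
    simp [Prod.smul_fst, Prod.smul_snd, Prod.fst_sub, Prod.snd_sub, smul_eq_mul] <;> ring

lemma step_order {m : ℕ} (hm : 2 ≤ m) {c : ℝ}
    (hc : c = -2 * Real.cos (Real.pi / m)) (p : ℝ × ℝ) :
    (step c)^[m] p = p := by
  rcases eq_or_lt_of_le hm with h2 | h3
  · -- m = 2 : c = 0 and step is minus identity
    have hc0 : c = 0 := by
      rw [hc, ← h2]
      norm_num [Real.cos_pi_div_two]
    subst hc0
    rw [← h2]
    show step 0 (step 0 p) = p
    unfold step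
    apply Prod.ext <;> simp
  · -- m ≥ 3
    have hm3 : 3 ≤ m := h3
    have hmpos : (0:ℝ) < m := by positivity
    set θ := 2 * Real.pi / m with hθ
    have hθpos : 0 < θ := by positivity
    have hθlt : θ < Real.pi := by
      rw [hθ, div_lt_iff₀ hmpos]
      have : (3:ℝ) ≤ m := by exact_mod_cast hm3
      nlinarith [Real.pi_pos]
    have hsin : Real.sin θ ≠ 0 := ne_of_gt (Real.sin_pos_of_pos_of_lt_pi hθpos hθlt)
    have htrace : c ^ 2 - 2 = 2 * Real.cos θ := by
      have h2θ : θ = 2 * (Real.pi / m) := by rw [hθ]; ring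
      rw [hc, h2θ, Real.cos_two_mul]
      ring
    -- the sine-quotient sequence
    set sf : ℝ → ℝ := fun x => Real.sin (x * θ) / Real.sin θ with hsf
    have hsf0 : sf 0 = 0 := by simp [hsf]
    have hsf1 : sf 1 = 1 := by
      simp only [hsf, one_mul]
      exact div_self hsin
    have hsfm1 : sf (-1) = -1 := by
      simp only [hsf]
      rw [neg_one_mul, Real.sin_neg]
      rw [neg_div, div_self hsin]
    have hrec : ∀ x : ℝ, sf (x + 1) = (c ^ 2 - 2) * sf x - sf (x - 1) := by
      intro x
      have e1 : (x + 1) * θ = x * θ + θ := by ring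
      have e2 : (x - 1) * θ = x * θ - θ := by ring
      simp only [hsf, e1, e2, Real.sin_add, Real.sin_sub, htrace]
      field_simp
      ring
    set E : ℕ → ℝ × ℝ := fun j => (step c)^[j] p with hE
    have hErec : ∀ j : ℕ, E (j + 2) = (c ^ 2 - 2) • E (j + 1) - E j := by
      intro j
      have : E (j + 2) = (step c)^[j] ((step c)^[2] p) := by
        rw [hE]
        simp only
        rw [← Function.iterate_add_apply]
      rw [this]
      have h2 : (step c)^[2] p = (c ^ 2 - 2) • step c p - p := by
        show step c (step c p) = _
        exact step_sq c p
      rw [h2, step_iterate_lin]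
      have : (step c)^[j] (step c p) = E (j + 1) := by
        rw [hE]; simp only
        rw [← Function.iterate_succ_apply]
      rw [this]
    have key : ∀ j : ℕ, E (j + 1) = sf ((j:ℝ) + 1) • E 1 - sf (j:ℝ) • E 0 ∧
        E j = sf (j:ℝ) • E 1 - sf ((j:ℝ) - 1) • E 0 := by
      intro j
      induction j with
      | zero =>
        constructor
        · norm_num [hsf1, hsf0]
        · norm_num [hsf0, hsfm1]
      | succ n ih =>
        obtain ⟨ih1, ih2⟩ := ih
        have ha : sf ((n:ℝ) + 1 + 1) = (c ^ 2 - 2) * sf ((n:ℝ) + 1) - sf (n:ℝ) := by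
          have h := hrec ((n:ℝ) + 1)
          rwa [show (n:ℝ) + 1 - 1 = (n:ℝ) by ring] at h
        have hb : sf ((n:ℝ) + 1) = (c ^ 2 - 2) * sf (n:ℝ) - sf ((n:ℝ) - 1) := hrec (n:ℝ)
        constructor
        · show E (n + 2) = _
          push_cast
          rw [hErec n, ih1, ih2, ha, hb]
          module
        · push_cast
          rw [show ((n:ℝ) + 1 - 1) = (n:ℝ) by ring]
          exact ih1

    have hfin := (key m).2
    have hsfm : sf (m:ℝ) = 0 := by
      have : (m:ℝ) * θ = 2 * Real.pi := by
        rw [hθ]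
        field_simp
      simp only [hsf, this]
      rw [Real.sin_two_pi, zero_div]
    have hsfm1' : sf ((m:ℝ) - 1) = -1 := by
      have : ((m:ℝ) - 1) * θ = 2 * Real.pi - θ := by
        rw [hθ]
        field_simp
      simp only [hsf, this]
      rw [Real.sin_sub, Real.sin_two_pi, Real.cos_two_pi]
      field_simp
      ring
    rw [hsfm, hsfm1'] at hfin
    have : E m = E 0 := by
      rw [hfin]
      module
    rw [hE] at this
    simpa using this

end Braid
section Hom

open Real Finset

variable [Fintype S] (Λ : CoxDiagram S) (r : S)

lemma decomp {u v : S} (hne : u ≠ v) (h0 : Λ.M u v ≠ 0) (z : (S → ℝ) × ℝ) :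
    ∃ (z₀ : (S → ℝ) × ℝ) (p : ℝ × ℝ),
      z = pl u v z₀ p ∧ fv Λ r u z₀ = 0 ∧ fv Λ r v z₀ = 0 := by
  set c := cc Λ u v with hc
  have hD : 4 - c ^ 2 ≠ 0 := by
    have := cc_sq_lt Λ hne h0
    rw [← hc] at this
    intro h
    nlinarith
  set F1 := fv Λ r u z with hF1
  set F2 := fv Λ r v z with hF2
  set a := (2 * F1 - c * F2) / (4 - c ^ 2) with ha
  set b := (2 * F2 - c * F1) / (4 - c ^ 2) with hb
  refine ⟨pl u v z (-a, -b), (a, b), ?_, ?_, ?_⟩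
  · apply Prod.ext
    · funext w
      show z.1 w = (pl u v z (-a, -b)).1 w + a * ee u w + b * ee v w
      unfold pl
      simp only
      ring
    · rfl
  · rw [fv_pl, ← hF1]
    show F1 + -a * cc Λ u u + -b * cc Λ u v = 0
    rw [cc_self, ← hc, ha, hb]
    field_simp
    ring
  · rw [fv_pl, ← hF2]
    show F2 + -a * cc Λ v u + -b * cc Λ v v = 0
    rw [cc_self, cc_symm, ← hc, ha, hb]
    field_simp
    ring

lemma braid_pow (u v : S) (h0 : Λ.M u v ≠ 0) :
    (sig Λ r u * sig Λ r v) ^ (Λ.M u v) = 1 := by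
  rcases eq_or_ne u v with rfl | hne
  · rw [Λ.diag, pow_one, sig_mul_self]
  · have h1 := Λ.offDiag u v hne
    have hm : 2 ≤ Λ.M u v := by omega
    apply Equiv.ext
    intro z
    obtain ⟨z₀, p, rfl, hu, hv⟩ := decomp Λ r hne h0 z
    rw [pow_sigsig_pl Λ r hne z₀ hu hv,
      step_order (c := cc Λ u v) hm (by rw [cc]), Equiv.Perm.one_apply]

/-- alternating products in a group -/
def gAW {G : Type*} [Group G] (x y : G) : ℕ → G
  | 0 => 1
  | n + 1 => x * gAW y x n

lemma lift_altWord {G : Type*} [Group G] (F : S → G) (a b : S) (n : ℕ) :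
    FreeGroup.lift F (altWord a b n) = gAW (F a) (F b) n := by
  induction n generalizing a b with
  | zero => simp [altWord, gAW]
  | succ n ih => rw [altWord, gAW, map_mul, FreeGroup.lift_apply_of, ih]

lemma gAW_eq {G : Type*} [Group G] (x y : G) (hx : x * x = 1) (hy : y * y = 1) :
    ∀ n, gAW x y n = (x * y) ^ n * gAW y x n := by
  intro n
  induction n generalizing x y with
  | zero => simp [gAW]
  | succ n ih =>
    rw [gAW, gAW, ih y x hy hx]
    have hsc : SemiconjBy x (y * x) (x * y) := (mul_assoc x y x).symm
    have hpow := (hsc.pow_right n).eq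
    calc x * ((y * x) ^ n * gAW x y n)
        = x * (y * x) ^ n * gAW x y n := (mul_assoc _ _ _).symm
      _ = (x * y) ^ n * x * gAW x y n := by rw [hpow]
      _ = (x * y) ^ n * (x * (y * y)) * gAW x y n := by rw [hy, mul_one]
      _ = (x * y) ^ (n + 1) * (y * gAW x y n) := by rw [pow_succ]; group

/-- the representation of the Artin group -/
noncomputable def phi : ArtinGroup Λ →* Equiv.Perm ((S → ℝ) × ℝ) :=
  PresentedGroup.toGroup (f := sig Λ r) (by
    rintro w ⟨a, b, h0, rfl⟩
    rw [map_mul, map_inv, lift_altWord, lift_altWord]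
    have hinva : sig Λ r a * sig Λ r a = 1 := sig_mul_self Λ r a
    have hinvb : sig Λ r b * sig Λ r b = 1 := sig_mul_self Λ r b
    rw [gAW_eq _ _ hinva hinvb, braid_pow Λ r a b h0, one_mul, mul_inv_cancel])

lemma phi_gen (u : S) : phi Λ r (Λ.gen u) = sig Λ r u :=
  PresentedGroup.toGroup.of _

end Hom
section Invariants

open Real Finset

variable [Fintype S] (Λ : CoxDiagram S) (r : S)

/-- the special point fixed by the parabolic avoiding `r` -/
noncomputable def qv : (S → ℝ) × ℝ := (fun _ => 0, 1)

lemma fv_qv (u : S) : fv Λ r u (qv (S := S)) = ee r u := by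
  unfold fv qv
  simp

lemma sig_qv {u : S} (h : u ≠ r) : sig Λ r u (qv (S := S)) = qv := by
  rw [sig_apply]
  apply Prod.ext
  · funext w
    rw [sigFun_fst, fv_qv, ee_of_ne h]
    simp
  · rfl

lemma phi_fix_qv {x : ArtinGroup Λ} (hx : x ∈ Λ.parab ({r}ᶜ)) :
    phi Λ r x (qv (S := S)) = qv := by
  unfold parab at hx
  induction hx using Subgroup.closure_induction with
  | mem g hg =>
    obtain ⟨u, hu, rfl⟩ := hg
    rw [phi_gen]
    exact sig_qv Λ r (by simpa using hu)
  | one => rw [map_one, Equiv.Perm.one_apply]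
  | mul g1 g2 h1 h2 ih1 ih2 => rw [map_mul, Equiv.Perm.mul_apply, ih2, ih1]
  | inv g hg ih =>
    conv_lhs => rw [← ih]
    rw [← Equiv.Perm.mul_apply, ← map_mul, inv_mul_cancel, map_one, Equiv.Perm.one_apply]

lemma phi_keep {t : S} {x : ArtinGroup Λ} (hx : x ∈ Λ.parab ({t}ᶜ)) :
    ∀ z : (S → ℝ) × ℝ, (phi Λ r x z).1 t = z.1 t := by
  unfold parab at hx
  induction hx using Subgroup.closure_induction with
  | mem g hg =>
    intro z
    obtain ⟨u, hu, rfl⟩ := hg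
    have hut : t ≠ u := fun h => (show u ≠ t by simpa using hu) h.symm
    rw [phi_gen, sig_apply, sigFun_fst, ee_of_ne hut]
    ring
  | one => intro z; rw [map_one, Equiv.Perm.one_apply]
  | mul g1 g2 h1 h2 ih1 ih2 =>
    intro z
    rw [map_mul, Equiv.Perm.mul_apply, ih1, ih2]
  | inv g hg ih =>
    intro z
    have := ih (phi Λ r g⁻¹ z)
    rw [← Equiv.Perm.mul_apply, ← map_mul, mul_inv_cancel, map_one,
      Equiv.Perm.one_apply] at this
    exact this.symm

end Invariants
section Path

open Real Finset

variable [Fintype S] (Λ : CoxDiagram S) (r : S)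

lemma path_calc : ∀ (L : List S) (hne : L ≠ []), L.Nodup → L.Chain' Λ.graph.Adj →
    L.getLast hne = r →
    ∃ coef : S → ℝ, (∀ w ∈ L, coef w < 0) ∧ (∀ w, w ∉ L → coef w = 0) ∧
      List.foldr (fun u z => sig Λ r u z) (qv (S := S)) L = (coef, (1:ℝ)) := by
  intro L
  induction L with
  | nil => intro hne; exact absurd rfl hne
  | cons u L' IH =>
    intro hne hnd hch hlast
    cases L' with
    | nil =>
      have hur : u = r := hlast
      subst hur
      refine ⟨fun w => -(ee u w), ?_, ?_, ?_⟩
      · intro w hw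
        beta_reduce
        rcases List.mem_singleton.mp hw with rfl
        rw [ee_self]; norm_num
      · intro w hw
        beta_reduce
        rw [ee_of_ne (by simpa using hw)]; norm_num
      · show sig Λ u u (qv (S := S)) = _
        rw [sig_apply]
        apply Prod.ext
        · funext w
          rw [sigFun_fst, fv_qv, ee_self]
          show (0:ℝ) - 1 * ee u w = -(ee u w)
          ring
        · rfl
    | cons u1 L'' =>
      have hne' : u1 :: L'' ≠ [] := List.cons_ne_nil _ _
      have hnd' : (u1 :: L'').Nodup := (List.nodup_cons.mp hnd).2
      have hu_not : u ∉ u1 :: L'' := (List.nodup_cons.mp hnd).1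
      have hch' : (u1 :: L'').Chain' Λ.graph.Adj := hch.tail
      have hadj : Λ.graph.Adj u u1 := (List.isChain_cons_cons.mp hch).1
      have hlast' : (u1 :: L'').getLast hne' = r := by
        rw [← hlast]
        exact (List.getLast_cons hne').symm
      obtain ⟨coef, hneg, hzero, heq⟩ := IH hne' hnd' hch' hlast'
      have hr_mem : r ∈ u1 :: L'' := hlast' ▸ List.getLast_mem hne'
      have hur : u ≠ r := fun h => hu_not (h ▸ hr_mem)
      set F := fv Λ r u ((coef, (1:ℝ)) : (S → ℝ) × ℝ) with hF
      have hFpos : 0 < F := by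
        rw [hF]
        unfold fv
        rw [ee_of_ne hur]
        simp only [zero_mul, add_zero]
        apply Finset.sum_pos'
        · intro v _
          by_cases hv : v ∈ u1 :: L''
          · have huv : u ≠ v := fun h => hu_not (h ▸ hv)
            nlinarith [cc_nonpos Λ huv, (hneg v hv).le]
          · rw [hzero v hv, mul_zero]
        · refine ⟨u1, Finset.mem_univ _, ?_⟩
          exact mul_pos_of_neg_of_neg (cc_neg Λ hadj.1 hadj.2) (hneg u1 (by simp))
      refine ⟨fun w => coef w - F * ee u w, ?_, ?_, ?_⟩
      · intro w hw
        beta_reduce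
        rcases List.mem_cons.mp hw with rfl | hw'
        · rw [hzero w hu_not, ee_self]
          simpa using hFpos
        · have hwu : w ≠ u := fun h => hu_not (h ▸ hw')
          rw [ee_of_ne hwu, mul_zero, sub_zero]
          exact hneg w hw'
      · intro w hw
        beta_reduce
        have h1 : w ∉ u1 :: L'' := fun h => hw (List.mem_cons_of_mem _ h)
        have h2 : w ≠ u := fun h => hw (h ▸ List.mem_cons_self)
        rw [hzero w h1, ee_of_ne h2, mul_zero, sub_zero]
      · show sig Λ r u (List.foldr _ (qv (S := S)) (u1 :: L'')) = _
        rw [heq, sig_apply]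
        apply Prod.ext
        · funext w
          rw [sigFun_fst, ← hF]
        · rfl

lemma phi_listProd (L : List S) (z : (S → ℝ) × ℝ) :
    phi Λ r ((L.map (Λ.gen)).prod) z = L.foldr (fun u z => sig Λ r u z) z := by
  induction L with
  | nil => simp
  | cons u L' ih =>
    rw [List.map_cons, List.prod_cons, map_mul, Equiv.Perm.mul_apply, phi_gen,
      List.foldr_cons, ← ih, sig_apply]

lemma listProd_mem_parab {T : Set S} (L : List S) (hL : ∀ u ∈ L, u ∈ T) :
    (L.map (Λ.gen)).prod ∈ Λ.parab T := by
  apply Subgroup.list_prod_mem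
  intro x hx
  rw [List.mem_map] at hx
  obtain ⟨u, hu, rfl⟩ := hx
  exact Subgroup.subset_closure ⟨u, hL u hu, rfl⟩

end Path

/-- Let `Λ` be a Coxeter diagram with vertex set `S` and let
`s, t, r ∈ S` be pairwise distinct vertices such that `t` and `r` lie in the same
connected component of `Λ ∖ {s}`.  Then for all `g, h` in the Artin group with
`g·A_{S∖{s}} ∩ h·A_{S∖{t}} ≠ ∅`, there exists `k` with
`k·A_{S∖{r}} ∩ g·A_{S∖{s}} ≠ ∅` and `k·A_{S∖{r}} ∩ h·A_{S∖{t}} = ∅`. -/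
theorem exists_nonadjacent_coset {S : Type*} [Fintype S] (Λ : CoxDiagram S)
    (s t r : S) (hst : s ≠ t) (hsr : s ≠ r) (htr : t ≠ r)
    (hconn : ConnIn Λ.graph {x : S | x ≠ s} t r) :
    ∀ g h : ArtinGroup Λ,
      (g • (Λ.parab ({s}ᶜ) : Set (ArtinGroup Λ)) ∩
        h • (Λ.parab ({t}ᶜ) : Set (ArtinGroup Λ))).Nonempty →
      ∃ k : ArtinGroup Λ,
        (k • (Λ.parab ({r}ᶜ) : Set (ArtinGroup Λ)) ∩
          g • (Λ.parab ({s}ᶜ) : Set (ArtinGroup Λ))).Nonempty ∧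
        (k • (Λ.parab ({r}ᶜ) : Set (ArtinGroup Λ)) ∩
          h • (Λ.parab ({t}ᶜ) : Set (ArtinGroup Λ))) = ∅ := by
  intro g h hgh
  classical
  -- the induced graph on `S ∖ {s}`
  let G' : SimpleGraph S :=
    { Adj := fun a b => a ≠ s ∧ b ≠ s ∧ Λ.graph.Adj a b
      symm := ⟨fun a b hab => ⟨hab.2.1, hab.1, hab.2.2.symm⟩⟩
      loopless := ⟨fun a ha => Λ.graph.loopless.irrefl a ha.2.2⟩ }
  have hreach : G'.Reachable t r := by
    rw [SimpleGraph.reachable_iff_reflTransGen]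
    exact Relation.ReflTransGen.mono (r := fun u v => u ∈ {x : S | x ≠ s} ∧ v ∈ {x : S | x ≠ s} ∧ Λ.graph.Adj u v) (fun a b hab => ⟨hab.1, hab.2.1, hab.2.2⟩) t r hconn
  obtain ⟨w0⟩ := hreach
  let pth := w0.bypass
  have hp : pth.IsPath := SimpleGraph.Walk.bypass_isPath w0
  set L : List S := pth.support with hL
  have hLne : L ≠ [] := SimpleGraph.Walk.support_ne_nil pth
  have hnd : L.Nodup := hp.support_nodup
  have hch : L.Chain' Λ.graph.Adj :=
    List.IsChain.imp (fun a b hab => hab.2.2) pth.isChain_adj_support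
  have hlast : L.getLast hLne = r := SimpleGraph.Walk.getLast_support pth
  have htL : t ∈ L := pth.start_mem_support
  have hmem_ne_s : ∀ x ∈ L, x ≠ s := by
    have : ∀ {a b : S} (p : G'.Walk a b), a ≠ s → ∀ x ∈ p.support, x ≠ s := by
      intro a b p
      induction p with
      | nil =>
        intro ha x hx
        rw [SimpleGraph.Walk.support_nil, List.mem_singleton] at hx
        exact hx ▸ ha
      | cons hadj q ih =>
        intro ha x hx
        rw [SimpleGraph.Walk.support_cons, List.mem_cons] at hx
        rcases hx with rfl | hx
        · exact ha
        · exact ih hadj.2.1 x hx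
    exact this pth hst.symm
  -- the key element
  set c : ArtinGroup Λ := ((L.map (Λ.gen)).prod) with hc
  have hcs : c ∈ Λ.parab ({s}ᶜ) :=
    listProd_mem_parab Λ L (fun u hu => hmem_ne_s u hu)
  -- the key inequality
  obtain ⟨coef, hneg, _, heq⟩ := path_calc Λ r L hLne hnd hch hlast
  have hkey : (phi Λ r c (qv (S := S))).1 t < 0 := by
    rw [hc, phi_listProd, heq]
    exact hneg t htL
  -- the common point
  obtain ⟨z, hz1, hz2⟩ := hgh
  refine ⟨z * c, ⟨z * c, ?_, ?_⟩, ?_⟩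
  · exact Set.mem_smul_set.mpr ⟨1, SetLike.mem_coe.mpr (one_mem _), mul_one _⟩
  · obtain ⟨y, hy, hyz⟩ := Set.mem_smul_set.mp hz1
    refine Set.mem_smul_set.mpr ⟨y * c, ?_, ?_⟩
    · exact SetLike.mem_coe.mpr (mul_mem (SetLike.mem_coe.mp hy) hcs)
    · rw [smul_eq_mul, ← mul_assoc]
      rw [smul_eq_mul] at hyz
      rw [hyz]
  · rw [Set.eq_empty_iff_forall_notMem]
    rintro x ⟨hx1, hx2⟩
    obtain ⟨ρ, hρ, hρx⟩ := Set.mem_smul_set.mp hx1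
    obtain ⟨τ', hτ', hτ'x⟩ := Set.mem_smul_set.mp hx2
    obtain ⟨τ, hτ, hτz⟩ := Set.mem_smul_set.mp hz2
    rw [smul_eq_mul] at hρx hτ'x hτz
    -- c = (τ⁻¹ * τ') * ρ⁻¹
    have hceq : c = (τ⁻¹ * τ') * ρ⁻¹ := by
      have h1 : h * τ * c * ρ = h * τ' := by
        rw [hτz, hτ'x, ← hρx]
      have h2 : τ * c * ρ = τ' := by
        apply mul_left_cancel (a := h)
        rw [← mul_assoc, ← mul_assoc]
        exact h1
      rw [← h2]
      group
    have hcontr : (phi Λ r c (qv (S := S))).1 t = 0 := by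
      rw [hceq, map_mul, Equiv.Perm.mul_apply]
      rw [phi_fix_qv Λ r (inv_mem (SetLike.mem_coe.mp hρ))]
      rw [phi_keep Λ r (mul_mem (inv_mem (SetLike.mem_coe.mp hτ)) (SetLike.mem_coe.mp hτ'))]
      rfl
    rw [hcontr] at hkey
    exact lt_irrefl 0 hkey

end CoxDiagram
end

section
/- Let (W, S) be a Coxeter system with Coxeter matrix m. Let t₁, t₂, …, t_k ∈ S (k ≥ 1) be pairwise distinct generators such that for each 1 ≤ i ≤ k−1, m(tᵢ, tᵢ₊₁) ≥ 3 or m(tᵢ, tᵢ₊₁) = ∞ (that is, consecutive generators do not commute, so t₁, …, t_k is an embedded edge path in the Coxeter diagram). Set g = t₁t₂⋯t_k ∈ W. Then the coset g·W_{S∖{t_k}} is disjoint from the standard parabolic subgroup W_{S∖{t₁}}; that is, g·W_{S∖{t_k}} ∩ W_{S∖{t₁}} = ∅, where for T ⊆ S, W_T denotes the subgroup of W generated by T. -/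
open scoped Pointwise

namespace CoxProof

open Real

variable {B : Type*}

/-! ### The bilinear form coefficients -/

noncomputable def km (M : CoxeterMatrix B) (i j : B) : ℝ :=
  if M i j = 0 then -1 else -Real.cos (Real.pi / M i j)

theorem km_symm (M : CoxeterMatrix B) (i j : B) : km M i j = km M j i := by
  unfold km; rw [M.symmetric i j]

theorem km_diag (M : CoxeterMatrix B) (i : B) : km M i i = 1 := by
  unfold km
  rw [M.diagonal i]
  norm_num

theorem km_nonpos (M : CoxeterMatrix B) {i j : B} (h : i ≠ j) : km M i j ≤ 0 := by
  unfold km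
  split_ifs with h0
  · norm_num
  · have h2 : 2 ≤ M i j := by
      have := M.off_diagonal i j h
      omega
    have : 0 ≤ Real.cos (Real.pi / M i j) := by
      apply Real.cos_nonneg_of_mem_Icc
      constructor
      · have : 0 ≤ Real.pi / M i j := by positivity
        linarith [Real.pi_pos]
      · rw [div_le_div_iff₀ (by positivity) (by norm_num)]
        have : (2:ℝ) ≤ (M i j : ℝ) := by exact_mod_cast h2
        nlinarith [Real.pi_pos]
    linarith

theorem km_le_neg_half (M : CoxeterMatrix B) {i j : B}
    (h : M i j = 0 ∨ 3 ≤ M i j) : km M i j ≤ -(1/2) := by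
  unfold km
  rcases h with h | h
  · rw [if_pos h]; norm_num
  · rw [if_neg (by omega)]
    have h3 : (3:ℝ) ≤ (M i j : ℝ) := by exact_mod_cast h
    have hc : Real.cos (Real.pi / 3) ≤ Real.cos (Real.pi / M i j) := by
      apply Real.cos_le_cos_of_nonneg_of_le_pi
      · positivity
      · rw [div_le_iff₀ (by norm_num)]; nlinarith [Real.pi_pos]
      · apply div_le_div_of_nonneg_left Real.pi_pos.le (by norm_num) h3
    rw [Real.cos_pi_div_three] at hc
    linarith

/-! ### The geometric representation -/

noncomputable def al (i : B) : B →₀ ℝ := Finsupp.single i 1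

/-- Pairing with the simple root `α c`. -/
noncomputable def prl (M : CoxeterMatrix B) (c : B) : (B →₀ ℝ) →ₗ[ℝ] ℝ :=
  Finsupp.linearCombination ℝ (fun b => km M b c)

@[simp] theorem prl_al (M : CoxeterMatrix B) (c b : B) : prl M c (al b) = km M b c := by
  unfold prl al
  simp [Finsupp.linearCombination_single]


/-- The reflection in the simple root `α c`. -/
noncomputable def sg (M : CoxeterMatrix B) (c : B) : Module.End ℝ (B →₀ ℝ) :=
  LinearMap.id - (prl M c).smulRight ((2:ℝ) • al c)

theorem sg_apply (M : CoxeterMatrix B) (c : B) (x : B →₀ ℝ) :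
    sg M c x = x - (2 * prl M c x) • al c := by
  unfold sg
  simp [LinearMap.smulRight_apply, smul_smul, mul_comm]

theorem prl_sg (M : CoxeterMatrix B) (c d : B) (x : B →₀ ℝ) :
    prl M d (sg M c x) = prl M d x - 2 * prl M c x * km M c d := by
  rw [sg_apply, map_sub, map_smul, prl_al, smul_eq_mul]

theorem sg_sg (M : CoxeterMatrix B) (c : B) (x : B →₀ ℝ) :
    sg M c (sg M c x) = x := by
  rw [sg_apply, sg_apply M c x, map_sub, map_smul, prl_al, km_diag, smul_eq_mul]
  module

theorem sg_apply_ne (M : CoxeterMatrix B) (c : B) (x : B →₀ ℝ) {b : B} (h : b ≠ c) :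
    (sg M c x) b = x b := by
  classical
  rw [sg_apply]
  rw [Finsupp.sub_apply, Finsupp.smul_apply]
  unfold al
  rw [Finsupp.single_apply, if_neg (fun hh => h hh.symm)]
  simp




/-! ### 2D dynamics -/

/-- The linear part of `sg i ∘ sg j` on the coordinates `(i, j)`. -/
def Lf (k : ℝ) (p : ℝ × ℝ) : ℝ × ℝ :=
  ((4*k^2-1)*p.1 + 2*k*p.2, -2*k*p.1 - p.2)

theorem Lf_Lf (k : ℝ) (p : ℝ × ℝ) : Lf k (Lf k p) = (4*k^2-2) • Lf k p - p := by
  unfold Lf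
  ext <;> simp [Prod.smul_def] <;> ring

theorem Lf_smul (k c : ℝ) (p : ℝ × ℝ) : Lf k (c • p) = c • Lf k p := by
  unfold Lf; ext <;> simp [Prod.smul_def] <;> ring

theorem Lf_sub (k : ℝ) (p q : ℝ × ℝ) : Lf k (p - q) = Lf k p - Lf k q := by
  unfold Lf; ext <;> simp <;> ring

noncomputable def qs (θ : ℝ) (r : ℕ) : ℝ := Real.sin (2*r*θ) / Real.sin (2*θ)

theorem qs_cast (θ : ℝ) (r : ℕ) (x : ℝ) (h : (r:ℝ) = x) :
    qs θ r = Real.sin (2*x*θ) / Real.sin (2*θ) := by rw [qs, h]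

theorem Lf_iterate_eq {m : ℕ} (hm : 3 ≤ m) (n : ℕ) (p : ℝ × ℝ) :
    (Lf (-Real.cos (Real.pi / m)))^[n+1] p =
      qs (Real.pi/m) (n+1) • Lf (-Real.cos (Real.pi / m)) p
      - qs (Real.pi/m) n • p := by
  have hmpos : (0:ℝ) < m := by positivity
  set θ := Real.pi / m with hθ
  have hθpos : 0 < θ := by positivity
  have h3 : (3:ℝ) ≤ (m:ℝ) := by exact_mod_cast hm
  have hθle : θ ≤ Real.pi / 3 :=
    div_le_div_of_nonneg_left Real.pi_pos.le (by norm_num) h3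
  have hθlt : 2*θ < Real.pi := by
    have : 2 * θ ≤ 2 * (Real.pi / 3) := by linarith
    linarith [Real.pi_pos]
  have hs2 : 0 < Real.sin (2*θ) := Real.sin_pos_of_pos_of_lt_pi (by linarith) hθlt
  set k := -Real.cos θ with hk
  have hrec : ∀ r : ℕ, qs θ (r+2) = (4*k^2-2) * qs θ (r+1) - qs θ r := by
    intro r
    have hcos2 : 4*k^2-2 = 2 * Real.cos (2*θ) := by
      rw [hk, Real.cos_two_mul]; ring
    have hsin : Real.sin (2*((r:ℝ)+2)*θ) =
        2 * Real.cos (2*θ) * Real.sin (2*((r:ℝ)+1)*θ) - Real.sin (2*(r:ℝ)*θ) := by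
      have e1 : 2*((r:ℝ)+2)*θ = 2*((r:ℝ)+1)*θ + 2*θ := by ring
      have e2 : 2*(r:ℝ)*θ = 2*((r:ℝ)+1)*θ - 2*θ := by ring
      rw [e1, e2, Real.sin_add, Real.sin_sub]
      ring
    rw [qs_cast θ (r+2) ((r:ℝ)+2) (by push_cast; ring),
        qs_cast θ (r+1) ((r:ℝ)+1) (by push_cast; ring), qs]
    rw [hsin, hcos2]
    field_simp
  induction n generalizing p with
  | zero =>
    have h1 : qs θ 1 = 1 := by
      rw [qs_cast θ 1 1 (by norm_num)]
      rw [mul_one]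
      exact div_self (ne_of_gt hs2)
    have h0 : qs θ 0 = 0 := by rw [qs]; simp
    show (Lf k)^[1] p = qs θ 1 • Lf k p - qs θ 0 • p
    rw [h1, h0]
    simp
  | succ n ih =>
    show (Lf k)^[n+1+1] p = qs θ (n+2) • Lf k p - qs θ (n+1) • p
    have hstep : (Lf k)^[n+1+1] p = (Lf k)^[n+1] (Lf k p) := by
      rw [Function.iterate_succ_apply]
    rw [hstep, ih (Lf k p), Lf_Lf, hrec n]
    ext <;> simp [Prod.smul_def, Lf] <;> ring

theorem Lf_iterate_id {m : ℕ} (hm : 2 ≤ m) (p : ℝ × ℝ) :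
    (Lf (-Real.cos (Real.pi / m)))^[m] p = p := by
  rcases eq_or_lt_of_le hm with h2 | h3
  · -- m = 2
    have : Real.cos (Real.pi / m) = 0 := by
      rw [← h2]; push_cast; rw [Real.cos_pi_div_two]
    rw [this, ← h2]
    show Lf (-0) (Lf (-0) p) = p
    unfold Lf
    ext <;> simp
  · have hm3 : 3 ≤ m := h3
    obtain ⟨n, rfl⟩ : ∃ n, m = n + 1 := ⟨m - 1, by omega⟩
    rw [Lf_iterate_eq hm3 n p]
    have hne : ((n:ℝ)+1) ≠ 0 := by positivity
    have hcast : ((n+1:ℕ):ℝ) = (n:ℝ)+1 := by push_cast; ring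
    have h3 : (3:ℝ) ≤ ((n:ℝ)+1) := by
      have : ((3:ℕ):ℝ) ≤ ((n+1:ℕ):ℝ) := by exact_mod_cast hm3
      rw [hcast] at this; exact_mod_cast this
    have hθle : Real.pi/((n:ℝ)+1) ≤ Real.pi / 3 :=
      div_le_div_of_nonneg_left Real.pi_pos.le (by norm_num) h3
    have hθpos : 0 < Real.pi/((n:ℝ)+1) := by positivity
    have hlt : 2*(Real.pi/((n:ℝ)+1)) < Real.pi := by linarith [Real.pi_pos]
    have hs2 : Real.sin (2*(Real.pi/((n:ℝ)+1))) ≠ 0 :=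
      ne_of_gt (Real.sin_pos_of_pos_of_lt_pi (by linarith) hlt)
    have hs2' : Real.sin (2*(Real.pi/((n+1:ℕ):ℝ))) ≠ 0 := by rw [hcast]; exact hs2
    have e1 : qs (Real.pi/(n+1:ℕ)) (n+1) = 0 := by
      rw [qs_cast _ (n+1) ((n:ℝ)+1) (by push_cast; ring)]
      have : 2*((n:ℝ)+1)*(Real.pi/((n+1:ℕ):ℝ)) = 2 * Real.pi := by
        rw [hcast]; field_simp
      rw [this, Real.sin_two_pi, zero_div]
    have e2 : qs (Real.pi/(n+1:ℕ)) n = -1 := by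
      rw [qs]
      have : 2*(n:ℝ)*(Real.pi/((n+1:ℕ):ℝ)) = 2*Real.pi - 2*(Real.pi/((n+1:ℕ):ℝ)) := by
        rw [hcast]; field_simp; ring
      rw [this, Real.sin_two_pi_sub, neg_div, div_self hs2']
    rw [e1, e2]
    ext <;> simp



variable {B : Type*}

theorem decomp (M : CoxeterMatrix B) {i j : B} {k : ℝ} (hk : km M i j = k)
    (hk2 : 1 - k^2 ≠ 0) (x : B →₀ ℝ) :
    ∃ (y : B →₀ ℝ) (a b : ℝ), x = y + a • al i + b • al j ∧ prl M i y = 0 ∧ prl M j y = 0 := by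
  set a := (prl M i x - k * prl M j x)/(1-k^2) with ha
  set b := (prl M j x - k * prl M i x)/(1-k^2) with hb
  refine ⟨x - a • al i - b • al j, a, b, by abel, ?_, ?_⟩
  · rw [map_sub, map_sub, map_smul, map_smul, prl_al, prl_al, km_diag]
    rw [km_symm M j i, hk]
    rw [ha, hb]
    field_simp
    linear_combination (-(prl M i x)) * mul_inv_cancel₀ hk2
  · rw [map_sub, map_sub, map_smul, map_smul, prl_al, prl_al, km_diag, hk]
    rw [ha, hb]
    field_simp
    linear_combination (-(prl M j x)) * mul_inv_cancel₀ hk2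

theorem sg_step (M : CoxeterMatrix B) {i j : B} {k : ℝ} (hk : km M i j = k)
    {y : B →₀ ℝ} (hyi : prl M i y = 0) (hyj : prl M j y = 0) (a b : ℝ) :
    sg M i (sg M j (y + a • al i + b • al j)) =
      y + (Lf k (a,b)).1 • al i + (Lf k (a,b)).2 • al j := by
  have h1 : prl M j (y + a • al i + b • al j) = a * k + b := by
    rw [map_add, map_add, map_smul, map_smul, prl_al, prl_al, km_diag, hyj, hk]
    simp [smul_eq_mul]
  rw [sg_apply M j, h1]
  have e1 : (y + a • al i + b • al j) - (2*(a*k+b)) • al j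
      = y + a • al i + (b - 2*(a*k+b)) • al j := by module
  rw [e1]
  have h2 : prl M i (y + a • al i + (b - 2*(a*k+b)) • al j) = a + (b - 2*(a*k+b)) * k := by
    rw [map_add, map_add, map_smul, map_smul, prl_al, prl_al, km_diag, hyi]
    rw [km_symm M j i, hk]
    simp [smul_eq_mul]
  rw [sg_apply M i, h2]
  show _ = y + ((4*k^2-1)*a + 2*k*b) • al i + (-2*k*a - b) • al j
  module

theorem sg_pow (M : CoxeterMatrix B) {i j : B} {k : ℝ} (hk : km M i j = k)
    {y : B →₀ ℝ} (hyi : prl M i y = 0) (hyj : prl M j y = 0) (a b : ℝ) (n : ℕ) :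
    ((sg M i * sg M j)^n) (y + a • al i + b • al j) =
      y + ((Lf k)^[n] (a,b)).1 • al i + ((Lf k)^[n] (a,b)).2 • al j := by
  induction n with
  | zero => simp
  | succ n ih =>
    rw [pow_succ', Module.End.mul_apply, ih, Module.End.mul_apply]
    have := sg_step M hk hyi hyj ((Lf k)^[n] (a,b)).1 ((Lf k)^[n] (a,b)).2
    rw [Function.iterate_succ_apply']
    exact this

theorem sg_order (M : CoxeterMatrix B) {i j : B} (hij : i ≠ j) (hm : M i j ≠ 0) :
    ((sg M i) * (sg M j))^(M i j) = 1 := by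
  have hm2 : 2 ≤ M i j := by
    have := M.off_diagonal i j hij
    omega
  have hmpos : (0:ℝ) < (M i j : ℝ) := by exact_mod_cast Nat.pos_of_ne_zero hm
  set k := km M i j with hk
  have hkval : k = -Real.cos (Real.pi / M i j) := by
    rw [hk]; unfold km; rw [if_neg hm]
  have hcos01 : 0 ≤ Real.cos (Real.pi / M i j) ∧ Real.cos (Real.pi / M i j) < 1 := by
    constructor
    · have := km_nonpos M hij
      rw [← hk] at this
      rw [hkval] at this
      linarith
    · have h0 : (0:ℝ) < Real.pi / M i j := by positivity
      have h2 : Real.pi / (M i j : ℝ) ≤ Real.pi := by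
        rw [div_le_iff₀ hmpos]
        have : (1:ℝ) ≤ (M i j : ℝ) := by exact_mod_cast Nat.one_le_iff_ne_zero.2 hm
        nlinarith [Real.pi_pos]
      calc Real.cos (Real.pi / M i j) < Real.cos 0 :=
            Real.cos_lt_cos_of_nonneg_of_le_pi le_rfl h2 h0
        _ = 1 := Real.cos_zero
  have hk2 : 1 - k^2 ≠ 0 := by
    rw [hkval]
    nlinarith [hcos01.1, hcos01.2]
  refine LinearMap.ext fun x => ?_
  obtain ⟨y, a, b, rfl, hyi, hyj⟩ := decomp M hk.symm hk2 x
  rw [Module.End.one_apply, sg_pow M hk.symm hyi hyj]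
  rw [hkval, Lf_iterate_id hm2]

theorem sg_liftable (M : CoxeterMatrix B) :
    CoxeterMatrix.IsLiftable M (fun c => sg M c) := by
  intro i i'
  rcases eq_or_ne i i' with rfl | hij
  · rw [M.diagonal i, pow_one]
    refine LinearMap.ext fun x => ?_
    rw [Module.End.mul_apply, sg_sg, Module.End.one_apply]
  · rcases eq_or_ne (M i i') 0 with h0 | h0
    · rw [h0, pow_zero]
    · exact sg_order M hij h0

variable {W : Type*} [Group W]

/-- The geometric representation of the Coxeter group. -/
noncomputable def rho (M : CoxeterMatrix B) (cs : CoxeterSystem M W) :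
    W →* Module.End ℝ (B →₀ ℝ) :=
  cs.lift ⟨fun c => sg M c, sg_liftable M⟩

@[simp] theorem rho_simple (M : CoxeterMatrix B) (cs : CoxeterSystem M W) (i : B) :
    rho M cs (cs.simple i) = sg M i := by
  unfold rho
  exact cs.lift_apply_simple (sg_liftable M) i



/-! ### Dihedral subgroup combinatorics -/

open CoxeterSystem

variable {W : Type*} [Group W]

theorem simple_mul_alt (M : CoxeterMatrix B) (cs : CoxeterSystem M W)
    (a b : B) (hab : a ≠ b) (c : B) (hc : c = a ∨ c = b) (n : ℕ) :
    ∃ n' ≤ n+1,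
      cs.simple c * cs.wordProd (alternatingWord a b n) = cs.wordProd (alternatingWord a b n')
      ∨ cs.simple c * cs.wordProd (alternatingWord a b n) = cs.wordProd (alternatingWord b a n') := by
  by_cases h : c = (if Even n then b else a)
  · refine ⟨n+1, le_rfl, Or.inl ?_⟩
    rw [alternatingWord_succ', cs.wordProd_cons, ← h]
  · -- c is the other letter
    have hc' : c = (if Even n then a else b) := by
      rcases Nat.even_or_odd n with hn | hn
      · rw [if_pos hn] at h ⊢
        rcases hc with rfl | rfl
        · rfl
        · exact absurd rfl h
      · rw [if_neg (Nat.not_even_iff_odd.2 hn)] at h ⊢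
        rcases hc with rfl | rfl
        · exact absurd rfl h
        · rfl
    match n with
    | 0 =>
      refine ⟨1, by omega, Or.inr ?_⟩
      simp only [if_pos (Even.zero)] at hc'
      subst hc'
      rw [alternatingWord_succ']
      simp [alternatingWord]
    | (m+1) =>
      refine ⟨m, by omega, Or.inl ?_⟩
      have hhead : c = (if Even m then b else a) := by
        rcases Nat.even_or_odd m with hm | hm
        · rw [if_neg (by simp [Nat.even_add_one, hm])] at hc'
          rw [if_pos hm]; exact hc'
        · rw [if_pos (by simp [Nat.even_add_one, Nat.not_even_iff_odd.2 hm])] at hc'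
          rw [if_neg (Nat.not_even_iff_odd.2 hm)]; exact hc'
      rw [alternatingWord_succ', cs.wordProd_cons, ← hhead, ← mul_assoc,
        cs.simple_mul_simple_self, one_mul]

theorem alt_mul_simple (M : CoxeterMatrix B) (cs : CoxeterSystem M W)
    (a b : B) (hab : a ≠ b) (c : B) (hc : c = a ∨ c = b) (n : ℕ) :
    ∃ n' ≤ n+1,
      cs.wordProd (alternatingWord a b n) * cs.simple c = cs.wordProd (alternatingWord a b n')
      ∨ cs.wordProd (alternatingWord a b n) * cs.simple c = cs.wordProd (alternatingWord b a n') := by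
  rcases hc with rfl | rfl
  · -- appending a : gives alternatingWord b a (n+1)
    refine ⟨n+1, le_rfl, Or.inr ?_⟩
    rw [alternatingWord_succ, cs.wordProd_concat]
  · -- appending b
    match n with
    | 0 =>
      refine ⟨1, by omega, Or.inl ?_⟩
      rw [alternatingWord_succ]
      simp [alternatingWord]
    | (m+1) =>
      refine ⟨m, by omega, Or.inr ?_⟩
      rw [alternatingWord_succ, cs.wordProd_concat, mul_assoc,
        cs.simple_mul_simple_self, mul_one]

/-- The set of lengths of alternating words over `{i, j}` representing `x`. -/
def DSet (M : CoxeterMatrix B) (cs : CoxeterSystem M W) (i j : B) (x : W) : Set ℕ :=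
  {n | x = cs.wordProd (alternatingWord i j n) ∨ x = cs.wordProd (alternatingWord j i n)}

theorem DSet_comm (M : CoxeterMatrix B) (cs : CoxeterSystem M W) (i j : B) (x : W) :
    DSet M cs i j x = DSet M cs j i x := Set.ext fun n => or_comm

theorem zero_mem_DSet_one (M : CoxeterMatrix B) (cs : CoxeterSystem M W) (i j : B) :
    0 ∈ DSet M cs i j (1 : W) := Or.inl (by simp [alternatingWord])

theorem DSet_simple_mul (M : CoxeterMatrix B) (cs : CoxeterSystem M W)
    {i j : B} (hij : i ≠ j) {x : W} {n : ℕ} (hn : n ∈ DSet M cs i j x) :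
    ∃ n' ≤ n + 1, n' ∈ DSet M cs i j (cs.simple i * x) := by
  rcases hn with h | h
  · obtain ⟨n', hn', h'⟩ := simple_mul_alt M cs i j hij i (Or.inl rfl) n
    exact ⟨n', hn', by rw [h]; rcases h' with h' | h' <;> [exact Or.inl h'; exact Or.inr h']⟩
  · obtain ⟨n', hn', h'⟩ := simple_mul_alt M cs j i (Ne.symm hij) i (Or.inr rfl) n
    exact ⟨n', hn', by rw [h]; rcases h' with h' | h' <;> [exact Or.inr h'; exact Or.inl h']⟩

theorem DSet_mul_simple (M : CoxeterMatrix B) (cs : CoxeterSystem M W)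
    {i j : B} (hij : i ≠ j) {x : W} {n : ℕ} (hn : n ∈ DSet M cs i j x) (c : B)
    (hc : c = i ∨ c = j) :
    ∃ n' ≤ n + 1, n' ∈ DSet M cs i j (x * cs.simple c) := by
  rcases hn with h | h
  · obtain ⟨n', hn', h'⟩ := alt_mul_simple M cs i j hij c hc n
    exact ⟨n', hn', by rw [h]; rcases h' with h' | h' <;> [exact Or.inl h'; exact Or.inr h']⟩
  · obtain ⟨n', hn', h'⟩ := alt_mul_simple M cs j i (Ne.symm hij) c hc.symm n
    exact ⟨n', hn', by rw [h]; rcases h' with h' | h' <;> [exact Or.inr h'; exact Or.inl h']⟩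

theorem DSet_nonempty (M : CoxeterMatrix B) (cs : CoxeterSystem M W)
    {i j : B} (hij : i ≠ j) {x : W}
    (hx : x ∈ Subgroup.closure {cs.simple i, cs.simple j}) :
    (DSet M cs i j x).Nonempty := by
  induction hx using Subgroup.closure_induction_left with
  | one => exact ⟨0, zero_mem_DSet_one M cs i j⟩
  | mul_left g hg y hy ih =>
    obtain ⟨n, hn⟩ := ih
    rcases hg with rfl | rfl
    · obtain ⟨n', _, h⟩ := DSet_simple_mul M cs hij hn
      exact ⟨n', h⟩
    · rw [DSet_comm] at hn ⊢
      obtain ⟨n', _, h⟩ := DSet_simple_mul M cs (Ne.symm hij) hn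
      exact ⟨n', h⟩
  | inv_mul_cancel g hg y hy ih =>
    obtain ⟨n, hn⟩ := ih
    rcases hg with rfl | rfl
    · rw [cs.inv_simple]
      obtain ⟨n', _, h⟩ := DSet_simple_mul M cs hij hn
      exact ⟨n', h⟩
    · rw [cs.inv_simple, DSet_comm] at *
      obtain ⟨n', _, h⟩ := DSet_simple_mul M cs (Ne.symm hij) hn
      exact ⟨n', h⟩

theorem length_le_of_mem_DSet (M : CoxeterMatrix B) (cs : CoxeterSystem M W)
    {i j : B} {x : W} {n : ℕ} (hn : n ∈ DSet M cs i j x) :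
    cs.length x ≤ n := by
  rcases hn with h | h <;>
    (rw [h]; exact le_trans (cs.length_wordProd_le _) (by simp))

theorem alt_shift (M : CoxeterMatrix B) (cs : CoxeterSystem M W)
    (a b : B) (n : ℕ) (h : M a b * 2 ≤ n) :
    cs.wordProd (alternatingWord a b n) = cs.wordProd (alternatingWord a b (n - M a b * 2)) := by
  rw [cs.prod_alternatingWord_eq_mul_pow, cs.prod_alternatingWord_eq_mul_pow]
  have hev : (Even (n - M a b * 2)) ↔ Even n := by
    rw [Nat.even_sub h]
    simp [Nat.even_mul]
  have hdiv : n / 2 = (n - M a b * 2) / 2 + M a b := by omega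
  rw [hdiv, pow_add, cs.simple_mul_simple_pow a b, mul_one]
  by_cases hn : Even n
  · rw [if_pos hn, if_pos (hev.2 hn)]
  · rw [if_neg hn, if_neg (fun hh => hn (hev.1 hh))]

theorem dlen_le_M (M : CoxeterMatrix B) (cs : CoxeterSystem M W)
    {i j : B} (hij : i ≠ j) (hM : M i j ≠ 0) {x : W}
    (hx : (DSet M cs i j x).Nonempty) :
    sInf (DSet M cs i j x) ≤ M i j := by
  by_contra hgt
  push_neg at hgt
  set n := sInf (DSet M cs i j x) with hn
  have hmem : n ∈ DSet M cs i j x := Nat.sInf_mem hx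
  -- produce a smaller member
  have hsmaller : ∃ n' < n, n' ∈ DSet M cs i j x := by
    rcases le_or_gt n (M i j * 2) with hle | hlt2
    · rcases hmem with h | h
      · refine ⟨M i j * 2 - n, by omega, Or.inr ?_⟩
        rw [h, cs.prod_alternatingWord_eq_prod_alternatingWord_sub i j n hle]
      · refine ⟨M i j * 2 - n, by omega, Or.inl ?_⟩
        have hle' : n ≤ M j i * 2 := by rw [M.symmetric j i]; exact hle
        rw [h, cs.prod_alternatingWord_eq_prod_alternatingWord_sub j i n hle']
        rw [M.symmetric j i]
    · rcases hmem with h | h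
      · refine ⟨n - M i j * 2, by omega, Or.inl ?_⟩
        rw [h, alt_shift M cs i j n (by omega)]
      · refine ⟨n - M i j * 2, by omega, Or.inr ?_⟩
        rw [h, alt_shift M cs j i n (by rw [M.symmetric j i]; omega), M.symmetric j i]
  obtain ⟨n', hlt, hmem'⟩ := hsmaller
  exact absurd (Nat.sInf_le hmem') (by omega)



/-! ### Coefficients of alternating words acting on a simple root -/

def fseq (k : ℝ) : ℕ → ℝ × ℝ
  | 0 => (1, 0)
  | (n+1) =>
    if Even n then ((fseq k n).1, -2*k*(fseq k n).1 - (fseq k n).2)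
    else (-(fseq k n).1 - 2*k*(fseq k n).2, (fseq k n).2)

noncomputable def ssr (θ : ℝ) (r : ℕ) : ℝ := Real.sin (r*θ)/Real.sin θ

theorem ssr_rec (θ : ℝ) (r : ℕ) :
    ssr θ (r+2) = 2*Real.cos θ * ssr θ (r+1) - ssr θ r := by
  unfold ssr
  have hsin : Real.sin (((r:ℝ)+2)*θ) =
      2 * Real.cos θ * Real.sin (((r:ℝ)+1)*θ) - Real.sin ((r:ℝ)*θ) := by
    have e1 : ((r:ℝ)+2)*θ = ((r:ℝ)+1)*θ + θ := by ring
    have e2 : (r:ℝ)*θ = ((r:ℝ)+1)*θ - θ := by ring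
    rw [e1, e2, Real.sin_add, Real.sin_sub]
    ring
  have c2 : ((r+2:ℕ):ℝ) = (r:ℝ)+2 := by push_cast; ring
  have c1 : ((r+1:ℕ):ℝ) = (r:ℝ)+1 := by push_cast; ring
  rw [c2, c1, hsin]
  rw [sub_div]
  ring

theorem fseq_trig (θ : ℝ) (hs : Real.sin θ ≠ 0) (n : ℕ) :
    fseq (-Real.cos θ) n =
      if Even n then (ssr θ (n+1), ssr θ n) else (ssr θ n, ssr θ (n+1)) := by
  induction n with
  | zero =>
    rw [if_pos Even.zero]
    unfold fseq ssr
    norm_num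
    rw [div_self hs]
  | succ n ih =>
    show fseq (-Real.cos θ) (n+1) = _
    rcases Nat.even_or_odd n with hn | hn
    · have hn' : ¬ Even (n+1) := by simp [Nat.even_add_one, hn]
      rw [fseq, if_pos hn, ih, if_pos hn, if_neg hn']
      have : -2*(-Real.cos θ)*(ssr θ (n+1)) - ssr θ n = ssr θ (n+2) := by
        rw [ssr_rec θ n]; ring
      rw [this]
    · have hn' : Even (n+1) := by simp [Nat.even_add_one, Nat.not_even_iff_odd.2 hn]
      rw [fseq, if_neg (Nat.not_even_iff_odd.2 hn), ih,
        if_neg (Nat.not_even_iff_odd.2 hn), if_pos hn']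
      have : -(ssr θ n) - 2*(-Real.cos θ)*(ssr θ (n+1)) = ssr θ (n+2) := by
        rw [ssr_rec θ n]; ring
      rw [this]

theorem fseq_neg_one (n : ℕ) :
    fseq (-1) n = if Even n then ((n:ℝ)+1, (n:ℝ)) else ((n:ℝ), (n:ℝ)+1) := by
  induction n with
  | zero => simp [fseq]
  | succ n ih =>
    rcases Nat.even_or_odd n with hn | hn
    · have hn' : ¬ Even (n+1) := by simp [Nat.even_add_one, hn]
      rw [fseq, if_pos hn, ih, if_pos hn, if_neg hn']
      simp only [Prod.mk.injEq]
      constructor <;> push_cast <;> ring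
    · have hn' : Even (n+1) := by simp [Nat.even_add_one, Nat.not_even_iff_odd.2 hn]
      rw [fseq, if_neg (Nat.not_even_iff_odd.2 hn), ih,
        if_neg (Nat.not_even_iff_odd.2 hn), if_pos hn']
      simp only [Prod.mk.injEq]
      constructor <;> push_cast <;> ring

theorem fseq_km_nonneg (M : CoxeterMatrix B) {i j : B} (hij : i ≠ j) {n : ℕ}
    (hn : M i j ≠ 0 → n < M i j) :
    0 ≤ (fseq (km M i j) n).1 ∧ 0 ≤ (fseq (km M i j) n).2 := by
  rcases eq_or_ne (M i j) 0 with h0 | h0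
  · have : km M i j = -1 := by unfold km; rw [if_pos h0]
    rw [this, fseq_neg_one]
    rcases Nat.even_or_odd n with hn' | hn'
    · rw [if_pos hn']
      constructor <;> positivity
    · rw [if_neg (Nat.not_even_iff_odd.2 hn')]
      constructor <;> positivity
  · have hm2 : 2 ≤ M i j := by have := M.off_diagonal i j hij; omega
    have hmr : (0:ℝ) < (M i j : ℝ) := by
      have : 0 < M i j := by omega
      exact_mod_cast this
    set θ := Real.pi / (M i j : ℝ) with hθ
    have hθpos : 0 < θ := by rw [hθ]; positivity
    have hθle : θ < Real.pi := by
      rw [hθ, div_lt_iff₀ hmr]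
      have : (2:ℝ) ≤ (M i j : ℝ) := by exact_mod_cast hm2
      nlinarith [Real.pi_pos]
    have hs : 0 < Real.sin θ := Real.sin_pos_of_pos_of_lt_pi hθpos hθle
    have hkm : km M i j = -Real.cos θ := by unfold km; rw [if_neg h0]
    have hssr : ∀ r : ℕ, r ≤ M i j → 0 ≤ ssr θ r := by
      intro r hr
      unfold ssr
      apply div_nonneg _ hs.le
      apply Real.sin_nonneg_of_nonneg_of_le_pi
      · positivity
      · have hrM : (r:ℝ) ≤ (M i j : ℝ) := by exact_mod_cast hr
        have e1 : (r:ℝ)*θ ≤ (M i j : ℝ)*θ := mul_le_mul_of_nonneg_right hrM hθpos.le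
        have e2 : (M i j : ℝ)*θ = Real.pi := by
          rw [hθ]; field_simp
        linarith
    rw [hkm, fseq_trig θ (ne_of_gt hs)]
    have h1 : n ≤ M i j := le_of_lt (hn h0)
    have h2 : n + 1 ≤ M i j := hn h0
    rcases Nat.even_or_odd n with hn' | hn'
    · rw [if_pos hn']
      exact ⟨hssr (n+1) h2, hssr n h1⟩
    · rw [if_neg (Nat.not_even_iff_odd.2 hn')]
      exact ⟨hssr n h1, hssr (n+1) h2⟩

/-! ### Action of alternating words on the simple root -/

theorem sg_span (M : CoxeterMatrix B) {i j : B} (a b : ℝ) :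
    sg M j (a • al i + b • al j) = a • al i + (-2*(km M i j)*a - b) • al j ∧
    sg M i (a • al i + b • al j) = (-a - 2*(km M i j)*b) • al i + b • al j := by
  constructor
  · rw [sg_apply]
    have : prl M j (a • al i + b • al j) = a * km M i j + b := by
      rw [map_add, map_smul, map_smul, prl_al, prl_al, km_diag]
      simp [smul_eq_mul]
    rw [this]
    module
  · rw [sg_apply]
    have : prl M i (a • al i + b • al j) = a + b * km M i j := by
      rw [map_add, map_smul, map_smul, prl_al, prl_al, km_diag, km_symm M j i]
      simp [smul_eq_mul]
    rw [this]
    module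

theorem rho_alt_al (M : CoxeterMatrix B) (cs : CoxeterSystem M W) (i j : B) (n : ℕ) :
    rho M cs (cs.wordProd (alternatingWord i j n)) (al i) =
      (fseq (km M i j) n).1 • al i + (fseq (km M i j) n).2 • al j := by
  induction n with
  | zero =>
    rw [show alternatingWord i j 0 = [] from rfl, cs.wordProd_nil, map_one]
    show al i = (1:ℝ) • al i + (0:ℝ) • al j
    module
  | succ n ih =>
    rw [alternatingWord_succ', cs.wordProd_cons, map_mul, Module.End.mul_apply, ih]
    rcases Nat.even_or_odd n with hn | hn
    · rw [if_pos hn, rho_simple, fseq, if_pos hn]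
      exact (sg_span M _ _).1
    · rw [if_neg (Nat.not_even_iff_odd.2 hn), rho_simple, fseq,
        if_neg (Nat.not_even_iff_odd.2 hn)]
      exact (sg_span M _ _).2

/-! ### The dihedral positivity lemma -/

theorem dihedral_pos (M : CoxeterMatrix B) (cs : CoxeterSystem M W)
    {i j : B} (hij : i ≠ j) {x : W}
    (hx : x ∈ Subgroup.closure {cs.simple i, cs.simple j})
    (hasc : sInf (DSet M cs i j x) < sInf (DSet M cs i j (x * cs.simple i))) :
    ∃ a b : ℝ, 0 ≤ a ∧ 0 ≤ b ∧ rho M cs x (al i) = a • al i + b • al j := by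
  have hne := DSet_nonempty M cs hij hx
  set n := sInf (DSet M cs i j x) with hn
  have hmem : n ∈ DSet M cs i j x := Nat.sInf_mem hne
  -- first, exclude representations ending in i
  rcases hmem with h | h
  · -- x = π (alternatingWord i j n), ends with j (or n = 0)
    -- n < M i j whenever M i j ≠ 0 :
    have hnM : M i j ≠ 0 → n < M i j := by
      intro h0
      have hle : n ≤ M i j := hn ▸ dlen_le_M M cs hij h0 hne
      rcases eq_or_lt_of_le hle with heq | hlt
      · -- braid relation: also ends in i, contradiction with hasc
        exfalso
        have hb : x = cs.wordProd (alternatingWord j i (M i j)) := by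
          rw [h, heq]
          have := cs.wordProd_braidWord_eq i j
          unfold CoxeterSystem.braidWord at this
          rw [this, M.symmetric i j]
        obtain ⟨m', hm'⟩ : ∃ m', M i j = m' + 1 := ⟨M i j - 1, by omega⟩
        have hxsi : x * cs.simple i = cs.wordProd (alternatingWord i j m') := by
          rw [hb, hm', alternatingWord_succ, cs.wordProd_concat,
            cs.simple_mul_simple_cancel_right]
        have : m' ∈ DSet M cs i j (x * cs.simple i) := Or.inl hxsi
        have := Nat.sInf_le this
        omega
      · exact hlt
    obtain ⟨ha, hb⟩ := fseq_km_nonneg M hij hnM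
    exact ⟨_, _, ha, hb, by rw [h]; exact rho_alt_al M cs i j n⟩
  · -- x = π (alternatingWord j i n)
    match hn0 : n with
    | 0 =>
      refine ⟨1, 0, zero_le_one, le_rfl, ?_⟩
      rw [h, show alternatingWord j i 0 = [] from rfl, cs.wordProd_nil, map_one]
      show al i = (1:ℝ) • al i + (0:ℝ) • al j
      module
    | (m'+1) =>
      exfalso
      have hxsi : x * cs.simple i = cs.wordProd (alternatingWord i j m') := by
        rw [h, alternatingWord_succ, cs.wordProd_concat,
          cs.simple_mul_simple_cancel_right]
      have : m' ∈ DSet M cs i j (x * cs.simple i) := Or.inl hxsi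
      have := Nat.sInf_le this
      omega



/-! ### Positivity of roots -/

theorem dlen_simple_mul_right (M : CoxeterMatrix B) (cs : CoxeterSystem M W)
    {i j : B} (hij : i ≠ j) {x : W} (hx : (DSet M cs i j x).Nonempty) :
    sInf (DSet M cs i j (cs.simple j * x)) ≤ sInf (DSet M cs i j x) + 1 := by
  have hx' : (DSet M cs j i x).Nonempty := by rwa [DSet_comm M cs j i x]
  obtain ⟨n', hn', hmem'⟩ := DSet_simple_mul M cs (Ne.symm hij) (Nat.sInf_mem hx')
  rw [DSet_comm M cs i j (cs.simple j * x), DSet_comm M cs i j x]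
  exact le_trans (Nat.sInf_le hmem') hn'

theorem rho_simple_root_nonneg_aux (M : CoxeterMatrix B) (cs : CoxeterSystem M W) :
    ∀ (N : ℕ) (w : W) (i : B), cs.length w = N →
      cs.length (w * cs.simple i) = cs.length w + 1 →
      ∀ b0 : B, 0 ≤ rho M cs w (al i) b0 := by
  classical
  intro N
  induction N using Nat.strong_induction_on with
  | _ N IH =>
  intro w i hlen hup b0
  rcases eq_or_ne w 1 with rfl | hw1
  · rw [map_one, Module.End.one_apply]
    unfold al
    rw [Finsupp.single_apply]
    split <;> norm_num
  · obtain ⟨j, hj⟩ := cs.exists_rightDescent_of_ne_one hw1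
    have hj' : cs.length (w * cs.simple j) < cs.length w := hj
    have hij : i ≠ j := by
      intro heq
      rw [← heq] at hj'
      omega
    set Wp := Subgroup.closure {cs.simple i, cs.simple j} with hWp
    set S := {r : ℕ | ∃ v x, x ∈ Wp ∧ w = v * x ∧
        cs.length w = cs.length v + sInf (DSet M cs i j x) ∧ cs.length v = r} with hS
    have hP0 : cs.length w ∈ S := by
      refine ⟨w, 1, one_mem _, (mul_one w).symm, ?_, rfl⟩
      have h1 : sInf (DSet M cs i j (1:W)) = 0 :=
        Nat.sInf_eq_zero.2 (Or.inl (zero_mem_DSet_one M cs i j))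
      omega
    have hSne : S.Nonempty := ⟨_, hP0⟩
    obtain ⟨v, x, hxW, hvx, hsum, hlv⟩ := Nat.sInf_mem hSne
    have hxne := DSet_nonempty M cs hij hxW
    -- v has no descent at i or j
    have hnd : ∀ c : B, (c = i ∨ c = j) → ¬ cs.IsRightDescent v c := by
      intro c hc hdesc
      have hdich := cs.length_mul_simple v c
      have hvc : cs.length (v * cs.simple c) + 1 = cs.length v := by
        unfold CoxeterSystem.IsRightDescent at hdesc
        omega
      have hscx : cs.simple c * x ∈ Wp := by
        refine mul_mem (Subgroup.subset_closure ?_) hxW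
        rcases hc with hceq | hceq
        · rw [hceq]; exact Set.mem_insert _ _
        · rw [hceq]; exact Set.mem_insert_of_mem _ rfl
      have hprod : w = (v * cs.simple c) * (cs.simple c * x) := by
        rw [hvx, mul_assoc, cs.simple_mul_simple_cancel_left]
      -- dlen (s c * x) ≤ dlen x + 1
      have hdle : sInf (DSet M cs i j (cs.simple c * x)) ≤ sInf (DSet M cs i j x) + 1 := by
        rcases hc with hceq | hceq
        · rw [hceq]
          obtain ⟨n', hn', hmem'⟩ := DSet_simple_mul M cs hij (Nat.sInf_mem hxne)
          exact le_trans (Nat.sInf_le hmem') hn'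
        · rw [hceq]
          exact dlen_simple_mul_right M cs hij hxne
      have hlen1 : cs.length w ≤ cs.length (v * cs.simple c) +
          cs.length (cs.simple c * x) := by
        rw [hprod]; exact cs.length_mul_le _ _
      have hlen2 : cs.length (cs.simple c * x) ≤ sInf (DSet M cs i j (cs.simple c * x)) :=
        length_le_of_mem_DSet M cs (Nat.sInf_mem (DSet_nonempty M cs hij hscx))
      -- equality forced
      have heq : cs.length w = cs.length (v * cs.simple c) +
          sInf (DSet M cs i j (cs.simple c * x)) := by omega
      have hmemS : cs.length (v * cs.simple c) ∈ S :=
        ⟨v * cs.simple c, cs.simple c * x, hscx, hprod, heq, rfl⟩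
      have := Nat.sInf_le hmemS
      omega
    -- x ≠ 1
    have hx1 : x ≠ 1 := by
      intro h1
      rw [h1, mul_one] at hvx
      exact hnd j (Or.inr rfl) (hvx ▸ hj)
    have hdlen1 : 1 ≤ sInf (DSet M cs i j x) := by
      by_contra h
      push_neg at h
      interval_cases h0 : sInf (DSet M cs i j x)
      · have h00 : (0:ℕ) ∈ DSet M cs i j x := h0 ▸ Nat.sInf_mem hxne
        rcases h00 with h' | h' <;> simp [alternatingWord] at h' <;> exact hx1 h'
    have hlvlt : cs.length v < N := by omega
    -- ascent of x at i in dihedral length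
    have hxasc : sInf (DSet M cs i j x) < sInf (DSet M cs i j (x * cs.simple i)) := by
      have hxsiW : x * cs.simple i ∈ Wp :=
        mul_mem hxW (Subgroup.subset_closure (Set.mem_insert _ _))
      have h1 : cs.length (w * cs.simple i) ≤ cs.length v +
          cs.length (x * cs.simple i) := by
        rw [hvx, mul_assoc]; exact cs.length_mul_le _ _
      have h2 : cs.length (x * cs.simple i) ≤ sInf (DSet M cs i j (x * cs.simple i)) :=
        length_le_of_mem_DSet M cs (Nat.sInf_mem (DSet_nonempty M cs hij hxsiW))
      have h3 : sInf (DSet M cs i j (x * cs.simple i)) ≤ sInf (DSet M cs i j x) + 1 := by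
        obtain ⟨n', hn', hmem'⟩ := DSet_mul_simple M cs hij (Nat.sInf_mem hxne) i (Or.inl rfl)
        exact le_trans (Nat.sInf_le hmem') hn'
      omega
    obtain ⟨a, b, ha, hb, hx⟩ := dihedral_pos M cs hij hxW hxasc
    -- lengths of v * s i and v * s j
    have hvi : cs.length (v * cs.simple i) = cs.length v + 1 := by
      have := cs.length_mul_simple v i
      have := hnd i (Or.inl rfl)
      unfold CoxeterSystem.IsRightDescent at *
      omega
    have hvj : cs.length (v * cs.simple j) = cs.length v + 1 := by
      have := cs.length_mul_simple v j
      have := hnd j (Or.inr rfl)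
      unfold CoxeterSystem.IsRightDescent at *
      omega
    have IHi := IH (cs.length v) hlvlt v i rfl hvi
    have IHj := IH (cs.length v) hlvlt v j rfl hvj
    rw [hvx, map_mul, Module.End.mul_apply, hx, map_add, map_smul, map_smul]
    rw [Finsupp.add_apply, Finsupp.smul_apply, Finsupp.smul_apply, smul_eq_mul, smul_eq_mul]
    exact add_nonneg (mul_nonneg ha (IHi b0)) (mul_nonneg hb (IHj b0))

theorem rho_nonneg (M : CoxeterMatrix B) (cs : CoxeterSystem M W) {w : W} {i : B}
    (h : cs.length (w * cs.simple i) = cs.length w + 1) (b0 : B) :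
    0 ≤ rho M cs w (al i) b0 :=
  rho_simple_root_nonneg_aux M cs _ w i rfl h b0

theorem sg_al_self (M : CoxeterMatrix B) (i : B) : sg M i (al i) = -al i := by
  rw [sg_apply, prl_al, km_diag]
  module

theorem rho_nonpos (M : CoxeterMatrix B) (cs : CoxeterSystem M W) {w : W} {i : B}
    (h : cs.IsRightDescent w i) (b0 : B) :
    rho M cs w (al i) b0 ≤ 0 := by
  have hdich := cs.length_mul_simple w i
  have hw : w = (w * cs.simple i) * cs.simple i := by
    rw [cs.simple_mul_simple_cancel_right]
  have h' : cs.length ((w * cs.simple i) * cs.simple i) =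
      cs.length (w * cs.simple i) + 1 := by
    rw [cs.simple_mul_simple_cancel_right]
    unfold CoxeterSystem.IsRightDescent at h
    omega
  have := rho_nonneg M cs h' b0
  calc rho M cs w (al i) b0
      = - rho M cs (w * cs.simple i) (al i) b0 := by
        nth_rw 1 [hw]
        rw [map_mul, Module.End.mul_apply, rho_simple, sg_al_self, map_neg]
        simp
    _ ≤ 0 := by linarith



/-! ### The invariant bilinear form -/

theorem prl_apply (M : CoxeterMatrix B) (c : B) (y : B →₀ ℝ) :
    prl M c y = y.sum fun b yb => yb * km M b c := by
  unfold prl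
  rw [Finsupp.linearCombination_apply]
  congr 1

noncomputable def Bf (M : CoxeterMatrix B) (x y : B →₀ ℝ) : ℝ :=
  y.sum fun c yc => yc * prl M c x

theorem Bf_al_right (M : CoxeterMatrix B) (x : B →₀ ℝ) (c : B) :
    Bf M x (al c) = prl M c x := by
  unfold Bf al
  rw [Finsupp.sum_single_index (by simp)]
  simp

theorem Bf_al_left (M : CoxeterMatrix B) (y : B →₀ ℝ) (c : B) :
    Bf M (al c) y = prl M c y := by
  unfold Bf
  rw [prl_apply]
  apply Finsupp.sum_congr
  intro b _
  rw [prl_al, km_symm]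

theorem Bf_add_right (M : CoxeterMatrix B) (x y z : B →₀ ℝ) :
    Bf M x (y + z) = Bf M x y + Bf M x z := by
  unfold Bf
  rw [Finsupp.sum_add_index' (by simp) (by intros; ring)]

theorem Bf_smul_right (M : CoxeterMatrix B) (x y : B →₀ ℝ) (r : ℝ) :
    Bf M x (r • y) = r * Bf M x y := by
  unfold Bf
  rw [Finsupp.sum_smul_index (by simp), Finsupp.mul_sum]
  apply Finsupp.sum_congr
  intro b _
  ring

theorem Bf_sub_right (M : CoxeterMatrix B) (x y z : B →₀ ℝ) :
    Bf M x (y - z) = Bf M x y - Bf M x z := by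
  have h1 : y - z = y + (-1 : ℝ) • z := by module
  rw [h1, Bf_add_right, Bf_smul_right]
  ring

theorem Bf_add_left (M : CoxeterMatrix B) (x y z : B →₀ ℝ) :
    Bf M (x + y) z = Bf M x z + Bf M y z := by
  unfold Bf
  rw [← Finsupp.sum_add]
  apply Finsupp.sum_congr
  intro b _
  rw [map_add]
  ring

theorem Bf_smul_left (M : CoxeterMatrix B) (x y : B →₀ ℝ) (r : ℝ) :
    Bf M (r • x) y = r * Bf M x y := by
  unfold Bf
  rw [Finsupp.mul_sum]
  apply Finsupp.sum_congr
  intro b _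
  rw [map_smul, smul_eq_mul]
  ring

theorem Bf_sub_left (M : CoxeterMatrix B) (x y z : B →₀ ℝ) :
    Bf M (x - y) z = Bf M x z - Bf M y z := by
  have h1 : x - y = x + (-1 : ℝ) • y := by module
  rw [h1, Bf_add_left, Bf_smul_left]
  ring

theorem Bf_sg_adjoint (M : CoxeterMatrix B) (c : B) (x y : B →₀ ℝ) :
    Bf M (sg M c x) y = Bf M x (sg M c y) := by
  rw [sg_apply, sg_apply, Bf_sub_left, Bf_sub_right, Bf_smul_left, Bf_smul_right,
    Bf_al_left, Bf_al_right]
  ring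

theorem Bf_sg_invariant (M : CoxeterMatrix B) (c : B) (x y : B →₀ ℝ) :
    Bf M (sg M c x) (sg M c y) = Bf M x y := by
  rw [Bf_sg_adjoint, sg_sg]

theorem Bf_rho_invariant (M : CoxeterMatrix B) (cs : CoxeterSystem M W) (w : W)
    (x y : B →₀ ℝ) : Bf M (rho M cs w x) (rho M cs w y) = Bf M x y := by
  induction w using CoxeterSystem.simple_induction_left cs with
  | one => simp
  | mul_simple_left w i ih =>
    rw [map_mul, Module.End.mul_apply, Module.End.mul_apply, rho_simple,
      Bf_sg_invariant, ih]

theorem Bf_al_al (M : CoxeterMatrix B) (b c : B) : Bf M (al b) (al c) = km M b c := by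
  rw [Bf_al_right, prl_al]

theorem al_apply_self (b : B) : al b b = (1:ℝ) := by
  unfold al
  rw [Finsupp.single_eq_same]

theorem al_apply_ne {b c : B} (h : b ≠ c) : al b c = (0:ℝ) := by
  unfold al
  rw [Finsupp.single_eq_of_ne' h]

/-! ### Faithfulness -/

theorem rho_faithful (M : CoxeterMatrix B) (cs : CoxeterSystem M W) {w : W}
    (h : rho M cs w = 1) : w = 1 := by
  classical
  by_contra hw
  obtain ⟨j, hj⟩ := cs.exists_rightDescent_of_ne_one hw
  have h1 := rho_nonpos M cs hj j
  rw [h, Module.End.one_apply, al_apply_self] at h1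
  norm_num at h1

/-! ### Reflection conjugation formula -/

theorem rho_conj (M : CoxeterMatrix B) (cs : CoxeterSystem M W) (w : W) (i : B)
    (z : B →₀ ℝ) :
    rho M cs (w * cs.simple i * w⁻¹) z =
      z - (2 * Bf M z (rho M cs w (al i))) • (rho M cs w (al i)) := by
  induction w using CoxeterSystem.simple_induction_left cs generalizing z with
  | one =>
    simp only [one_mul, inv_one, mul_one, rho_simple, map_one, Module.End.one_apply]
    rw [sg_apply, Bf_al_right]
  | mul_simple_left w d ih =>
    have hrw : cs.simple d * w * cs.simple i * (cs.simple d * w)⁻¹ =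
        cs.simple d * (w * cs.simple i * w⁻¹) * cs.simple d := by
      rw [mul_inv_rev, cs.inv_simple]
      group
    rw [hrw, map_mul, map_mul, Module.End.mul_apply, Module.End.mul_apply, rho_simple]
    rw [ih (sg M d z)]
    rw [map_sub, map_smul, map_mul, Module.End.mul_apply, rho_simple]
    rw [sg_sg]
    rw [Bf_sg_adjoint]



/-! ### The (simple) exchange property -/

theorem al_coord_nonneg (i b0 : B) : 0 ≤ al i b0 := by
  rcases eq_or_ne i b0 with rfl | h
  · rw [al_apply_self]; norm_num
  · rw [al_apply_ne h]

theorem simple_exchange (M : CoxeterMatrix B) (cs : CoxeterSystem M W) {ω : List B} {i : B}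
    (hdesc : cs.IsRightDescent (cs.wordProd ω) i) :
    ∃ l, ∃ _ : l < ω.length,
      cs.wordProd ω * cs.simple i = cs.wordProd (ω.eraseIdx l) := by
  classical
  set v : ℕ → (B →₀ ℝ) := fun l => rho M cs (cs.wordProd (ω.drop l)) (al i) with hv
  have hQ : ∀ l, Bf M (v l) (v l) = 1 := by
    intro l
    rw [hv]
    rw [Bf_rho_invariant, Bf_al_al, km_diag]
  have hv0le : ∀ b0, v 0 b0 ≤ 0 := by
    intro b0
    rw [hv]
    simp only [List.drop_zero]
    exact rho_nonpos M cs hdesc b0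
  have hv0ne : ∃ b0, v 0 b0 < 0 := by
    by_contra hcon
    push_neg at hcon
    have hzero : v 0 = 0 := by
      ext b0
      exact le_antisymm (hv0le b0) (hcon b0)
    have := hQ 0
    rw [hzero] at this
    unfold Bf at this
    rw [Finsupp.sum_zero_index] at this
    norm_num at this
  -- find the critical index
  have aux : ∀ d l, l + d = ω.length → (∃ b0, v l b0 < 0) →
      ∃ l', l' < ω.length ∧ (∃ b0, v l' b0 < 0) ∧ (∀ b0, 0 ≤ v (l'+1) b0) := by
    intro d
    induction d with
    | zero =>
      intro l hl hneg
      exfalso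
      obtain ⟨b0, hb0⟩ := hneg
      have : v l = al i := by
        show rho M cs (cs.wordProd (ω.drop l)) (al i) = al i
        simp only [Nat.add_zero] at hl
        rw [hl, List.drop_length, cs.wordProd_nil, map_one, Module.End.one_apply]
      rw [this] at hb0
      exact absurd hb0 (not_lt.2 (al_coord_nonneg i b0))
    | succ d ihd =>
      intro l hl hneg
      by_cases hpos : ∀ b0, 0 ≤ v (l+1) b0
      · exact ⟨l, by omega, hneg, hpos⟩
      · push_neg at hpos
        obtain ⟨b0, hb0⟩ := hpos
        exact ihd (l+1) (by omega) ⟨b0, hb0⟩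
  obtain ⟨l, hl, hneg, hpos⟩ := aux ω.length 0 (by omega) hv0ne
  set c := ω[l] with hc
  have hdropl : ω.drop l = c :: ω.drop (l+1) := List.drop_eq_getElem_cons hl
  have hvl : v l = sg M c (v (l+1)) := by
    rw [hv]
    simp only []
    rw [hdropl, cs.wordProd_cons, map_mul, Module.End.mul_apply, rho_simple]
  -- v l is everywhere ≤ 0
  have hvlle : ∀ b0, v l b0 ≤ 0 := by
    have hdich := cs.length_mul_simple (cs.wordProd (ω.drop l)) i
    rcases hdich with hasc | hdesc'
    · exfalso
      obtain ⟨b0, hb0⟩ := hneg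
      have := rho_nonneg M cs hasc b0
      rw [hv] at hb0
      simp only [] at hb0
      linarith
    · intro b0
      have hdesc'' : cs.IsRightDescent (cs.wordProd (ω.drop l)) i := by
        unfold CoxeterSystem.IsRightDescent
        omega
      exact rho_nonpos M cs hdesc'' b0
  -- coordinates away from c vanish at level l+1
  have hcoord : ∀ b0, b0 ≠ c → v (l+1) b0 = 0 := by
    intro b0 hb0
    have h1 : v l b0 = v (l+1) b0 := by
      rw [hvl]
      exact sg_apply_ne M c (v (l+1)) hb0
    have := hvlle b0
    have := hpos b0
    linarith
  set r := v (l+1) c with hr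
  have hv1 : v (l+1) = r • al c := by
    ext b0
    rcases eq_or_ne b0 c with rfl | hb0
    · rw [Finsupp.smul_apply, al_apply_self, smul_eq_mul, mul_one]
    · rw [Finsupp.smul_apply, al_apply_ne (Ne.symm hb0), hcoord b0 hb0, smul_eq_mul, mul_zero]
  have hr1 : r = 1 := by
    have h1 := hQ (l+1)
    rw [hv1, Bf_smul_left, Bf_smul_right, Bf_al_al, km_diag] at h1
    have hrpos : 0 ≤ r := hpos c
    nlinarith
  have hroot : rho M cs (cs.wordProd (ω.drop (l+1))) (al i) = al c := by
    have h5 : v (l+1) = al c := by rw [hv1, hr1, one_smul]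
    exact h5
  -- conjugation
  set u := cs.wordProd (ω.drop (l+1)) with hu
  have hconj : rho M cs (u * cs.simple i * u⁻¹) = rho M cs (cs.simple c) := by
    refine LinearMap.ext fun z => ?_
    rw [rho_conj M cs u i z, hroot, rho_simple, sg_apply, Bf_al_right]
  have hgrp : u * cs.simple i * u⁻¹ = cs.simple c := by
    have h1 : rho M cs ((u * cs.simple i * u⁻¹) * cs.simple c) = 1 := by
      rw [map_mul, hconj, ← map_mul, cs.simple_mul_simple_self, map_one]
    have := rho_faithful M cs h1
    have h2 : u * cs.simple i * u⁻¹ = (cs.simple c)⁻¹ :=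
      eq_inv_iff_mul_eq_one.mpr this
    rw [h2, cs.inv_simple]
  have hswap : u * cs.simple i = cs.simple c * u := by
    have := hgrp
    calc u * cs.simple i = (u * cs.simple i * u⁻¹) * u := by group
      _ = cs.simple c * u := by rw [hgrp]
  refine ⟨l, hl, ?_⟩
  have hsplit : ω = ω.take l ++ ω.drop l := (List.take_append_drop l ω).symm
  calc cs.wordProd ω * cs.simple i
      = cs.wordProd (ω.take l) * cs.wordProd (ω.drop l) * cs.simple i := by
        nth_rw 1 [hsplit]
        rw [cs.wordProd_append]
    _ = cs.wordProd (ω.take l) * (cs.simple c * (u * cs.simple i)) := by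
        rw [hdropl, cs.wordProd_cons, ← hu]
        group
    _ = cs.wordProd (ω.take l) * (cs.simple c * (cs.simple c * u)) := by rw [hswap]
    _ = cs.wordProd (ω.take l) * u := by rw [cs.simple_mul_simple_cancel_left]
    _ = cs.wordProd (ω.take l ++ ω.drop (l+1)) := by rw [cs.wordProd_append]
    _ = cs.wordProd (ω.eraseIdx l) := by rw [List.eraseIdx_eq_take_drop_succ]

/-! ### Reduced words over a subset -/

theorem isReduced_nil (M : CoxeterMatrix B) (cs : CoxeterSystem M W) :
    cs.IsReduced ([] : List B) := by
  unfold CoxeterSystem.IsReduced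
  simp

theorem exists_reduced_word_over_aux (M : CoxeterMatrix B) (cs : CoxeterSystem M W)
    (T : Set B) :
    ∀ (n : ℕ) (ω : List B), ω.length ≤ n → (∀ b ∈ ω, b ∈ T) →
      ∃ ω' : List B, cs.IsReduced ω' ∧ (∀ b ∈ ω', b ∈ T) ∧
        cs.wordProd ω' = cs.wordProd ω := by
  intro n
  induction n using Nat.strong_induction_on with
  | _ n IH =>
  intro ω hlen hmem
  by_cases hred : cs.IsReduced ω
  · exact ⟨ω, hred, hmem, rfl⟩
  · have hne : ω ≠ [] := by
      intro h
      rw [h] at hred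
      exact hred (isReduced_nil M cs)
    have hlpos : 1 ≤ ω.length := by
      cases ω
      · exact absurd rfl hne
      · simp
    classical
    set P : ℕ → Prop := fun l => ¬ cs.IsReduced (ω.take (l+1)) with hP
    have hPex : P (ω.length - 1) := by
      rw [hP]
      simp only []
      rw [show ω.length - 1 + 1 = ω.length by omega, List.take_length]
      exact hred
    have hPexx : ∃ l, P l := ⟨_, hPex⟩
    set l := Nat.find hPexx with hldef
    have hPl : ¬ cs.IsReduced (ω.take (l+1)) := Nat.find_spec hPexx
    have hllt : l < ω.length := by
      have := Nat.find_min' hPexx hPex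
      omega
    have htakered : cs.IsReduced (ω.take l) := by
      match hl0 : l with
      | 0 => simpa using isReduced_nil M cs
      | (m+1) =>
        have := Nat.find_min hPexx (show m < l by omega)
        rw [hP] at this
        simp only [] at this
        rw [not_not] at this
        exact this
    set c := ω[l] with hc
    have htakesucc : ω.take (l+1) = ω.take l ++ [c] := by
      rw [List.take_succ]
      rw [List.getElem?_eq_getElem hllt]
      rfl
    have hlen_take : (ω.take l).length = l := by
      rw [List.length_take]
      omega
    have hltake : cs.length (cs.wordProd (ω.take l)) = l := by
      have := htakered
      unfold CoxeterSystem.IsReduced at this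
      rw [this, hlen_take]
    have hprod_succ : cs.wordProd (ω.take (l+1)) = cs.wordProd (ω.take l) * cs.simple c := by
      rw [htakesucc, cs.wordProd_append, cs.wordProd_singleton]
    have hdesc : cs.IsRightDescent (cs.wordProd (ω.take l)) c := by
      have hdich := cs.length_mul_simple (cs.wordProd (ω.take l)) c
      rcases hdich with hup | hdn
      · exfalso
        apply hPl
        unfold CoxeterSystem.IsReduced
        rw [hprod_succ, hup, hltake, List.length_take]
        omega
      · unfold CoxeterSystem.IsRightDescent
        omega
    obtain ⟨l', hl', hex⟩ := simple_exchange M cs hdesc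
    set ω' := ((ω.take l).eraseIdx l') ++ ω.drop (l+1) with hω'
    have hprod' : cs.wordProd ω' = cs.wordProd ω := by
      rw [hω', cs.wordProd_append, ← hex, ← hprod_succ]
      rw [← cs.wordProd_append, List.take_append_drop]
    have hlen' : ω'.length < n := by
      rw [hω', List.length_append]
      have h1 : ((ω.take l).eraseIdx l').length + 1 = (ω.take l).length :=
        List.length_eraseIdx_add_one (by omega)
      have h2 : (ω.drop (l+1)).length = ω.length - (l+1) := by
        rw [List.length_drop]
      omega
    have hmem' : ∀ b ∈ ω', b ∈ T := by
      intro b hb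
      rw [hω', List.mem_append] at hb
      rcases hb with hb | hb
      · exact hmem b (List.mem_of_mem_take (List.mem_of_mem_eraseIdx hb))
      · exact hmem b (List.mem_of_mem_drop hb)
    obtain ⟨ω'', hred'', hmem'', hprod''⟩ := IH ω'.length hlen' ω' le_rfl hmem'
    exact ⟨ω'', hred'', hmem'', by rw [hprod'', hprod']⟩

theorem exists_word_over (M : CoxeterMatrix B) (cs : CoxeterSystem M W)
    (T : Set B) {x : W} (hx : x ∈ Subgroup.closure (cs.simple '' T)) :
    ∃ ω : List B, (∀ b ∈ ω, b ∈ T) ∧ x = cs.wordProd ω := by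
  induction hx using Subgroup.closure_induction_left with
  | one => exact ⟨[], by simp, by simp⟩
  | mul_left g hg y hy ih =>
    obtain ⟨b, hb, rfl⟩ := hg
    obtain ⟨ω, hmem, rfl⟩ := ih
    exact ⟨b :: ω, by
      intro b' hb'
      rcases List.mem_cons.1 hb' with rfl | h
      · exact hb
      · exact hmem b' h, by rw [cs.wordProd_cons]⟩
  | inv_mul_cancel g hg y hy ih =>
    obtain ⟨b, hb, rfl⟩ := hg
    obtain ⟨ω, hmem, rfl⟩ := ih
    refine ⟨b :: ω, ?_, ?_⟩
    · intro b' hb'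
      rcases List.mem_cons.1 hb' with rfl | h
      · exact hb
      · exact hmem b' h
    · rw [cs.wordProd_cons, cs.inv_simple]

theorem exists_reduced_word_over (M : CoxeterMatrix B) (cs : CoxeterSystem M W)
    (T : Set B) {x : W} (hx : x ∈ Subgroup.closure (cs.simple '' T)) :
    ∃ ω : List B, cs.IsReduced ω ∧ (∀ b ∈ ω, b ∈ T) ∧ x = cs.wordProd ω := by
  obtain ⟨ω, hmem, rfl⟩ := exists_word_over M cs T hx
  obtain ⟨ω', h1, h2, h3⟩ := exists_reduced_word_over_aux M cs T ω.length ω le_rfl hmem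
  exact ⟨ω', h1, h2, h3.symm⟩



/-! ### Parabolic subgroup lemmas -/

theorem parabolic_nonneg (M : CoxeterMatrix B) (cs : CoxeterSystem M W) {t1 : B} {u : W}
    (hu : u ∈ Subgroup.closure (cs.simple '' {x : B | x ≠ t1})) (b0 : B) :
    0 ≤ rho M cs u (al t1) b0 := by
  obtain ⟨ω, hred, hmem, rfl⟩ := exists_reduced_word_over M cs _ hu
  clear hu
  induction ω using List.reverseRecOn generalizing b0 with
  | nil =>
    rw [cs.wordProd_nil, map_one, Module.End.one_apply]
    exact al_coord_nonneg t1 b0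
  | append_singleton ω' c ih =>
    have hred' : cs.IsReduced ω' := by
      have h := hred.take ω'.length
      rwa [List.take_left] at h
    have hmem' : ∀ b ∈ ω', b ∈ {x : B | x ≠ t1} := fun b hb =>
      hmem b (List.mem_append_left _ hb)
    have hc : c ≠ t1 := hmem c (List.mem_append_right _ (List.mem_singleton_self c))
    have hprod : cs.wordProd (ω' ++ [c]) = cs.wordProd ω' * cs.simple c := by
      rw [cs.wordProd_append, cs.wordProd_singleton]
    have hup : cs.length (cs.wordProd ω' * cs.simple c) = cs.length (cs.wordProd ω') + 1 := by
      have h1 : cs.length (cs.wordProd (ω' ++ [c])) = ω'.length + 1 := by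
        have := hred
        unfold CoxeterSystem.IsReduced at this
        rw [this, List.length_append, List.length_singleton]
      rw [← hprod, h1]
      have h2 : cs.length (cs.wordProd ω') = ω'.length := hred'
      rw [h2]
    have hsg : sg M c (al t1) = al t1 + (-(2 * km M t1 c)) • al c := by
      rw [sg_apply, prl_al]
      module
    rw [hprod, map_mul, Module.End.mul_apply, rho_simple, hsg, map_add, map_smul]
    rw [Finsupp.add_apply, Finsupp.smul_apply, smul_eq_mul]
    have h3 : 0 ≤ -(2 * km M t1 c) := by
      have := km_nonpos M (Ne.symm hc)
      linarith
    have h4 := rho_nonneg M cs hup b0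
    have h5 := ih b0 hred' hmem'
    have h6 : 0 ≤ -(2 * km M t1 c) * (rho M cs (cs.wordProd ω') (al c)) b0 :=
      mul_nonneg h3 h4
    linarith

theorem parabolic_coord (M : CoxeterMatrix B) (cs : CoxeterSystem M W) {tk : B} {v : W}
    (hv : v ∈ Subgroup.closure (cs.simple '' {x : B | x ≠ tk})) :
    ∀ y : B →₀ ℝ, rho M cs v y tk = y tk := by
  induction hv using Subgroup.closure_induction with
  | mem g hg =>
    obtain ⟨b, hb, rfl⟩ := hg
    intro y
    rw [rho_simple]
    exact sg_apply_ne M b y (Ne.symm hb)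
  | one => intro y; simp
  | mul a b ha hb iha ihb =>
    intro y
    rw [map_mul, Module.End.mul_apply, iha, ihb]
  | inv a ha iha =>
    intro y
    have h1 : rho M cs a (rho M cs a⁻¹ y) = y := by
      rw [← Module.End.mul_apply, ← map_mul, mul_inv_cancel, map_one, Module.End.one_apply]
    calc rho M cs a⁻¹ y tk = rho M cs a (rho M cs a⁻¹ y) tk := (iha _).symm
      _ = y tk := by rw [h1]

/-! ### The image of the simple root under the path product -/

theorem gamma_neg (M : CoxeterMatrix B) (cs : CoxeterSystem M W) (k : ℕ) (t : ℕ → B)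
    (hinj : ∀ i j, 1 ≤ i → i ≤ k → 1 ≤ j → j ≤ k → t i = t j → i = j)
    (hlab : ∀ i, 1 ≤ i → i < k →
      (M (t i) (t (i + 1)) = 0 ∨ 3 ≤ M (t i) (t (i + 1)))) :
    ∀ i, 1 ≤ i → i ≤ k →
      ∃ c : ℕ → ℝ, (∀ j, 0 ≤ c j) ∧ 1 ≤ c i ∧
        rho M cs (((List.range i).map (fun n => cs.simple (t (n+1)))).prod)⁻¹ (al (t 1)) =
          -(∑ j ∈ Finset.Icc 1 i, c j • al (t j)) := by
  intro i
  induction i with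
  | zero => omega
  | succ n ih =>
    intro h1 hik
    rcases Nat.eq_or_lt_of_le h1 with h10 | hn1
    · -- base case n + 1 = 1
      have hn0 : n = 0 := by omega
      subst hn0
      refine ⟨fun _ => 1, fun j => zero_le_one, le_rfl, ?_⟩
      have hg1 : ((List.range 1).map (fun n => cs.simple (t (n+1)))).prod = cs.simple (t 1) := by
        rw [List.range_succ, List.range_zero]
        simp
      rw [hg1, cs.inv_simple, rho_simple, sg_al_self, Finset.Icc_self, Finset.sum_singleton,
        one_smul]
    · -- inductive step, 1 ≤ n
      have hn : 1 ≤ n := by omega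
      obtain ⟨c, hc0, hcn, hc⟩ := ih hn (by omega)
      have hprod : ((List.range (n+1)).map (fun m => cs.simple (t (m+1)))).prod =
          ((List.range n).map (fun m => cs.simple (t (m+1)))).prod * cs.simple (t (n+1)) := by
        rw [List.range_succ, List.map_append, List.prod_append]
        simp
      set A := ((List.range n).map (fun m => cs.simple (t (m+1)))).prod with hA
      have hinv : (((List.range (n+1)).map (fun m => cs.simple (t (m+1)))).prod)⁻¹ =
          cs.simple (t (n+1)) * A⁻¹ := by
        rw [hprod, mul_inv_rev, cs.inv_simple]
      set S := ∑ j ∈ Finset.Icc 1 n, c j • al (t j) with hS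
      set K := ∑ j ∈ Finset.Icc 1 n, c j * (-2 * km M (t j) (t (n+1))) with hK
      have hprlS : prl M (t (n+1)) S = ∑ j ∈ Finset.Icc 1 n, c j * km M (t j) (t (n+1)) := by
        rw [hS, map_sum]
        apply Finset.sum_congr rfl
        intro j _
        rw [map_smul, prl_al, smul_eq_mul]
      have hKeq : (2 : ℝ) * prl M (t (n+1)) S = -K := by
        rw [hprlS, hK, Finset.mul_sum, ← Finset.sum_neg_distrib]
        apply Finset.sum_congr rfl
        intro j _
        ring
      have hsgS : sg M (t (n+1)) S = S + K • al (t (n+1)) := by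
        rw [sg_apply, hKeq]
        module
      -- positivity of K
      have hterm : ∀ j ∈ Finset.Icc 1 n, 0 ≤ c j * (-2 * km M (t j) (t (n+1))) := by
        intro j hj
        rw [Finset.mem_Icc] at hj
        have hne : t j ≠ t (n+1) := by
          intro heq
          have := hinj j (n+1) hj.1 (by omega) (by omega) hik heq
          omega
        have := km_nonpos M hne
        have := hc0 j
        nlinarith
      have hKge : 1 ≤ K := by
        have hm : c n * (-2 * km M (t n) (t (n+1))) ≥ 1 := by
          have := km_le_neg_half M (hlab n hn (by omega))
          nlinarith
        have hle := Finset.single_le_sum hterm (Finset.mem_Icc.2 ⟨hn, le_rfl⟩)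
        rw [← hK] at hle
        linarith
      -- assemble
      refine ⟨fun j => if j = n+1 then K else c j, ?_, ?_, ?_⟩
      · intro j
        show (0:ℝ) ≤ if j = n+1 then K else c j
        by_cases hj : j = n+1
        · rw [if_pos hj]; linarith
        · rw [if_neg hj]; exact hc0 j
      · show (1:ℝ) ≤ if n+1 = n+1 then K else c (n+1)
        rw [if_pos rfl]; exact hKge
      · rw [hinv, map_mul, Module.End.mul_apply, hc, rho_simple, map_neg, hsgS]
        simp only []
        rw [Finset.sum_Icc_succ_top (by omega : 1 ≤ n+1)]
        rw [if_pos rfl]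
        have heq2 : ∑ j ∈ Finset.Icc 1 n, (if j = n+1 then K else c j) • al (t j) = S := by
          rw [hS]
          apply Finset.sum_congr rfl
          intro j hj
          rw [Finset.mem_Icc] at hj
          rw [if_neg (by omega)]
        rw [heq2]



end CoxProof

/-- Let `(W, S)` be a Coxeter system with Coxeter matrix `M` (where the
entry `0` encodes the label `∞`).  Let `t 1, …, t k` (`k ≥ 1`) be pairwise distinct
generators such that consecutive generators do not commute, i.e.
`M (t i) (t (i+1)) ≥ 3` or `= ∞`; thus `t 1, …, t k` is an embedded edge path in the
Coxeter diagram.  Set `g = t 1 ⋯ t k ∈ W`.  Then the coset `g · W_{S∖{t k}}` is disjoint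
from the standard parabolic subgroup `W_{S∖{t 1}}`. -/
theorem coset_disjoint_of_edge_path {B : Type*} {W : Type*} [Group W]
    (M : CoxeterMatrix B) (cs : CoxeterSystem M W)
    (k : ℕ) (hk : 1 ≤ k) (t : ℕ → B)
    (hinj : ∀ i j, 1 ≤ i → i ≤ k → 1 ≤ j → j ≤ k → t i = t j → i = j)
    (hlab : ∀ i, 1 ≤ i → i < k →
      (M (t i) (t (i + 1)) = 0 ∨ 3 ≤ M (t i) (t (i + 1)))) :
    (((List.range k).map (fun i => cs.simple (t (i + 1)))).prod •
        (Subgroup.closure (cs.simple '' {x : B | x ≠ t k}) : Set W)) ∩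
      (Subgroup.closure (cs.simple '' {x : B | x ≠ t 1}) : Set W) = ∅ := by
  rw [Set.eq_empty_iff_forall_notMem]
  rintro w ⟨hw1, hw2⟩
  set g := ((List.range k).map (fun i => cs.simple (t (i + 1)))).prod with hg
  obtain ⟨v, hv, hgv⟩ := hw1
  rw [SetLike.mem_coe] at hw2
  have hv' : v ∈ Subgroup.closure (cs.simple '' {x : B | x ≠ t k}) := hv
  obtain ⟨c, hc0, hck, hcg⟩ := CoxProof.gamma_neg M cs k t hinj hlab k hk le_rfl
  have hX1 : 0 ≤ CoxProof.rho M cs w⁻¹ (CoxProof.al (t 1)) (t k) :=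
    CoxProof.parabolic_nonneg M cs (inv_mem hw2) (t k)
  have hw : w⁻¹ = v⁻¹ * g⁻¹ := by
    rw [← hgv]
    show (g • v)⁻¹ = v⁻¹ * g⁻¹
    rw [smul_eq_mul, mul_inv_rev]
  have hX2 : CoxProof.rho M cs w⁻¹ (CoxProof.al (t 1)) (t k) = - c k := by
    rw [hw, map_mul, Module.End.mul_apply, hcg, map_neg, Finsupp.neg_apply]
    rw [CoxProof.parabolic_coord M cs (inv_mem hv')]
    rw [Finsupp.finset_sum_apply]
    rw [Finset.sum_eq_single k]
    · rw [Finsupp.smul_apply, CoxProof.al_apply_self, smul_eq_mul, mul_one]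
    · intro j hj hjk
      rw [Finset.mem_Icc] at hj
      have hne : t j ≠ t k := by
        intro heq
        exact hjk (hinj j k hj.1 hj.2 hk le_rfl heq)
      rw [Finsupp.smul_apply, CoxProof.al_apply_ne hne, smul_eq_mul, mul_zero]
    · intro hk'
      exact absurd (Finset.mem_Icc.2 ⟨hk, le_rfl⟩) hk'
  rw [hX2] at hX1
  linarith
end

section
/- Let P be a poset equipped with a strictly monotone rank function τ : P → ℤ taking values in {1, …, n} (so x < y implies τ(x) < τ(y)), such that every element of P lies below some element of rank n and above some element of rank 1. Call an element extremal if its rank is 1 or n. Suppose P is bowtie free and locally determined. Then every x ∈ P is the greatest lower bound of the set {z ∈ P : τ(z) = n and z ≥ x}, and the least upper bound of the set {z ∈ P : τ(z) = 1 and z ≤ x}. -/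
/-- An element of rank `1` or rank `n` is *extremal*. -/
def Extremal {P : Type*} (τ : P → ℤ) (n : ℤ) (x : P) : Prop := τ x = 1 ∨ τ x = n

/-- A poset `P` with strictly monotone rank function `τ` taking values in `{1, …, n}` is
*locally determined* if for every pair `x < y` there exists an extremal `y'` with `x < y'`
such that `y'` and `y` are incomparable, and an extremal `x'` with `x' < y` such that `x'`
and `x` are incomparable. -/
def LocallyDetermined {P : Type*} [PartialOrder P] (τ : P → ℤ) (n : ℤ) : Prop :=
  ∀ x y : P, x < y →
    (∃ y' : P, Extremal τ n y' ∧ x < y' ∧ ¬ y' ≤ y ∧ ¬ y ≤ y') ∧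
    (∃ x' : P, Extremal τ n x' ∧ x' < y ∧ ¬ x' ≤ x ∧ ¬ x ≤ x')

/-- Let `P` be a poset with a strictly monotone rank function
`τ : P → ℤ` taking values in `{1, …, n}`, such that every element lies below some element
of rank `n` and above some element of rank `1`.  If `P` is bowtie free and locally
determined, then every `x ∈ P` is the greatest lower bound of
`{z : τ z = n ∧ x ≤ z}` and the least upper bound of `{z : τ z = 1 ∧ z ≤ x}`. -/
theorem locallyDetermined_glb_lub {P : Type*} [PartialOrder P] (n : ℤ) (τ : P → ℤ)
    (hmono : StrictMono τ) (hlo : ∀ p : P, 1 ≤ τ p) (hhi : ∀ p : P, τ p ≤ n)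
    (habove : ∀ x : P, ∃ z : P, τ z = n ∧ x ≤ z)
    (hbelow : ∀ x : P, ∃ z : P, τ z = 1 ∧ z ≤ x)
    (hbow : BowtieFree P) (hld : LocallyDetermined τ n) :
    ∀ x : P, IsGLB {z : P | τ z = n ∧ x ≤ z} x ∧ IsLUB {z : P | τ z = 1 ∧ z ≤ x} x := by
  classical
  intro x
  constructor
  · constructor
    · intro z hz
      exact hz.2
    · intro w hw
      by_contra hwx
      have hCne : ∃ k : ℤ, ∃ c : P, x ≤ c ∧ w ≤ c ∧ τ c = k := by
        obtain ⟨z, hz, hxz⟩ := habove x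
        exact ⟨τ z, z, hxz, hw ⟨hz, hxz⟩, rfl⟩
      obtain ⟨k, ⟨c, hxc, hwc, hck⟩, hmin⟩ :=
        Int.exists_least_of_bdd (P := fun k => ∃ c : P, x ≤ c ∧ w ≤ c ∧ τ c = k)
          ⟨1, by rintro z ⟨c, _, _, rfl⟩; exact hlo c⟩ hCne
      have hxc' : x < c := lt_of_le_of_ne hxc (by rintro rfl; exact hwx hwc)
      obtain ⟨⟨y', hy'e, hxy', hy'c, hcy'⟩, -⟩ := hld x c hxc'
      have hty' : τ y' = n := by
        rcases hy'e with h | h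
        · have := hmono hxy'
          have := hlo x
          omega
        · exact h
      have hwy' : w ≤ y' := hw ⟨hty', hxy'.le⟩
      have hwc' : w < c := lt_of_le_of_ne hwc (by rintro rfl; exact hcy' hwy')
      have hwy'' : w < y' := lt_of_le_of_ne hwy' (by rintro rfl; exact hy'c hwc)
      obtain ⟨d, hxd, hwd, hdc, hdy'⟩ := hbow x c w y' hxc' hxy' hwc' hwy''
      have hdc' : d < c := lt_of_le_of_ne hdc (by rintro rfl; exact hcy' hdy')
      have h1 := hmin (τ d) ⟨d, hxd, hwd, rfl⟩
      have h2 := hmono hdc'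
      omega
  · constructor
    · intro z hz
      exact hz.2
    · intro w hw
      by_contra hxw
      have hCne : ∃ k : ℤ, ∃ c : P, c ≤ x ∧ c ≤ w ∧ τ c = k := by
        obtain ⟨z, hz, hzx⟩ := hbelow x
        exact ⟨τ z, z, hzx, hw ⟨hz, hzx⟩, rfl⟩
      obtain ⟨k, ⟨c, hcx, hcw, hck⟩, hmax⟩ :=
        Int.exists_greatest_of_bdd (P := fun k => ∃ c : P, c ≤ x ∧ c ≤ w ∧ τ c = k)
          ⟨n, by rintro z ⟨c, _, _, rfl⟩; exact hhi c⟩ hCne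
      have hcx' : c < x := lt_of_le_of_ne hcx (by rintro rfl; exact hxw hcw)
      obtain ⟨-, ⟨x', hx'e, hx'x, hx'c, hcx''⟩⟩ := hld c x hcx'
      have htx' : τ x' = 1 := by
        rcases hx'e with h | h
        · exact h
        · have := hmono hx'x
          have := hhi x
          omega
      have hx'w : x' ≤ w := hw ⟨htx', hx'x.le⟩
      have hcw' : c < w := lt_of_le_of_ne hcw (by rintro rfl; exact hx'c hx'w)
      have hx'w' : x' < w := lt_of_le_of_ne hx'w (by rintro rfl; exact hcx'' hcw)
      obtain ⟨d, hcd, hx'd, hdx, hdw⟩ := hbow c x x' w hcx' hcw' hx'x hx'w'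
      have hcd' : c < d := lt_of_le_of_ne hcd (by rintro rfl; exact hx'c hx'd)
      have h1 := hmax (τ d) ⟨d, hdx, hdw, rfl⟩
      have h2 := hmono hcd'
      omega
end

section
/- Let P be a poset with a strictly monotone rank function τ : P → ℤ taking values in {1, …, N}; call an element extremal if its rank is 1 or N, and let d denote the graph distance in the comparability graph of P. Let ω = x_n, x_{n−1}, …, x_1 be a normal form path from x_n to x_1, and let ω′ = y_m, y_{m−1}, …, y_1 be a normal form path from y_m to y_1. Suppose x_1 = y_1 is extremal, n ≤ m, and x_n and y_m are adjacent in the comparability graph. Then either xᵢ ≤ yᵢ for all 1 ≤ i ≤ n, or xᵢ ≥ yᵢ for all 1 ≤ i ≤ n. -/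
/-- The *comparability graph* of a poset: two distinct elements are adjacent if and only
if they are comparable. -/
def comparabilityGraph (P : Type*) [PartialOrder P] : SimpleGraph P where
  Adj x y := x ≠ y ∧ (x ≤ y ∨ y ≤ x)
  symm := by
    constructor
    intro x y h
    exact ⟨h.1.symm, h.2.symm⟩
  loopless := by
    constructor
    intro x h
    exact h.1 rfl

/-- `f ℓ, f (ℓ-1), …, f 1` is a *normal form path* from `f ℓ` to `f 1`: consecutive
vertices are adjacent in the comparability graph, the path is a geodesic, and for every
`i ≥ 2` and every vertex `y` adjacent to `f i` with `d (y, f 1) = i − 2`, either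
`f i < f (i-1) ≤ y` or `f i > f (i-1) ≥ y`. -/
def IsNormalFormPath {P : Type*} [PartialOrder P] (f : ℕ → P) (ℓ : ℕ) : Prop :=
  1 ≤ ℓ ∧
  (∀ i, 1 ≤ i → i < ℓ → (comparabilityGraph P).Adj (f (i + 1)) (f i)) ∧
  (comparabilityGraph P).dist (f ℓ) (f 1) = ℓ - 1 ∧
  (∀ i, 2 ≤ i → i ≤ ℓ → ∀ y : P, (comparabilityGraph P).Adj y (f i) →
    (comparabilityGraph P).dist y (f 1) = i - 2 →
    ((f i < f (i - 1) ∧ f (i - 1) ≤ y) ∨ (f (i - 1) < f i ∧ y ≤ f (i - 1))))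

/-- Triangle inequality for graph distance, assuming reachability. -/
lemma NFP.dist_triangle' {V : Type*} {G : SimpleGraph V} {u v w : V}
    (h1 : G.Reachable u v) (h2 : G.Reachable v w) :
    G.dist u w ≤ G.dist u v + G.dist v w := by
  obtain ⟨p, hp⟩ := h1.exists_walk_length_eq_dist
  obtain ⟨q, hq⟩ := h2.exists_walk_length_eq_dist
  rw [← hp, ← hq, ← SimpleGraph.Walk.length_append]
  exact SimpleGraph.dist_le _

/-- An adjacent vertex changes distance by at most one. -/
lemma NFP.adj_dist_le {V : Type*} {G : SimpleGraph V} {u v w : V}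
    (h : G.Adj u v) (hr : G.Reachable v w) :
    G.dist u w ≤ G.dist v w + 1 := by
  have h1 : G.dist u v = 1 := SimpleGraph.dist_eq_one_iff_adj.mpr h
  have := NFP.dist_triangle' h.reachable hr
  omega

/-- Adjacency in the comparability graph gives strict comparability. -/
lemma NFP.adj_lt_or_lt {P : Type*} [PartialOrder P] {a b : P}
    (h : (comparabilityGraph P).Adj a b) : a < b ∨ b < a := by
  rcases h with ⟨hne, h | h⟩
  · exact Or.inl (lt_of_le_of_ne h hne)
  · exact Or.inr (lt_of_le_of_ne h hne.symm)

/-- Walks along a normal form path. -/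
lemma NFP.walk {P : Type*} [PartialOrder P] {f : ℕ → P} {ℓ : ℕ}
    (hadj : ∀ i, 1 ≤ i → i < ℓ → (comparabilityGraph P).Adj (f (i + 1)) (f i))
    (j k : ℕ) (hj : 1 ≤ j) (hjk : j ≤ k) (hk : k ≤ ℓ) :
    ∃ p : (comparabilityGraph P).Walk (f k) (f j), p.length = k - j := by
  induction k, hjk using Nat.le_induction with
  | base => exact ⟨SimpleGraph.Walk.nil, by simp⟩
  | succ k hk' ih =>
    obtain ⟨p, hp⟩ := ih (by omega)
    exact ⟨SimpleGraph.Walk.cons (hadj k (by omega) (by omega)) p,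
      by simp [SimpleGraph.Walk.length_cons, hp]; omega⟩

/-- Reachability along a normal form path. -/
lemma NFP.reach {P : Type*} [PartialOrder P] {f : ℕ → P} {ℓ : ℕ}
    (hadj : ∀ i, 1 ≤ i → i < ℓ → (comparabilityGraph P).Adj (f (i + 1)) (f i))
    {i : ℕ} (h1 : 1 ≤ i) (h2 : i ≤ ℓ) :
    (comparabilityGraph P).Reachable (f i) (f 1) := by
  obtain ⟨p, _⟩ := NFP.walk hadj 1 i le_rfl h1 h2
  exact ⟨p⟩

/-- The distance from a vertex of a normal form path to the base. -/
lemma NFP.dist {P : Type*} [PartialOrder P] {f : ℕ → P} {ℓ : ℕ}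
    (hf : IsNormalFormPath f ℓ) {i : ℕ} (h1 : 1 ≤ i) (h2 : i ≤ ℓ) :
    (comparabilityGraph P).dist (f i) (f 1) = i - 1 := by
  obtain ⟨p, hp⟩ := NFP.walk hf.2.1 1 i le_rfl h1 h2
  have hle : (comparabilityGraph P).dist (f i) (f 1) ≤ i - 1 := by
    have := SimpleGraph.dist_le p
    omega
  obtain ⟨q, hq⟩ := NFP.walk hf.2.1 i ℓ h1 h2 le_rfl
  have hq' : (comparabilityGraph P).dist (f ℓ) (f i) ≤ ℓ - i := by
    have := SimpleGraph.dist_le q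
    omega
  have htri := NFP.dist_triangle' (⟨q⟩ : (comparabilityGraph P).Reachable (f ℓ) (f i)) ⟨p⟩
  have hfull := hf.2.2.1
  have h1ℓ := hf.1
  omega

/-- Edges on a normal form path alternate direction, pinned by the first edge. -/
lemma NFP.alt {P : Type*} [PartialOrder P] {f : ℕ → P} {ℓ : ℕ}
    (hf : IsNormalFormPath f ℓ) :
    ∀ i, 1 ≤ i → i < ℓ → ((f i < f (i + 1)) ↔ ((f 1 < f 2) ↔ Odd i)) := by
  intro i h1
  induction i, h1 using Nat.le_induction with
  | base =>
    intro _
    have h : Odd 1 := odd_one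
    constructor
    · intro hh; exact ⟨fun _ => h, fun _ => hh⟩
    · intro hh; exact hh.mpr h
  | succ i hi ih =>
    intro hlt
    have ih' := ih (by omega)
    have he2 := NFP.adj_lt_or_lt (hf.2.1 (i + 1) (by omega) hlt)
    have hr : (comparabilityGraph P).Reachable (f i) (f 1) :=
      NFP.reach hf.2.1 hi (by omega)
    have d1 := NFP.dist hf (show 1 ≤ i + 1 + 1 by omega) (show i + 1 + 1 ≤ ℓ by omega)
    have d2 := NFP.dist hf hi (show i ≤ ℓ by omega)
    have hnb1 : ¬(f i < f (i + 1) ∧ f (i + 1) < f (i + 1 + 1)) := by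
      rintro ⟨ha, hb⟩
      have hlt2 : f i < f (i + 1 + 1) := ha.trans hb
      have hadj : (comparabilityGraph P).Adj (f (i + 1 + 1)) (f i) :=
        ⟨hlt2.ne', Or.inr hlt2.le⟩
      have := NFP.adj_dist_le hadj hr
      omega
    have hnb2 : ¬(f (i + 1 + 1) < f (i + 1) ∧ f (i + 1) < f i) := by
      rintro ⟨ha, hb⟩
      have hlt2 : f (i + 1 + 1) < f i := ha.trans hb
      have hadj : (comparabilityGraph P).Adj (f (i + 1 + 1)) (f i) :=
        ⟨hlt2.ne, Or.inl hlt2.le⟩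
      have := NFP.adj_dist_le hadj hr
      omega
    have he1 := NFP.adj_lt_or_lt (hf.2.1 i (by omega) (by omega))
    have hodd : Odd (i + 1) ↔ ¬ Odd i := Nat.odd_add_one
    tauto

/-- Let `P` be a poset with a strictly monotone rank function
`τ : P → ℤ` taking values in `{1, …, N}` (extremal means rank `1` or `N`).  Let
`ω = x n, …, x 1` and `ω' = y m, …, y 1` be normal form paths with `x 1 = y 1` extremal,
`n ≤ m`, and `x n`, `y m` adjacent in the comparability graph.  Then either `x i ≤ y i`
for all `1 ≤ i ≤ n`, or `x i ≥ y i` for all `1 ≤ i ≤ n`. -/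
theorem normalFormPath_strip {P : Type*} [PartialOrder P] (N : ℤ) (τ : P → ℤ)
    (hmono : StrictMono τ) (hlo : ∀ p : P, 1 ≤ τ p) (hhi : ∀ p : P, τ p ≤ N)
    (x y : ℕ → P) (n m : ℕ)
    (hx : IsNormalFormPath x n) (hy : IsNormalFormPath y m)
    (hbase : x 1 = y 1) (hext : τ (x 1) = 1 ∨ τ (x 1) = N)
    (hnm : n ≤ m)
    (htop : (comparabilityGraph P).Adj (x n) (y m)) :
    (∀ i, 1 ≤ i → i ≤ n → x i ≤ y i) ∨ (∀ i, 1 ≤ i → i ≤ n → y i ≤ x i) := by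
  have hn1 : 1 ≤ n := hx.1
  have hm1 : 1 ≤ m := hy.1
  -- directions of edges on both paths agree at each level
  have hdir : ∀ i, 1 ≤ i → i < n →
      (x i < x (i + 1) ∧ y i < y (i + 1)) ∨ (x (i + 1) < x i ∧ y (i + 1) < y i) := by
    intro i h1 h2
    have hn2 : 2 ≤ n := by omega
    have hm2 : 2 ≤ m := by omega
    have hxe := NFP.adj_lt_or_lt (hx.2.1 i h1 h2)
    have hye := NFP.adj_lt_or_lt (hy.2.1 i h1 (by omega))
    have hax := NFP.alt hx i h1 h2
    have hay := NFP.alt hy i h1 (by omega)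
    have hx12 : x 2 < x 1 ∨ x 1 < x 2 := NFP.adj_lt_or_lt (hx.2.1 1 le_rfl (by omega))
    have hy12 : y 2 < y 1 ∨ y 1 < y 2 := NFP.adj_lt_or_lt (hy.2.1 1 le_rfl (by omega))
    have hbiff : (x 1 < x 2) ↔ (y 1 < y 2) := by
      rcases hext with hE | hE
      · have hEy : τ (y 1) = 1 := by rw [← hbase]; exact hE
        have hx' : x 1 < x 2 := by
          rcases hx12 with h | h
          · exfalso; have := hmono h; have := hlo (x 2); omega
          · exact h
        have hy' : y 1 < y 2 := by
          rcases hy12 with h | h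
          · exfalso; have := hmono h; have := hlo (y 2); omega
          · exact h
        exact iff_of_true hx' hy'
      · have hEy : τ (y 1) = N := by rw [← hbase]; exact hE
        refine iff_of_false (fun h => ?_) (fun h => ?_)
        · have := hmono h; have := hhi (x 2); omega
        · have := hmono h; have := hhi (y 2); omega
    have hkey : x i < x (i + 1) ↔ y i < y (i + 1) := by rw [hax, hay, hbiff]
    rcases hxe with h | h
    · refine Or.inr ⟨h, ?_⟩
      rcases hye with h' | h'
      · exact h'
      · exact absurd (hkey.mpr h') (asymm h)
    · exact Or.inl ⟨h, hkey.mp h⟩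
  -- distances to the base
  have hdx : ∀ i, 1 ≤ i → i ≤ n →
      (comparabilityGraph P).dist (x i) (y 1) = i - 1 := by
    intro i h1 h2
    rw [← hbase]
    exact NFP.dist hx h1 h2
  have hdy : ∀ i, 1 ≤ i → i ≤ m →
      (comparabilityGraph P).dist (y i) (x 1) = i - 1 := by
    intro i h1 h2
    rw [hbase]
    exact NFP.dist hy h1 h2
  -- descending steps
  have step : ∀ i, 1 ≤ i → i < n → x (i + 1) ≤ y (i + 1) → x i ≤ y i := by
    intro i h1 h2 hle
    rcases hdir i h1 h2 with ⟨hxd, hyd⟩ | ⟨hxd, hyd⟩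
    · have hlt : x i < y (i + 1) := lt_of_lt_of_le hxd hle
      have hadj : (comparabilityGraph P).Adj (x i) (y (i + 1)) := ⟨hlt.ne, Or.inl hlt.le⟩
      have hdist : (comparabilityGraph P).dist (x i) (y 1) = i + 1 - 2 := by
        have := hdx i h1 (by omega); omega
      have hcond := hy.2.2.2 (i + 1) (by omega) (by omega) (x i) hadj hdist
      simp only [Nat.add_sub_cancel] at hcond
      rcases hcond with ⟨h', _⟩ | ⟨_, h'⟩
      · exact absurd h' (asymm hyd)
      · exact h'
    · have hlt : x (i + 1) < y i := lt_of_le_of_lt hle hyd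
      have hadj : (comparabilityGraph P).Adj (y i) (x (i + 1)) := ⟨hlt.ne', Or.inr hlt.le⟩
      have hdist : (comparabilityGraph P).dist (y i) (x 1) = i + 1 - 2 := by
        have := hdy i h1 (by omega); omega
      have hcond := hx.2.2.2 (i + 1) (by omega) (by omega) (y i) hadj hdist
      simp only [Nat.add_sub_cancel] at hcond
      rcases hcond with ⟨_, h'⟩ | ⟨h', _⟩
      · exact h'
      · exact absurd h' (asymm hxd)
  have step' : ∀ i, 1 ≤ i → i < n → y (i + 1) ≤ x (i + 1) → y i ≤ x i := by
    intro i h1 h2 hle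
    rcases hdir i h1 h2 with ⟨hxd, hyd⟩ | ⟨hxd, hyd⟩
    · have hlt : y i < x (i + 1) := lt_of_lt_of_le hyd hle
      have hadj : (comparabilityGraph P).Adj (y i) (x (i + 1)) := ⟨hlt.ne, Or.inl hlt.le⟩
      have hdist : (comparabilityGraph P).dist (y i) (x 1) = i + 1 - 2 := by
        have := hdy i h1 (by omega); omega
      have hcond := hx.2.2.2 (i + 1) (by omega) (by omega) (y i) hadj hdist
      simp only [Nat.add_sub_cancel] at hcond
      rcases hcond with ⟨h', _⟩ | ⟨_, h'⟩
      · exact absurd h' (asymm hxd)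
      · exact h'
    · have hlt : y (i + 1) < x i := lt_of_le_of_lt hle hxd
      have hadj : (comparabilityGraph P).Adj (x i) (y (i + 1)) := ⟨hlt.ne', Or.inr hlt.le⟩
      have hdist : (comparabilityGraph P).dist (x i) (y 1) = i + 1 - 2 := by
        have := hdx i h1 (by omega); omega
      have hcond := hy.2.2.2 (i + 1) (by omega) (by omega) (x i) hadj hdist
      simp only [Nat.add_sub_cancel] at hcond
      rcases hcond with ⟨_, h'⟩ | ⟨h', _⟩
      · exact h'
      · exact absurd h' (asymm hyd)
  -- m = n or m = n + 1
  have hdxn := hdx n hn1 le_rfl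
  have hdym := hy.2.2.1
  have hrxn : (comparabilityGraph P).Reachable (x n) (y 1) := by
    rw [← hbase]; exact NFP.reach hx.2.1 hn1 le_rfl
  have hmle : m ≤ n + 1 := by
    have := NFP.adj_dist_le htop.symm hrxn
    omega
  -- comparability at the top level n
  have hcomp : x n ≤ y n ∨ y n ≤ x n := by
    rcases (show m = n ∨ m = n + 1 by omega) with hmeq | hmeq
    · subst hmeq
      exact htop.2
    · have hcond := hy.2.2.2 m (by omega) le_rfl (x n) htop (by omega)
      have hm1' : m - 1 = n := by omega
      rw [hm1'] at hcond
      rcases hcond with ⟨_, h'⟩ | ⟨_, h'⟩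
      · exact Or.inr h'
      · exact Or.inl h'
  -- downward induction
  rcases hcomp with htn | htn
  · left
    have all : ∀ k i, 1 ≤ i → i ≤ n → n - i = k → x i ≤ y i := by
      intro k
      induction k with
      | zero =>
        intro i h1 h2 h3
        have : i = n := by omega
        subst this; exact htn
      | succ k ih =>
        intro i h1 h2 h3
        exact step i h1 (by omega) (ih (i + 1) (by omega) (by omega) (by omega))
    exact fun i h1 h2 => all (n - i) i h1 h2 rfl
  · right
    have all : ∀ k i, 1 ≤ i → i ≤ n → n - i = k → y i ≤ x i := by
      intro k
      induction k with
      | zero =>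
        intro i h1 h2 h3
        have : i = n := by omega
        subst this; exact htn
      | succ k ih =>
        intro i h1 h2 h3
        exact step' i h1 (by omega) (ih (i + 1) (by omega) (by omega) (by omega))
    exact fun i h1 h2 => all (n - i) i h1 h2 rfl
end

section
/- Let P be a poset with a strictly monotone rank function τ : P → ℤ taking values in {1, …, N}; call an element extremal if its rank is 1 or N, and let d denote the graph distance in the comparability graph of P. Let z be an extremal element such that for every element v of P there exists a normal form path from v to z. Let x₁, x₂, …, x_k be a local normal form path from x₁ to x_k. Then the function f(i) = d(z, xᵢ) first weakly decreases and then strictly increases: there exists an index j with 1 ≤ j ≤ k such that f(i) ≥ f(i+1) whenever 1 ≤ i < j, and f(i) < f(i+1) whenever j ≤ i < k. -/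
/-- `f 1, f 2, …, f k` is an *up-down path*: consecutive elements are adjacent in the
comparability graph and the comparisons alternate. -/
def IsUpDownPath {P : Type*} [PartialOrder P] (f : ℕ → P) (k : ℕ) : Prop :=
  1 ≤ k ∧
  (∀ i, 1 ≤ i → i < k → (comparabilityGraph P).Adj (f i) (f (i + 1))) ∧
  (∀ i, 2 ≤ i → i < k →
    ((f (i - 1) < f i → f (i + 1) < f i) ∧ (f i < f (i - 1) → f i < f (i + 1))))

/-- `f 1, f 2, …, f k` is a *local normal form path* from `f 1` to `f k`. -/
def IsLocalNormalFormPath {P : Type*} [PartialOrder P] (f : ℕ → P) (k : ℕ) : Prop :=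
  IsUpDownPath f k ∧
  (∀ i, 2 ≤ i → i < k →
    ((f (i - 1) < f i ∧ f (i + 1) < f i →
      ¬ ∃ a₂ a₃ : P, a₂ < f i ∧ a₃ < f i ∧ f (i - 1) ≤ a₂ ∧ a₃ ≤ a₂ ∧ a₃ ≤ f (i + 1)) ∧
     (f i < f (i - 1) ∧ f i < f (i + 1) →
      ¬ ∃ a₂ a₃ : P, f i < a₂ ∧ f i < a₃ ∧ a₂ ≤ f (i - 1) ∧ a₂ ≤ a₃ ∧ f (i + 1) ≤ a₃)))

namespace BestvinaAux

variable {P : Type*} [PartialOrder P]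

lemma chain_walk (f : ℕ → P) (a b : ℕ) (hab : a ≤ b)
    (h : ∀ i, a ≤ i → i < b → (comparabilityGraph P).Adj (f (i + 1)) (f i)) :
    ∃ w : (comparabilityGraph P).Walk (f b) (f a), w.length = b - a := by
  induction b, hab using Nat.le_induction with
  | base => exact ⟨.nil, by simp⟩
  | succ n hn ih =>
    obtain ⟨w, hw⟩ := ih (fun i hi hi' => h i hi (by omega))
    refine ⟨.cons (h n hn (by omega)) w, ?_⟩
    simp only [SimpleGraph.Walk.length_cons, hw]
    omega

lemma nf_dist {z : P} (hconn : (comparabilityGraph P).Connected)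
    (f : ℕ → P) (ℓ : ℕ) (hf : IsNormalFormPath f ℓ) (hz : f 1 = z)
    (j : ℕ) (h1 : 1 ≤ j) (hj : j ≤ ℓ) :
    (comparabilityGraph P).dist z (f j) = j - 1 := by
  obtain ⟨hℓ, hadj, hdist, -⟩ := hf
  obtain ⟨w1, hw1⟩ := chain_walk f 1 j h1 (fun i hi hi' => hadj i hi (by omega))
  obtain ⟨w2, hw2⟩ := chain_walk f j ℓ hj (fun i hi hi' => hadj i (by omega) hi')
  have t1 := (comparabilityGraph P).dist_le w1
  have t2 := (comparabilityGraph P).dist_le w2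
  have t3 := hconn.dist_triangle (u := f ℓ) (v := f j) (w := f 1)
  have hc : (comparabilityGraph P).dist z (f j) = (comparabilityGraph P).dist (f j) (f 1) := by
    rw [hz, SimpleGraph.dist_comm]
  omega

lemma adj_dist_le {z : P} (hconn : (comparabilityGraph P).Connected)
    {u v : P} (h : (comparabilityGraph P).Adj u v) :
    (comparabilityGraph P).dist z v ≤ (comparabilityGraph P).dist z u + 1 := by
  have t := hconn.dist_triangle (u := z) (v := u) (w := v)
  rw [SimpleGraph.dist_eq_one_iff_adj.mpr h] at t
  exact t

lemma parity {z : P} (hconn : (comparabilityGraph P).Connected)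
    (hnf : ∀ v : P, ∃ (f : ℕ → P) (ℓ : ℕ), IsNormalFormPath f ℓ ∧ f ℓ = v ∧ f 1 = z)
    (b : Prop) (hb : ∀ v : P, (comparabilityGraph P).Adj z v → (z < v ↔ b)) :
    ∀ r : ℕ, ∀ u v : P, (comparabilityGraph P).Adj u v →
      (comparabilityGraph P).dist z u + 1 = (comparabilityGraph P).dist z v →
      (comparabilityGraph P).dist z v = r → (u < v ↔ (Odd r ↔ b)) := by
  intro r
  induction r using Nat.strong_induction_on with
  | _ r ih =>
    intro u v hadj hstep hr
    rcases Nat.lt_or_ge r 2 with hr2 | hr2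
    · -- r ≤ 1; r = 0 impossible
      have hr1 : r = 1 := by omega
      have hu0 : (comparabilityGraph P).dist z u = 0 := by omega
      have hzu : z = u := (hconn.dist_eq_zero_iff).mp hu0
      subst hzu
      have hodd : Odd r := by rw [hr1]; exact odd_one
      constructor
      · intro h; exact iff_of_true hodd ((hb v hadj).mp h)
      · intro h; exact (hb v hadj).mpr (h.mp hodd)
    · -- r ≥ 2
      have hdu : (comparabilityGraph P).dist z u = r - 1 := by omega
      obtain ⟨g, ℓ, hg, hgu, hgz⟩ := hnf u
      have hgd := hg.2.2.1
      rw [hgu, hgz, SimpleGraph.dist_comm] at hgd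
      have hℓ : ℓ = r := by have := hg.1; omega
      have hadjp := hg.2.1 (ℓ - 1) (by omega) (by omega)
      rw [show ℓ - 1 + 1 = ℓ by omega, hgu] at hadjp
      set p := g (ℓ - 1) with hp
      have hdp : (comparabilityGraph P).dist z p = r - 2 := by
        have := nf_dist hconn g ℓ hg hgz (ℓ - 1) (by omega) (by omega)
        rw [this]; omega
      have hind := ih (r - 1) (by omega) p u hadjp.symm (by omega) (by omega)
      -- comparabilities
      have hcomp_uv : u < v ∨ v < u := by
        rcases hadj with ⟨hne, h | h⟩
        · exact Or.inl (lt_of_le_of_ne h hne)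
        · exact Or.inr (lt_of_le_of_ne h hne.symm)
      have hcomp_pu : p < u ∨ u < p := by
        rcases hadjp with ⟨hne, h | h⟩
        · exact Or.inr (lt_of_le_of_ne h hne)
        · exact Or.inl (lt_of_le_of_ne h hne.symm)
      have hpv_ne : p ≠ v := by
        intro e; rw [e] at hdp; omega
      have hnot1 : ¬(p < u ∧ u < v) := by
        rintro ⟨h1, h2⟩
        have hlt := h1.trans h2
        have : (comparabilityGraph P).dist z v ≤
            (comparabilityGraph P).dist z p + 1 :=
          adj_dist_le hconn ⟨hpv_ne, Or.inl hlt.le⟩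
        omega
      have hnot2 : ¬(v < u ∧ u < p) := by
        rintro ⟨h1, h2⟩
        have hlt := h1.trans h2
        have : (comparabilityGraph P).dist z v ≤
            (comparabilityGraph P).dist z p + 1 :=
          adj_dist_le hconn ⟨hpv_ne, Or.inr hlt.le⟩
        omega
      have hiff : u < v ↔ ¬(p < u) := by
        constructor
        · intro h hpu; exact hnot1 ⟨hpu, h⟩
        · intro h
          rcases hcomp_uv with h' | h'
          · exact h'
          · rcases hcomp_pu with h'' | h''
            · exact absurd h'' h
            · exact absurd ⟨h', h''⟩ hnot2
      have hop : Odd r ↔ ¬ Odd (r - 1) := by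
        obtain ⟨s, rfl⟩ : ∃ s, r = s + 1 := ⟨r - 1, by omega⟩
        simp only [Nat.add_sub_cancel, Nat.odd_add_one, Nat.not_odd_iff_even]
      tauto

lemma core {z : P} (hconn : (comparabilityGraph P).Connected)
    (hnf : ∀ v : P, ∃ (f : ℕ → P) (ℓ : ℕ), IsNormalFormPath f ℓ ∧ f ℓ = v ∧ f 1 = z)
    (b : Prop) (hb : ∀ v : P, (comparabilityGraph P).Adj z v → (z < v ↔ b))
    (a v c : P)
    (hav : (comparabilityGraph P).Adj a v) (hvc : (comparabilityGraph P).Adj v c)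
    (halt1 : a < v → c < v) (halt2 : v < a → v < c)
    (hcl1 : a < v ∧ c < v → ¬ ∃ a₂ a₃ : P, a₂ < v ∧ a₃ < v ∧ a ≤ a₂ ∧ a₃ ≤ a₂ ∧ a₃ ≤ c)
    (hcl2 : v < a ∧ v < c → ¬ ∃ a₂ a₃ : P, v < a₂ ∧ v < a₃ ∧ a₂ ≤ a ∧ a₂ ≤ a₃ ∧ c ≤ a₃)
    (hd : (comparabilityGraph P).dist z a < (comparabilityGraph P).dist z v) :
    (comparabilityGraph P).dist z v < (comparabilityGraph P).dist z c := by
  have h1 : (comparabilityGraph P).dist z v ≤ (comparabilityGraph P).dist z a + 1 :=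
    adj_dist_le hconn hav
  by_contra hcc
  push_neg at hcc
  have h2 : (comparabilityGraph P).dist z v ≤ (comparabilityGraph P).dist z c + 1 :=
    adj_dist_le hconn hvc.symm
  obtain ⟨g, ℓ, hg, hgv, hgz⟩ := hnf v
  have hgd := hg.2.2.1
  rw [hgv, hgz, SimpleGraph.dist_comm] at hgd
  have hℓ : ℓ = (comparabilityGraph P).dist z v + 1 := by have := hg.1; omega
  set m := (comparabilityGraph P).dist z v with hmdef
  have hm1 : 1 ≤ m := by omega
  have hda : (comparabilityGraph P).dist z a = m - 1 := by omega
  have hadjq := hg.2.1 (ℓ - 1) (by omega) (by omega)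
  rw [show ℓ - 1 + 1 = ℓ by omega, hgv] at hadjq
  set q := g (ℓ - 1) with hq
  have hdq : (comparabilityGraph P).dist z q = m - 1 := by
    have := nf_dist hconn g ℓ hg hgz (ℓ - 1) (by omega) (by omega)
    rw [this]; omega
  have hcond : ∀ y : P, (comparabilityGraph P).Adj y v →
      (comparabilityGraph P).dist z y = m - 1 → ((v < q ∧ q ≤ y) ∨ (q < v ∧ y ≤ q)) := by
    intro y hy hyd
    have hcnd := hg.2.2.2 ℓ (by omega) le_rfl y (by rw [hgv]; exact hy)
      (by rw [hgz, SimpleGraph.dist_comm]; omega)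
    rw [hgv, ← hq] at hcnd
    exact hcnd
  have hcompav : a < v ∨ v < a := by
    obtain ⟨hne, h | h⟩ := hav
    · exact Or.inl (lt_of_le_of_ne h hne)
    · exact Or.inr (lt_of_le_of_ne h hne.symm)
  rcases hcompav with hlt | hlt
  · -- peak : a < v > c
    have hcv : c < v := halt1 hlt
    have hΦ : Odd m ↔ b :=
      (parity hconn hnf b hb m a v hav (by omega) hmdef.symm).mp hlt
    have hq1 : q < v ∧ a ≤ q := by
      rcases hcond a hav hda with ⟨h1', h2'⟩ | h'
      · exact absurd ((h1'.trans_le h2').trans hlt) (lt_irrefl v)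
      · exact h'
    rcases (show (comparabilityGraph P).dist z c = m - 1 ∨
        (comparabilityGraph P).dist z c = m by omega) with hdc | hdc
    · have hcq : c ≤ q := by
        rcases hcond c hvc.symm hdc with ⟨h1', _⟩ | ⟨_, h2'⟩
        · exact (lt_asymm hq1.1 h1').elim
        · exact h2'
      exact hcl1 ⟨hlt, hcv⟩ ⟨q, c, hq1.1, hcv, hq1.2, hcq, le_rfl⟩
    · obtain ⟨h', ℓ', hh, hhc, hhz⟩ := hnf c
      have hhd := hh.2.2.1
      rw [hhc, hhz, SimpleGraph.dist_comm] at hhd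
      have hℓ' : ℓ' = m + 1 := by have := hh.1; omega
      have hadjw := hh.2.1 (ℓ' - 1) (by omega) (by omega)
      rw [show ℓ' - 1 + 1 = ℓ' by omega, hhc] at hadjw
      set w := h' (ℓ' - 1) with hwdef
      have hdw : (comparabilityGraph P).dist z w = m - 1 := by
        have := nf_dist hconn h' ℓ' hh hhz (ℓ' - 1) (by omega) (by omega)
        rw [this]; omega
      have hwc : w < c :=
        (parity hconn hnf b hb m w c hadjw.symm (by omega) hdc).mpr hΦ
      have hwv : w < v := hwc.trans hcv
      have hwvne : w ≠ v := by intro e; rw [e] at hdw; omega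
      have hwq : w ≤ q := by
        rcases hcond w ⟨hwvne, Or.inl hwv.le⟩ hdw with ⟨h1', _⟩ | ⟨_, h2'⟩
        · exact (lt_asymm hq1.1 h1').elim
        · exact h2'
      exact hcl1 ⟨hlt, hcv⟩ ⟨q, w, hq1.1, hwv, hq1.2, hwq, hwc.le⟩
  · -- valley : a > v < c
    have hvc' : v < c := halt2 hlt
    have hpar := parity hconn hnf b hb m a v hav (by omega) hmdef.symm
    have hΦn : ¬(Odd m ↔ b) := fun hΦ => lt_asymm hlt (hpar.mpr hΦ)
    have hq1 : v < q ∧ q ≤ a := by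
      rcases hcond a hav hda with h' | ⟨h1', h2'⟩
      · exact h'
      · exact (lt_asymm hlt (lt_of_le_of_lt h2' h1')).elim
    rcases (show (comparabilityGraph P).dist z c = m - 1 ∨
        (comparabilityGraph P).dist z c = m by omega) with hdc | hdc
    · have hqc : q ≤ c := by
        rcases hcond c hvc.symm hdc with ⟨_, h2'⟩ | ⟨h1', _⟩
        · exact h2'
        · exact (lt_asymm hq1.1 h1').elim
      exact hcl2 ⟨hlt, hvc'⟩ ⟨q, c, hq1.1, hvc', hq1.2, hqc, le_rfl⟩
    · obtain ⟨h', ℓ', hh, hhc, hhz⟩ := hnf c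
      have hhd := hh.2.2.1
      rw [hhc, hhz, SimpleGraph.dist_comm] at hhd
      have hℓ' : ℓ' = m + 1 := by have := hh.1; omega
      have hadjw := hh.2.1 (ℓ' - 1) (by omega) (by omega)
      rw [show ℓ' - 1 + 1 = ℓ' by omega, hhc] at hadjw
      set w := h' (ℓ' - 1) with hwdef
      have hdw : (comparabilityGraph P).dist z w = m - 1 := by
        have := nf_dist hconn h' ℓ' hh hhz (ℓ' - 1) (by omega) (by omega)
        rw [this]; omega
      have hnwc : ¬ w < c := fun hwc =>
        hΦn ((parity hconn hnf b hb m w c hadjw.symm (by omega) hdc).mp hwc)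
      have hcw : c < w := by
        obtain ⟨hne, hle | hle⟩ := hadjw
        · exact lt_of_le_of_ne hle hne
        · exact absurd (lt_of_le_of_ne hle hne.symm) hnwc
      have hvw : v < w := hvc'.trans hcw
      have hwvne : w ≠ v := by intro e; rw [e] at hdw; omega
      have hqw : q ≤ w := by
        rcases hcond w ⟨hwvne, Or.inr hvw.le⟩ hdw with ⟨_, h2'⟩ | ⟨h1', _⟩
        · exact h2'
        · exact (lt_asymm hq1.1 h1').elim
      exact hcl2 ⟨hlt, hvc'⟩ ⟨q, w, hq1.1, hvw, hq1.2, hqw, hcw.le⟩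

end BestvinaAux

/-- **Bestvina-type inequality.** Let `P` be a poset with a strictly
monotone rank function `τ` taking values in `{1, …, N}`, let `z` be an extremal element
such that every element of `P` is joined to `z` by a normal form path, and let
`x 1, …, x k` be a local normal form path.  Then `i ↦ d (z, x i)` first weakly decreases
and then strictly increases. -/
theorem localNormalForm_dist_unimodal {P : Type*} [PartialOrder P] (N : ℤ) (τ : P → ℤ)
    (hmono : StrictMono τ) (hlo : ∀ p : P, 1 ≤ τ p) (hhi : ∀ p : P, τ p ≤ N)
    (z : P) (hz : τ z = 1 ∨ τ z = N)
    (hnf : ∀ v : P, ∃ (f : ℕ → P) (ℓ : ℕ), IsNormalFormPath f ℓ ∧ f ℓ = v ∧ f 1 = z)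
    (x : ℕ → P) (k : ℕ) (hx : IsLocalNormalFormPath x k) :
    ∃ j : ℕ, 1 ≤ j ∧ j ≤ k ∧
      (∀ i, 1 ≤ i → i < j →
        (comparabilityGraph P).dist z (x (i + 1)) ≤ (comparabilityGraph P).dist z (x i)) ∧
      (∀ i, j ≤ i → i < k →
        (comparabilityGraph P).dist z (x i) < (comparabilityGraph P).dist z (x (i + 1))) := by
  classical
  have hreach : ∀ v : P, (comparabilityGraph P).Reachable v z := by
    intro v
    obtain ⟨f, ℓ, hf, hfv, hfz⟩ := hnf v
    obtain ⟨w, -⟩ := BestvinaAux.chain_walk f 1 ℓ hf.1 (fun i hi hi' => hf.2.1 i hi hi')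
    have hreach' : (comparabilityGraph P).Reachable (f ℓ) (f 1) := ⟨w⟩
    rwa [hfv, hfz] at hreach'
  haveI : Nonempty P := ⟨z⟩
  have hconn : (comparabilityGraph P).Connected :=
    ⟨fun u v => (hreach u).trans (hreach v).symm⟩
  obtain ⟨b, hb⟩ : ∃ b : Prop, ∀ v : P, (comparabilityGraph P).Adj z v → (z < v ↔ b) := by
    rcases hz with hz1 | hzN
    · refine ⟨True, fun v hv => iff_of_true ?_ trivial⟩
      obtain ⟨hne, h | h⟩ := hv
      · exact lt_of_le_of_ne h hne
      · exfalso
        have hτ := hmono (lt_of_le_of_ne h hne.symm)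
        rw [hz1] at hτ
        exact absurd (hlo v) (by omega)
    · refine ⟨False, fun v hv => iff_of_false ?_ not_false⟩
      intro hlt
      have hτ := hmono hlt
      rw [hzN] at hτ
      exact absurd (hhi v) (by omega)
  obtain ⟨⟨hk1, hadjx, haltx⟩, hclx⟩ := hx
  have hstep : ∀ i, 1 ≤ i → i + 1 < k →
      (comparabilityGraph P).dist z (x i) < (comparabilityGraph P).dist z (x (i + 1)) →
      (comparabilityGraph P).dist z (x (i + 1)) < (comparabilityGraph P).dist z (x (i + 2)) := by
    intro i hi hik hlt
    have halt := haltx (i + 1) (by omega) hik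
    have hcl := hclx (i + 1) (by omega) hik
    simp only [Nat.add_sub_cancel] at halt hcl
    exact BestvinaAux.core hconn hnf b hb (x i) (x (i + 1)) (x (i + 2))
      (hadjx i hi (by omega)) (hadjx (i + 1) (by omega) hik)
      halt.1 halt.2 hcl.1 hcl.2 hlt
  by_cases hex : ∃ i, 1 ≤ i ∧ i < k ∧
      (comparabilityGraph P).dist z (x i) < (comparabilityGraph P).dist z (x (i + 1))
  · set j := Nat.find hex with hjdef
    obtain ⟨hj1, hjk, hjlt⟩ := Nat.find_spec hex
    refine ⟨j, hj1, hjk.le, ?_, ?_⟩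
    · intro i hi hij
      have hnot := Nat.find_min hex hij
      have hnlt : ¬ (comparabilityGraph P).dist z (x i) <
          (comparabilityGraph P).dist z (x (i + 1)) :=
        fun hl => hnot ⟨hi, by omega, hl⟩
      exact Nat.le_of_not_lt hnlt
    · intro i hji hik
      induction i, hji using Nat.le_induction with
      | base => exact hjlt
      | succ n hn ihn =>
        exact hstep n (by omega) hik (ihn (by omega))
  · push_neg at hex
    refine ⟨k, hk1, le_rfl, ?_, ?_⟩
    · intro i hi hik
      exact hex i hi hik
    · intro i hji hik
      omega
end
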